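/- arXiv:1604.00960 — 4 statements merged into one kernel-verified Lean document; each statement's English description precedes it below -/
import Mathlib

section
/- For every integer m ≥ 3 there exist pairwise interior-disjoint convex bodies Z₁, …, Zₘ in the plane ℝ² such that the complement ℝ² \ (Z₁ ∪ ⋯ ∪ Zₘ) has exactly 2m − 4 connected components. -/
namespace CH

/-- open halfplane -/
def HP (u v w : ℝ) : Set (ℝ × ℝ) := {p | u * p.1 + v * p.2 < w}
/-- closed halfplane -/
def HPc (u v w : ℝ) : Set (ℝ × ℝ) := {p | u * p.1 + v * p.2 ≤ w}

lemma mem_HP {u v w : ℝ} {p : ℝ × ℝ} : p ∈ HP u v w ↔ u * p.1 + v * p.2 < w := Iff.rfl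
lemma mem_HPc {u v w : ℝ} {p : ℝ × ℝ} : p ∈ HPc u v w ↔ u * p.1 + v * p.2 ≤ w := Iff.rfl

lemma isOpen_HP (u v w : ℝ) : IsOpen (HP u v w) :=
  isOpen_lt (by fun_prop) continuous_const

lemma isClosed_HPc (u v w : ℝ) : IsClosed (HPc u v w) :=
  isClosed_le (by fun_prop) continuous_const

lemma convex_HP (u v w : ℝ) : Convex ℝ (HP u v w) := by
  intro p hp q hq a b ha hb hab
  simp only [HP, Set.mem_setOf_eq] at *
  have h1 : a * (u * p.1 + v * p.2) ≤ a * w := mul_le_mul_of_nonneg_left hp.le ha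
  have h2 : b * (u * q.1 + v * q.2) ≤ b * w := mul_le_mul_of_nonneg_left hq.le hb
  rcases ha.eq_or_lt with h | h
  · have hb1 : b = 1 := by linarith
    subst hb1
    simp only [← h, Prod.fst_add, Prod.snd_add, Prod.smul_fst, Prod.smul_snd, smul_eq_mul]
    ring_nf
    ring_nf at hq
    linarith
  · have h1' : a * (u * p.1 + v * p.2) < a * w := mul_lt_mul_of_pos_left hp h
    have hb1 : b = 1 - a := by linarith
    subst hb1
    simp only [Prod.fst_add, Prod.snd_add, Prod.smul_fst, Prod.smul_snd, smul_eq_mul]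
    nlinarith [h1', h2]

lemma convex_HPc (u v w : ℝ) : Convex ℝ (HPc u v w) := by
  intro p hp q hq a b ha hb hab
  simp only [HPc, Set.mem_setOf_eq] at *
  have h1 : a * (u * p.1 + v * p.2) ≤ a * w := mul_le_mul_of_nonneg_left hp ha
  have h2 : b * (u * q.1 + v * q.2) ≤ b * w := mul_le_mul_of_nonneg_left hq hb
  have hb1 : b = 1 - a := by linarith
  subst hb1
  simp only [Prod.fst_add, Prod.snd_add, Prod.smul_fst, Prod.smul_snd, smul_eq_mul]
  nlinarith [h1, h2]

lemma interior_subset_HP {S : Set (ℝ × ℝ)} {u v w : ℝ} (huv : u ≠ 0 ∨ v ≠ 0)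
    (h : S ⊆ HPc u v w) : interior S ⊆ HP u v w := by
  intro x hx
  obtain ⟨ε, hε, hball⟩ := Metric.isOpen_iff.1 isOpen_interior x hx
  set t : ℝ := ε / (2 * (|u| + |v| + 1)) with ht
  have hden : 0 < 2 * (|u| + |v| + 1) := by positivity
  have htpos : 0 < t := by positivity
  have hy : (x.1 + t * u, x.2 + t * v) ∈ Metric.ball x ε := by
    rw [Metric.mem_ball, Prod.dist_eq]
    have h1 : dist (x.1 + t * u) x.1 = |t * u| := by
      rw [Real.dist_eq]; ring_nf
    have h2 : dist (x.2 + t * v) x.2 = |t * v| := by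
      rw [Real.dist_eq]; ring_nf
    rw [h1, h2]
    have hu : |t * u| < ε := by
      rw [abs_mul, abs_of_pos htpos]
      calc t * |u| ≤ t * (|u| + |v| + 1) := by
            apply mul_le_mul_of_nonneg_left _ htpos.le
            have := abs_nonneg v; linarith
        _ = ε / 2 := by field_simp [ht]; rw [ht]; field_simp
        _ < ε := by linarith
    have hv : |t * v| < ε := by
      rw [abs_mul, abs_of_pos htpos]
      calc t * |v| ≤ t * (|u| + |v| + 1) := by
            apply mul_le_mul_of_nonneg_left _ htpos.le
            have := abs_nonneg u; linarith
        _ = ε / 2 := by field_simp [ht]; rw [ht]; field_simp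
        _ < ε := by linarith
    exact max_lt hu hv
  have hyS : (x.1 + t * u, x.2 + t * v) ∈ S := interior_subset (hball hy)
  have this2 : u * (x.1 + t * u) + v * (x.2 + t * v) ≤ w := h hyS
  rw [mem_HP]
  have huv2 : 0 < u ^ 2 + v ^ 2 := by
    rcases huv with h' | h'
    · positivity
    · positivity
  nlinarith [this2, mul_pos htpos huv2]

lemma disjoint_interiors {S S' : Set (ℝ × ℝ)} {u v w : ℝ} (huv : u ≠ 0 ∨ v ≠ 0)
    (h : S ⊆ HPc u v w) (h' : S' ⊆ HPc (-u) (-v) (-w)) :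
    Disjoint (interior S) (interior S') := by
  rw [Set.disjoint_left]
  intro p hp hp'
  have h1 := interior_subset_HP huv h hp
  have huv' : -u ≠ 0 ∨ -v ≠ 0 := by
    rcases huv with h'' | h''
    · exact Or.inl (neg_ne_zero.2 h'')
    · exact Or.inr (neg_ne_zero.2 h'')
  have h2 := interior_subset_HP huv' h' hp'
  rw [mem_HP] at h1 h2
  linarith [h1, h2]


def Tset (K : ℝ) : Set (ℝ × ℝ) := HPc (-1) 0 8 ∩ HPc 1 0 (4*K) ∩ HPc 1 (-1) (-8) ∩ HPc 0 1 (4*K+9)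
def Bset (K : ℝ) : Set (ℝ × ℝ) := HPc (-1) 0 8 ∩ HPc 1 0 (4*K) ∩ HPc 1 1 (-8) ∩ HPc 0 (-1) (4*K+9)
def tooth (J : ℝ) : Set (ℝ × ℝ) :=
  HPc (-1) 1 8 ∩ HPc (-1) (-1) 8 ∩ HPc (-(4*J+9)) 1 (-(4*J*(4*J+9))) ∩
  HPc (4*J+11) 1 ((4*J+11)*(4*J+4)) ∩ HPc (-(4*J+9)) (-1) (-(4*J*(4*J+9))) ∩
  HPc (4*J+11) (-1) ((4*J+11)*(4*J+4))
def Hu (J : ℝ) : Set (ℝ × ℝ) :=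
  HP (-1) 1 8 ∩ HP (-(4*J+7)) (-1) (-(4*J*(4*J+7))) ∩ HP (4*J+9) (-1) (4*J*(4*J+9))
def Hl (J : ℝ) : Set (ℝ × ℝ) :=
  HP (-1) (-1) 8 ∩ HP (-(4*J+7)) 1 (-(4*J*(4*J+7))) ∩ HP (4*J+9) 1 (4*J*(4*J+9))
def Aset : Set (ℝ × ℝ) := HP (-1) 1 8 ∩ HP (-1) (-1) 8 ∩ HP 9 (-1) 0
def Bl : Set (ℝ × ℝ) := HP (-1) 1 8 ∩ HP (-1) (-1) 8 ∩ HP 9 1 0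
def Rp (K : ℝ) : Set (ℝ × ℝ) := HP (-1) 1 8 ∩ HP (-(4*K+7)) (-1) (-(4*K*(4*K+7)))
def Rm (K : ℝ) : Set (ℝ × ℝ) := HP (-1) (-1) 8 ∩ HP (-(4*K+7)) 1 (-(4*K*(4*K+7)))
def Qc (K : ℝ) : Set (ℝ × ℝ) := HP 1 0 (-8) ∪ HP (-1) 0 (-(4*K)) ∪ HP 0 1 (-(4*K+9)) ∪ HP 0 (-1) (-(4*K+9))
def Uset (K : ℝ) : Set (ℝ × ℝ) := Qc K ∪ Rp K ∪ Rm K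

-- membership characterizations in friendly form
lemma mem_Tset {K : ℝ} {p : ℝ × ℝ} :
    p ∈ Tset K ↔ -8 ≤ p.1 ∧ p.1 ≤ 4*K ∧ p.1 + 8 ≤ p.2 ∧ p.2 ≤ 4*K+9 := by
  simp only [Tset, HPc, Set.mem_inter_iff, Set.mem_setOf_eq]
  constructor
  · rintro ⟨⟨⟨a, b⟩, c⟩, d⟩; exact ⟨by linarith, by linarith, by linarith, by linarith⟩
  · rintro ⟨a, b, c, d⟩; exact ⟨⟨⟨by linarith, by linarith⟩, by linarith⟩, by linarith⟩

lemma mem_Bset {K : ℝ} {p : ℝ × ℝ} :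
    p ∈ Bset K ↔ -8 ≤ p.1 ∧ p.1 ≤ 4*K ∧ p.2 ≤ -(p.1 + 8) ∧ -(4*K+9) ≤ p.2 := by
  simp only [Bset, HPc, Set.mem_inter_iff, Set.mem_setOf_eq]
  constructor
  · rintro ⟨⟨⟨a, b⟩, c⟩, d⟩; exact ⟨by linarith, by linarith, by linarith, by linarith⟩
  · rintro ⟨a, b, c, d⟩; exact ⟨⟨⟨by linarith, by linarith⟩, by linarith⟩, by linarith⟩

lemma mem_tooth {J : ℝ} {p : ℝ × ℝ} :
    p ∈ tooth J ↔ p.2 ≤ p.1 + 8 ∧ -(p.1 + 8) ≤ p.2 ∧ p.2 ≤ (4*J+9)*(p.1-4*J) ∧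
      p.2 ≤ (4*J+11)*(4*J+4-p.1) ∧ -((4*J+9)*(p.1-4*J)) ≤ p.2 ∧ -((4*J+11)*(4*J+4-p.1)) ≤ p.2 := by
  simp only [tooth, HPc, Set.mem_inter_iff, Set.mem_setOf_eq]
  constructor
  · rintro ⟨⟨⟨⟨⟨a, b⟩, c⟩, d⟩, e⟩, f⟩
    refine ⟨by linarith, by linarith, by nlinarith, by nlinarith, by nlinarith, by nlinarith⟩
  · rintro ⟨a, b, c, d, e, f⟩
    refine ⟨⟨⟨⟨⟨by linarith, by linarith⟩, by nlinarith⟩, by nlinarith⟩, by nlinarith⟩, by nlinarith⟩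

lemma mem_Hu {J : ℝ} {p : ℝ × ℝ} :
    p ∈ Hu J ↔ p.2 < p.1 + 8 ∧ (4*J+7)*(4*J-p.1) < p.2 ∧ (4*J+9)*(p.1-4*J) < p.2 := by
  simp only [Hu, HP, Set.mem_inter_iff, Set.mem_setOf_eq]
  constructor
  · rintro ⟨⟨a, b⟩, c⟩; exact ⟨by linarith, by nlinarith, by nlinarith⟩
  · rintro ⟨a, b, c⟩; exact ⟨⟨by linarith, by nlinarith⟩, by nlinarith⟩

lemma mem_Hl {J : ℝ} {p : ℝ × ℝ} :
    p ∈ Hl J ↔ -(p.1 + 8) < p.2 ∧ p.2 < -((4*J+7)*(4*J-p.1)) ∧ p.2 < -((4*J+9)*(p.1-4*J)) := by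
  simp only [Hl, HP, Set.mem_inter_iff, Set.mem_setOf_eq]
  constructor
  · rintro ⟨⟨a, b⟩, c⟩; exact ⟨by linarith, by nlinarith, by nlinarith⟩
  · rintro ⟨a, b, c⟩; exact ⟨⟨by linarith, by nlinarith⟩, by nlinarith⟩

lemma mem_Aset {p : ℝ × ℝ} :
    p ∈ Aset ↔ p.2 < p.1 + 8 ∧ -(p.1 + 8) < p.2 ∧ 9*p.1 < p.2 := by
  simp only [Aset, HP, Set.mem_inter_iff, Set.mem_setOf_eq]
  constructor
  · rintro ⟨⟨a, b⟩, c⟩; exact ⟨by linarith, by linarith, by linarith⟩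
  · rintro ⟨a, b, c⟩; exact ⟨⟨by linarith, by linarith⟩, by linarith⟩

lemma mem_Bl {p : ℝ × ℝ} :
    p ∈ Bl ↔ p.2 < p.1 + 8 ∧ -(p.1 + 8) < p.2 ∧ p.2 < -(9*p.1) := by
  simp only [Bl, HP, Set.mem_inter_iff, Set.mem_setOf_eq]
  constructor
  · rintro ⟨⟨a, b⟩, c⟩; exact ⟨by linarith, by linarith, by linarith⟩
  · rintro ⟨a, b, c⟩; exact ⟨⟨by linarith, by linarith⟩, by linarith⟩

lemma mem_Rp {K : ℝ} {p : ℝ × ℝ} :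
    p ∈ Rp K ↔ p.2 < p.1 + 8 ∧ (4*K+7)*(4*K-p.1) < p.2 := by
  simp only [Rp, HP, Set.mem_inter_iff, Set.mem_setOf_eq]
  constructor
  · rintro ⟨a, b⟩; exact ⟨by linarith, by nlinarith⟩
  · rintro ⟨a, b⟩; exact ⟨by linarith, by nlinarith⟩

lemma mem_Rm {K : ℝ} {p : ℝ × ℝ} :
    p ∈ Rm K ↔ -(p.1 + 8) < p.2 ∧ p.2 < -((4*K+7)*(4*K-p.1)) := by
  simp only [Rm, HP, Set.mem_inter_iff, Set.mem_setOf_eq]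
  constructor
  · rintro ⟨a, b⟩; exact ⟨by linarith, by nlinarith⟩
  · rintro ⟨a, b⟩; exact ⟨by linarith, by nlinarith⟩

lemma mem_Qc {K : ℝ} {p : ℝ × ℝ} :
    p ∈ Qc K ↔ p.1 < -8 ∨ 4*K < p.1 ∨ p.2 < -(4*K+9) ∨ 4*K+9 < p.2 := by
  simp only [Qc, HP, Set.mem_union, Set.mem_setOf_eq]
  constructor
  · rintro (((a | a) | a) | a)
    · exact Or.inl (by linarith)
    · exact Or.inr (Or.inl (by linarith))
    · exact Or.inr (Or.inr (Or.inl (by linarith)))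
    · exact Or.inr (Or.inr (Or.inr (by linarith)))
  · rintro (a | a | a | a)
    · exact Or.inl (Or.inl (Or.inl (by linarith)))
    · exact Or.inl (Or.inl (Or.inr (by linarith)))
    · exact Or.inl (Or.inr (by linarith))
    · exact Or.inr (by linarith)

end CH
namespace CH

/-! ### basic coordinate facts -/

lemma lb {J x y : ℝ} (hJ : 0 ≤ J) (h1 : (4*J+7)*(4*J-x) < y) (h2 : y < x+8) : 4*J-1 < x := by
  by_contra h
  push_neg at h
  nlinarith [mul_nonneg (show (0:ℝ) ≤ 4*J+8 by linarith) (show (0:ℝ) ≤ 4*J-1-x by linarith)]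

lemma ub {J x y : ℝ} (hJ : 0 ≤ J) (h1 : (4*J+9)*(x-4*J) < y) (h2 : y < x+8) : x < 4*J+1 := by
  by_contra h
  push_neg at h
  nlinarith [mul_nonneg (show (0:ℝ) ≤ 4*J+8 by linarith) (show (0:ℝ) ≤ x-(4*J+1) by linarith)]

lemma Hu_y_pos {J : ℝ} (hJ : 0 ≤ J) {p : ℝ × ℝ} (hp : p ∈ Hu J) : 0 < p.2 := by
  rw [mem_Hu] at hp
  obtain ⟨h1, h2, h3⟩ := hp
  by_contra h
  push_neg at h
  nlinarith [mul_lt_mul_of_pos_left h2 (show (0:ℝ) < 4*J+9 by linarith),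
    mul_lt_mul_of_pos_left h3 (show (0:ℝ) < 4*J+7 by linarith),
    mul_nonneg hJ (neg_nonneg.2 h)]

lemma Hl_y_neg {J : ℝ} (hJ : 0 ≤ J) {p : ℝ × ℝ} (hp : p ∈ Hl J) : p.2 < 0 := by
  rw [mem_Hl] at hp
  obtain ⟨h1, h2, h3⟩ := hp
  by_contra h
  push_neg at h
  nlinarith [mul_lt_mul_of_pos_left h2 (show (0:ℝ) < 4*J+9 by linarith),
    mul_lt_mul_of_pos_left h3 (show (0:ℝ) < 4*J+7 by linarith),
    mul_nonneg hJ h]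

lemma Hu_x {J : ℝ} (hJ : 0 ≤ J) {p : ℝ × ℝ} (hp : p ∈ Hu J) : 4*J-1 < p.1 ∧ p.1 < 4*J+1 := by
  rw [mem_Hu] at hp
  exact ⟨lb hJ hp.2.1 hp.1, ub hJ hp.2.2 hp.1⟩

lemma Hl_x {J : ℝ} (hJ : 0 ≤ J) {p : ℝ × ℝ} (hp : p ∈ Hl J) : 4*J-1 < p.1 ∧ p.1 < 4*J+1 := by
  rw [mem_Hl] at hp
  obtain ⟨h1, h2, h3⟩ := hp
  constructor
  · exact lb hJ (by linarith : (4*J+7)*(4*J-p.1) < -p.2) (by linarith : -p.2 < p.1+8)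
  · exact ub hJ (by linarith : (4*J+9)*(p.1-4*J) < -p.2) (by linarith : -p.2 < p.1+8)

lemma Rp_x {K : ℝ} (hK : 0 ≤ K) {p : ℝ × ℝ} (hp : p ∈ Rp K) : 4*K-1 < p.1 := by
  rw [mem_Rp] at hp
  exact lb hK hp.2 hp.1

lemma Rm_x {K : ℝ} (hK : 0 ≤ K) {p : ℝ × ℝ} (hp : p ∈ Rm K) : 4*K-1 < p.1 := by
  rw [mem_Rm] at hp
  exact lb hK (by linarith : (4*K+7)*(4*K-p.1) < -p.2) (by linarith : -p.2 < p.1+8)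

lemma Aset_x {p : ℝ × ℝ} (hp : p ∈ Aset) : p.1 < 1 := by
  rw [mem_Aset] at hp; obtain ⟨h1, h2, h3⟩ := hp; linarith

lemma Bl_x {p : ℝ × ℝ} (hp : p ∈ Bl) : p.1 < 1 := by
  rw [mem_Bl] at hp; obtain ⟨h1, h2, h3⟩ := hp; linarith

lemma tooth_coords {J : ℝ} (hJ : 0 ≤ J) {p : ℝ × ℝ} (hp : p ∈ tooth J) :
    4*J ≤ p.1 ∧ p.1 ≤ 4*J+4 ∧ -(p.1+8) ≤ p.2 ∧ p.2 ≤ p.1+8 := by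
  rw [mem_tooth] at hp
  obtain ⟨h1, h2, h3, h4, h5, h6⟩ := hp
  refine ⟨?_, ?_, h2, h1⟩
  · by_contra h
    push_neg at h
    nlinarith [mul_pos (show (0:ℝ) < 4*J+9 by linarith) (show (0:ℝ) < 4*J-p.1 by linarith)]
  · by_contra h
    push_neg at h
    nlinarith [mul_pos (show (0:ℝ) < 4*J+11 by linarith) (show (0:ℝ) < p.1-(4*J+4) by linarith)]

end CH
namespace CH

/-! ### bodies are convex bodies -/

lemma isConvexBody_Tset {K : ℝ} (hK : 1 ≤ K) :
    IsCompact (Tset K) ∧ Convex ℝ (Tset K) ∧ (interior (Tset K)).Nonempty := by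
  refine ⟨?_, ?_, ?_⟩
  · apply IsCompact.of_isClosed_subset ((isCompact_Icc (a := (-8:ℝ)) (b := 4*K)).prod
      (isCompact_Icc (a := (0:ℝ)) (b := 4*K+9)))
    · exact (((isClosed_HPc _ _ _).inter (isClosed_HPc _ _ _)).inter (isClosed_HPc _ _ _)).inter
        (isClosed_HPc _ _ _)
    · intro p hp
      rw [mem_Tset] at hp
      exact ⟨⟨hp.1, hp.2.1⟩, ⟨by linarith [hp.2.2.1], hp.2.2.2⟩⟩
  · exact (((convex_HPc _ _ _).inter (convex_HPc _ _ _)).inter (convex_HPc _ _ _)).inter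
      (convex_HPc _ _ _)
  · have hO : IsOpen (HP (-1) 0 8 ∩ HP 1 0 (4*K) ∩ HP 1 (-1) (-8) ∩ HP 0 1 (4*K+9)) :=
      (((isOpen_HP _ _ _).inter (isOpen_HP _ _ _)).inter (isOpen_HP _ _ _)).inter (isOpen_HP _ _ _)
    have hsub : HP (-1) 0 8 ∩ HP 1 0 (4*K) ∩ HP 1 (-1) (-8) ∩ HP 0 1 (4*K+9) ⊆ Tset K := by
      rintro p ⟨⟨⟨a, b⟩, c⟩, d⟩
      exact ⟨⟨⟨mem_HPc.mpr (mem_HP.mp a).le, mem_HPc.mpr (mem_HP.mp b).le⟩,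
        mem_HPc.mpr (mem_HP.mp c).le⟩, mem_HPc.mpr (mem_HP.mp d).le⟩
    have hne : ((0:ℝ), (10:ℝ)) ∈ HP (-1) 0 8 ∩ HP 1 0 (4*K) ∩ HP 1 (-1) (-8) ∩ HP 0 1 (4*K+9) := by
      refine ⟨⟨⟨?_, ?_⟩, ?_⟩, ?_⟩ <;>
        · rw [mem_HP]; simp only [Prod.fst, Prod.snd]; nlinarith
    exact (Set.nonempty_of_mem hne).mono (interior_maximal hsub hO)

lemma isConvexBody_Bset {K : ℝ} (hK : 1 ≤ K) :
    IsCompact (Bset K) ∧ Convex ℝ (Bset K) ∧ (interior (Bset K)).Nonempty := by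
  refine ⟨?_, ?_, ?_⟩
  · apply IsCompact.of_isClosed_subset ((isCompact_Icc (a := (-8:ℝ)) (b := 4*K)).prod
      (isCompact_Icc (a := (-(4*K+9):ℝ)) (b := 0)))
    · exact (((isClosed_HPc _ _ _).inter (isClosed_HPc _ _ _)).inter (isClosed_HPc _ _ _)).inter
        (isClosed_HPc _ _ _)
    · intro p hp
      rw [mem_Bset] at hp
      exact ⟨⟨hp.1, hp.2.1⟩, ⟨hp.2.2.2, by linarith [hp.2.2.1]⟩⟩
  · exact (((convex_HPc _ _ _).inter (convex_HPc _ _ _)).inter (convex_HPc _ _ _)).inter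
      (convex_HPc _ _ _)
  · have hO : IsOpen (HP (-1) 0 8 ∩ HP 1 0 (4*K) ∩ HP 1 1 (-8) ∩ HP 0 (-1) (4*K+9)) :=
      (((isOpen_HP _ _ _).inter (isOpen_HP _ _ _)).inter (isOpen_HP _ _ _)).inter (isOpen_HP _ _ _)
    have hsub : HP (-1) 0 8 ∩ HP 1 0 (4*K) ∩ HP 1 1 (-8) ∩ HP 0 (-1) (4*K+9) ⊆ Bset K := by
      rintro p ⟨⟨⟨a, b⟩, c⟩, d⟩
      exact ⟨⟨⟨mem_HPc.mpr (mem_HP.mp a).le, mem_HPc.mpr (mem_HP.mp b).le⟩,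
        mem_HPc.mpr (mem_HP.mp c).le⟩, mem_HPc.mpr (mem_HP.mp d).le⟩
    have hne : ((0:ℝ), (-10:ℝ)) ∈ HP (-1) 0 8 ∩ HP 1 0 (4*K) ∩ HP 1 1 (-8) ∩ HP 0 (-1) (4*K+9) := by
      refine ⟨⟨⟨?_, ?_⟩, ?_⟩, ?_⟩ <;>
        · rw [mem_HP]; simp only [Prod.fst, Prod.snd]; nlinarith
    exact (Set.nonempty_of_mem hne).mono (interior_maximal hsub hO)

lemma isConvexBody_tooth {J : ℝ} (hJ : 0 ≤ J) :
    IsCompact (tooth J) ∧ Convex ℝ (tooth J) ∧ (interior (tooth J)).Nonempty := by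
  refine ⟨?_, ?_, ?_⟩
  · apply IsCompact.of_isClosed_subset ((isCompact_Icc (a := (4*J:ℝ)) (b := 4*J+4)).prod
      (isCompact_Icc (a := (-(4*J+12):ℝ)) (b := 4*J+12)))
    · exact (((((isClosed_HPc _ _ _).inter (isClosed_HPc _ _ _)).inter (isClosed_HPc _ _ _)).inter
        (isClosed_HPc _ _ _)).inter (isClosed_HPc _ _ _)).inter (isClosed_HPc _ _ _)
    · intro p hp
      obtain ⟨c1, c2, c3, c4⟩ := tooth_coords hJ hp
      exact ⟨⟨c1, c2⟩, ⟨by linarith, by linarith⟩⟩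
  · exact (((((convex_HPc _ _ _).inter (convex_HPc _ _ _)).inter (convex_HPc _ _ _)).inter
      (convex_HPc _ _ _)).inter (convex_HPc _ _ _)).inter (convex_HPc _ _ _)
  · set O := HP (-1) 1 8 ∩ HP (-1) (-1) 8 ∩ HP (-(4*J+9)) 1 (-(4*J*(4*J+9))) ∩
      HP (4*J+11) 1 ((4*J+11)*(4*J+4)) ∩ HP (-(4*J+9)) (-1) (-(4*J*(4*J+9))) ∩
      HP (4*J+11) (-1) ((4*J+11)*(4*J+4)) with hOdef
    have hO : IsOpen O :=
      (((((isOpen_HP _ _ _).inter (isOpen_HP _ _ _)).inter (isOpen_HP _ _ _)).inter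
        (isOpen_HP _ _ _)).inter (isOpen_HP _ _ _)).inter (isOpen_HP _ _ _)
    have hsub : O ⊆ tooth J := by
      rintro p ⟨⟨⟨⟨⟨a, b⟩, c⟩, d⟩, e⟩, f⟩
      exact ⟨⟨⟨⟨⟨mem_HPc.mpr (mem_HP.mp a).le, mem_HPc.mpr (mem_HP.mp b).le⟩,
        mem_HPc.mpr (mem_HP.mp c).le⟩, mem_HPc.mpr (mem_HP.mp d).le⟩,
        mem_HPc.mpr (mem_HP.mp e).le⟩, mem_HPc.mpr (mem_HP.mp f).le⟩
    have hne : ((4*J+2:ℝ), (0:ℝ)) ∈ O := by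
      rw [hOdef]
      refine ⟨⟨⟨⟨⟨?_, ?_⟩, ?_⟩, ?_⟩, ?_⟩, ?_⟩ <;>
        · rw [mem_HP]; simp only [Prod.fst, Prod.snd]; nlinarith
    exact (Set.nonempty_of_mem hne).mono (interior_maximal hsub hO)

/-! ### halfplane containments for interior disjointness -/

lemma Tset_sub_y {K : ℝ} : Tset K ⊆ HPc 0 (-1) 0 := by
  intro p hp; rw [mem_Tset] at hp; rw [mem_HPc]; obtain ⟨a, b, c, d⟩ := hp; linarith

lemma Bset_sub_y {K : ℝ} : Bset K ⊆ HPc 0 1 0 := by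
  intro p hp; rw [mem_Bset] at hp; rw [mem_HPc]; obtain ⟨a, b, c, d⟩ := hp; linarith

lemma Tset_sub_line {K : ℝ} : Tset K ⊆ HPc 1 (-1) (-8) := by
  intro p hp; rw [mem_Tset] at hp; rw [mem_HPc]; obtain ⟨a, b, c, d⟩ := hp; linarith

lemma Bset_sub_line {K : ℝ} : Bset K ⊆ HPc 1 1 (-8) := by
  intro p hp; rw [mem_Bset] at hp; rw [mem_HPc]; obtain ⟨a, b, c, d⟩ := hp; linarith

lemma tooth_sub_lineT {J : ℝ} : tooth J ⊆ HPc (-1) 1 8 := by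
  intro p hp; rw [mem_tooth] at hp; rw [mem_HPc]; linarith [hp.1]

lemma tooth_sub_lineB {J : ℝ} : tooth J ⊆ HPc (-1) (-1) 8 := by
  intro p hp; rw [mem_tooth] at hp; rw [mem_HPc]; linarith [hp.2.1]

lemma tooth_sub_right {J : ℝ} (hJ : 0 ≤ J) : tooth J ⊆ HPc 1 0 (4*J+4) := by
  intro p hp; rw [mem_HPc]; linarith [(tooth_coords hJ hp).2.1]

lemma tooth_sub_left {J : ℝ} (hJ : 0 ≤ J) : tooth J ⊆ HPc (-1) 0 (-(4*J)) := by
  intro p hp; rw [mem_HPc]; linarith [(tooth_coords hJ hp).1]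

end CH
namespace CH

/-! ### pieces: not in bodies -/

lemma Qc_notin_Tset {K : ℝ} {p : ℝ × ℝ} (hq : p ∈ Qc K) (hp : p ∈ Tset K) : False := by
  rw [mem_Qc] at hq; rw [mem_Tset] at hp
  obtain ⟨a, b, c, d⟩ := hp
  rcases hq with h | h | h | h <;> linarith

lemma Qc_notin_Bset {K : ℝ} {p : ℝ × ℝ} (hq : p ∈ Qc K) (hp : p ∈ Bset K) : False := by
  rw [mem_Qc] at hq; rw [mem_Bset] at hp
  obtain ⟨a, b, c, d⟩ := hp
  rcases hq with h | h | h | h <;> linarith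

lemma Qc_notin_tooth {K I : ℝ} (hI : 0 ≤ I) (hIK : I ≤ K - 1) {p : ℝ × ℝ}
    (hq : p ∈ Qc K) (hp : p ∈ tooth I) : False := by
  rw [mem_Qc] at hq
  obtain ⟨c1, c2, c3, c4⟩ := tooth_coords hI hp
  rcases hq with h | h | h | h <;> linarith

lemma Rp_notin_Tset {K : ℝ} {p : ℝ × ℝ} (hq : p ∈ Rp K) (hp : p ∈ Tset K) : False := by
  rw [mem_Rp] at hq; rw [mem_Tset] at hp
  obtain ⟨a, b, c, d⟩ := hp
  linarith [hq.1]

lemma Rp_notin_Bset {K : ℝ} (hK : 0 ≤ K) {p : ℝ × ℝ} (hq : p ∈ Rp K) (hp : p ∈ Bset K) : False := by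
  rw [mem_Rp] at hq; rw [mem_Bset] at hp
  obtain ⟨a, b, c, d⟩ := hp
  nlinarith [mul_nonneg (show (0:ℝ) ≤ 4*K+7 by linarith) (show (0:ℝ) ≤ 4*K - p.1 by linarith),
    hq.2]

lemma Rm_notin_Tset {K : ℝ} (hK : 0 ≤ K) {p : ℝ × ℝ} (hq : p ∈ Rm K) (hp : p ∈ Tset K) : False := by
  rw [mem_Rm] at hq; rw [mem_Tset] at hp
  obtain ⟨a, b, c, d⟩ := hp
  nlinarith [mul_nonneg (show (0:ℝ) ≤ 4*K+7 by linarith) (show (0:ℝ) ≤ 4*K - p.1 by linarith),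
    hq.2]

lemma Rm_notin_Bset {K : ℝ} {p : ℝ × ℝ} (hq : p ∈ Rm K) (hp : p ∈ Bset K) : False := by
  rw [mem_Rm] at hq; rw [mem_Bset] at hp
  obtain ⟨a, b, c, d⟩ := hp
  linarith [hq.1]

lemma Rp_notin_tooth {K I : ℝ} (hK : 1 ≤ K) (hI : 0 ≤ I)
    (hcase : I = K - 1 ∨ I ≤ K - 2) {p : ℝ × ℝ} (hq : p ∈ Rp K) (hp : p ∈ tooth I) : False := by
  rw [mem_Rp] at hq
  rcases hcase with h | h
  · rw [mem_tooth] at hp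
    have h4 := hp.2.2.2.1
    rw [h] at h4
    nlinarith [hq.2, h4]
  · have := (tooth_coords hI hp).2.1
    have := lb (show (0:ℝ) ≤ K by linarith) hq.2 hq.1
    linarith

lemma Rm_notin_tooth {K I : ℝ} (hK : 1 ≤ K) (hI : 0 ≤ I)
    (hcase : I = K - 1 ∨ I ≤ K - 2) {p : ℝ × ℝ} (hq : p ∈ Rm K) (hp : p ∈ tooth I) : False := by
  rw [mem_Rm] at hq
  rcases hcase with h | h
  · rw [mem_tooth] at hp
    have h6 := hp.2.2.2.2.2
    rw [h] at h6
    nlinarith [hq.2, h6]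
  · have := (tooth_coords hI hp).2.1
    have := lb (show (0:ℝ) ≤ K by linarith)
      (by linarith [hq.2] : (4*K+7)*(4*K-p.1) < -p.2) (by linarith [hq.1] : -p.2 < p.1+8)
    linarith

lemma Aset_notin_Tset {K : ℝ} {p : ℝ × ℝ} (hq : p ∈ Aset) (hp : p ∈ Tset K) : False := by
  rw [mem_Aset] at hq; rw [mem_Tset] at hp; obtain ⟨a, b, c, d⟩ := hp; linarith [hq.1]

lemma Aset_notin_Bset {K : ℝ} {p : ℝ × ℝ} (hq : p ∈ Aset) (hp : p ∈ Bset K) : False := by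
  rw [mem_Aset] at hq; rw [mem_Bset] at hp; obtain ⟨a, b, c, d⟩ := hp; linarith [hq.2.1]

lemma Bl_notin_Tset {K : ℝ} {p : ℝ × ℝ} (hq : p ∈ Bl) (hp : p ∈ Tset K) : False := by
  rw [mem_Bl] at hq; rw [mem_Tset] at hp; obtain ⟨a, b, c, d⟩ := hp; linarith [hq.1]

lemma Bl_notin_Bset {K : ℝ} {p : ℝ × ℝ} (hq : p ∈ Bl) (hp : p ∈ Bset K) : False := by
  rw [mem_Bl] at hq; rw [mem_Bset] at hp; obtain ⟨a, b, c, d⟩ := hp; linarith [hq.2.1]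

lemma Aset_notin_tooth {I : ℝ} (hI : 0 ≤ I) (hcase : I = 0 ∨ 1 ≤ I) {p : ℝ × ℝ}
    (hq : p ∈ Aset) (hp : p ∈ tooth I) : False := by
  rw [mem_Aset] at hq
  rcases hcase with h | h
  · rw [mem_tooth] at hp
    have h3 := hp.2.2.1
    rw [h] at h3
    nlinarith [hq.2.2, h3]
  · have := (tooth_coords hI hp).1
    linarith [hq.1, hq.2.2]

lemma Bl_notin_tooth {I : ℝ} (hI : 0 ≤ I) (hcase : I = 0 ∨ 1 ≤ I) {p : ℝ × ℝ}
    (hq : p ∈ Bl) (hp : p ∈ tooth I) : False := by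
  rw [mem_Bl] at hq
  rcases hcase with h | h
  · rw [mem_tooth] at hp
    have h5 := hp.2.2.2.2.1
    rw [h] at h5
    nlinarith [hq.2.2, h5]
  · have := (tooth_coords hI hp).1
    linarith [hq.2.1, hq.2.2]

lemma Hu_notin_Tset {K J : ℝ} {p : ℝ × ℝ} (hq : p ∈ Hu J) (hp : p ∈ Tset K) : False := by
  rw [mem_Hu] at hq; rw [mem_Tset] at hp; obtain ⟨a, b, c, d⟩ := hp; linarith [hq.1]

lemma Hu_notin_Bset {K J : ℝ} (hJ : 0 ≤ J) {p : ℝ × ℝ} (hq : p ∈ Hu J) (hp : p ∈ Bset K) :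
    False := by
  have := Hu_y_pos hJ hq
  rw [mem_Bset] at hp; obtain ⟨a, b, c, d⟩ := hp; linarith

lemma Hl_notin_Tset {K J : ℝ} (hJ : 0 ≤ J) {p : ℝ × ℝ} (hq : p ∈ Hl J) (hp : p ∈ Tset K) :
    False := by
  have := Hl_y_neg hJ hq
  rw [mem_Tset] at hp; obtain ⟨a, b, c, d⟩ := hp; linarith

lemma Hl_notin_Bset {K J : ℝ} {p : ℝ × ℝ} (hq : p ∈ Hl J) (hp : p ∈ Bset K) : False := by
  rw [mem_Hl] at hq; rw [mem_Bset] at hp; obtain ⟨a, b, c, d⟩ := hp; linarith [hq.1]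

lemma Hu_notin_tooth {J I : ℝ} (hJ : 0 ≤ J) (hI : 0 ≤ I)
    (hcase : I = J ∨ I = J - 1 ∨ I ≤ J - 2 ∨ J + 1 ≤ I) {p : ℝ × ℝ}
    (hq : p ∈ Hu J) (hp : p ∈ tooth I) : False := by
  have hx := Hu_x hJ hq
  rw [mem_Hu] at hq
  rcases hcase with h | h | h | h
  · rw [mem_tooth] at hp
    have h3 := hp.2.2.1
    rw [h] at h3
    nlinarith [hq.2.2, h3]
  · rw [mem_tooth] at hp
    have h4 := hp.2.2.2.1
    rw [h] at h4
    nlinarith [hq.2.1, h4]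
  · have := (tooth_coords hI hp).2.1
    linarith [hx.1]
  · have := (tooth_coords hI hp).1
    linarith [hx.2]

lemma Hl_notin_tooth {J I : ℝ} (hJ : 0 ≤ J) (hI : 0 ≤ I)
    (hcase : I = J ∨ I = J - 1 ∨ I ≤ J - 2 ∨ J + 1 ≤ I) {p : ℝ × ℝ}
    (hq : p ∈ Hl J) (hp : p ∈ tooth I) : False := by
  have hx := Hl_x hJ hq
  rw [mem_Hl] at hq
  rcases hcase with h | h | h | h
  · rw [mem_tooth] at hp
    have h5 := hp.2.2.2.2.1
    rw [h] at h5
    nlinarith [hq.2.2, h5]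
  · rw [mem_tooth] at hp
    have h6 := hp.2.2.2.2.2
    rw [h] at h6
    nlinarith [hq.2.1, h6]
  · have := (tooth_coords hI hp).2.1
    linarith [hx.1]
  · have := (tooth_coords hI hp).1
    linarith [hx.2]

/-! ### pieces pairwise disjoint -/

lemma not_Hu_Hu {J J' : ℝ} (hJ : 0 ≤ J) (hJ' : 0 ≤ J') (hne : J + 1 ≤ J' ∨ J' + 1 ≤ J)
    {p : ℝ × ℝ} (h1 : p ∈ Hu J) (h2 : p ∈ Hu J') : False := by
  have a1 := Hu_x hJ h1
  have a2 := Hu_x hJ' h2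
  rcases hne with h | h <;> linarith [a1.1, a1.2, a2.1, a2.2]

lemma not_Hl_Hl {J J' : ℝ} (hJ : 0 ≤ J) (hJ' : 0 ≤ J') (hne : J + 1 ≤ J' ∨ J' + 1 ≤ J)
    {p : ℝ × ℝ} (h1 : p ∈ Hl J) (h2 : p ∈ Hl J') : False := by
  have a1 := Hl_x hJ h1
  have a2 := Hl_x hJ' h2
  rcases hne with h | h <;> linarith [a1.1, a1.2, a2.1, a2.2]

lemma not_Hu_Hl {J J' : ℝ} (hJ : 0 ≤ J) (hJ' : 0 ≤ J') {p : ℝ × ℝ}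
    (h1 : p ∈ Hu J) (h2 : p ∈ Hl J') : False := by
  have := Hu_y_pos hJ h1
  have := Hl_y_neg hJ' h2
  linarith

lemma not_Left_Hu {J : ℝ} (hJ : 1 ≤ J) {p : ℝ × ℝ} (h1 : p ∈ Aset ∪ Bl) (h2 : p ∈ Hu J) :
    False := by
  have hx := (Hu_x (by linarith) h2).1
  rcases h1 with h | h
  · linarith [Aset_x h]
  · linarith [Bl_x h]

lemma not_Left_Hl {J : ℝ} (hJ : 1 ≤ J) {p : ℝ × ℝ} (h1 : p ∈ Aset ∪ Bl) (h2 : p ∈ Hl J) :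
    False := by
  have hx := (Hl_x (by linarith) h2).1
  rcases h1 with h | h
  · linarith [Aset_x h]
  · linarith [Bl_x h]

lemma Aset_box {p : ℝ × ℝ} (hp : p ∈ Aset) : -8 < p.1 ∧ p.1 < 1 ∧ -9 < p.2 ∧ p.2 < 9 := by
  rw [mem_Aset] at hp
  obtain ⟨a, b, c⟩ := hp
  exact ⟨by linarith, by linarith, by linarith, by linarith⟩

lemma Bl_box {p : ℝ × ℝ} (hp : p ∈ Bl) : -8 < p.1 ∧ p.1 < 1 ∧ -9 < p.2 ∧ p.2 < 9 := by
  rw [mem_Bl] at hp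
  obtain ⟨a, b, c⟩ := hp
  exact ⟨by linarith, by linarith, by linarith, by linarith⟩

lemma not_U_Left {K : ℝ} (hK : 1 ≤ K) {p : ℝ × ℝ} (h1 : p ∈ Uset K) (h2 : p ∈ Aset ∪ Bl) :
    False := by
  have hbox : -8 < p.1 ∧ p.1 < 1 ∧ -9 < p.2 ∧ p.2 < 9 := by
    rcases h2 with h | h
    · exact Aset_box h
    · exact Bl_box h
  rcases h1 with (h | h) | h
  · rw [mem_Qc] at h
    rcases h with h | h | h | h <;> linarith [hbox.1, hbox.2.1, hbox.2.2.1, hbox.2.2.2]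
  · linarith [Rp_x (by linarith) h, hbox.2.1]
  · linarith [Rm_x (by linarith) h, hbox.2.1]

lemma not_U_Hu {K J : ℝ} (hK : 1 ≤ K) (hJ : 1 ≤ J) (hJK : J ≤ K - 1) {p : ℝ × ℝ}
    (h1 : p ∈ Uset K) (h2 : p ∈ Hu J) : False := by
  have hx := Hu_x (by linarith) h2
  have hy := Hu_y_pos (by linarith) h2
  have hy2 : p.2 < p.1 + 8 := (mem_Hu.mp h2).1
  rcases h1 with (h | h) | h
  · rw [mem_Qc] at h
    rcases h with h | h | h | h <;> linarith [hx.1, hx.2]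
  · linarith [Rp_x (by linarith) h, hx.2]
  · linarith [Rm_x (by linarith) h, hx.2]

lemma not_U_Hl {K J : ℝ} (hK : 1 ≤ K) (hJ : 1 ≤ J) (hJK : J ≤ K - 1) {p : ℝ × ℝ}
    (h1 : p ∈ Uset K) (h2 : p ∈ Hl J) : False := by
  have hx := Hl_x (by linarith) h2
  have hy := Hl_y_neg (by linarith) h2
  have hy2 : -(p.1 + 8) < p.2 := (mem_Hl.mp h2).1
  rcases h1 with (h | h) | h
  · rw [mem_Qc] at h
    rcases h with h | h | h | h <;> linarith [hx.1, hx.2]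
  · linarith [Rp_x (by linarith) h, hx.2]
  · linarith [Rm_x (by linarith) h, hx.2]

end CH
namespace CH

/-! ### openness, connectedness, nonemptiness of pieces -/

lemma isOpen_Hu {J : ℝ} : IsOpen (Hu J) :=
  ((isOpen_HP _ _ _).inter (isOpen_HP _ _ _)).inter (isOpen_HP _ _ _)

lemma isOpen_Hl {J : ℝ} : IsOpen (Hl J) :=
  ((isOpen_HP _ _ _).inter (isOpen_HP _ _ _)).inter (isOpen_HP _ _ _)

lemma isOpen_Left : IsOpen (Aset ∪ Bl) :=
  (((isOpen_HP _ _ _).inter (isOpen_HP _ _ _)).inter (isOpen_HP _ _ _)).union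
    (((isOpen_HP _ _ _).inter (isOpen_HP _ _ _)).inter (isOpen_HP _ _ _))

lemma isOpen_Uset {K : ℝ} : IsOpen (Uset K) := by
  refine IsOpen.union (IsOpen.union ?_ ?_) ?_
  · exact (((isOpen_HP _ _ _).union (isOpen_HP _ _ _)).union (isOpen_HP _ _ _)).union
      (isOpen_HP _ _ _)
  · exact (isOpen_HP _ _ _).inter (isOpen_HP _ _ _)
  · exact (isOpen_HP _ _ _).inter (isOpen_HP _ _ _)

lemma preconn_Hu {J : ℝ} : IsPreconnected (Hu J) :=
  (((convex_HP _ _ _).inter (convex_HP _ _ _)).inter (convex_HP _ _ _)).isPreconnected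

lemma preconn_Hl {J : ℝ} : IsPreconnected (Hl J) :=
  (((convex_HP _ _ _).inter (convex_HP _ _ _)).inter (convex_HP _ _ _)).isPreconnected

lemma preconn_Left : IsPreconnected (Aset ∪ Bl) := by
  apply IsPreconnected.union ((-4:ℝ), (0:ℝ))
  · rw [mem_Aset]; norm_num
  · rw [mem_Bl]; norm_num
  · exact (((convex_HP _ _ _).inter (convex_HP _ _ _)).inter (convex_HP _ _ _)).isPreconnected
  · exact (((convex_HP _ _ _).inter (convex_HP _ _ _)).inter (convex_HP _ _ _)).isPreconnected

lemma preconn_Uset {K : ℝ} (hK : 1 ≤ K) : IsPreconnected (Uset K) := by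
  have hre : Uset K = ((((HP 1 0 (-8) ∪ HP 0 (-1) (-(4*K+9))) ∪ HP (-1) 0 (-(4*K))) ∪
      HP 0 1 (-(4*K+9))) ∪ Rp K) ∪ Rm K := by
    rw [Uset, Qc]
    ext p
    simp only [Set.mem_union]
    tauto
  rw [hre]
  have c1 : IsPreconnected (HP (1:ℝ) 0 (-8)) := (convex_HP _ _ _).isPreconnected
  have c2 : IsPreconnected (HP (0:ℝ) (-1) (-(4*K+9))) := (convex_HP _ _ _).isPreconnected
  have c3 : IsPreconnected (HP (-1:ℝ) 0 (-(4*K))) := (convex_HP _ _ _).isPreconnected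
  have c4 : IsPreconnected (HP (0:ℝ) 1 (-(4*K+9))) := (convex_HP _ _ _).isPreconnected
  have cRp : IsPreconnected (Rp K) :=
    ((convex_HP _ _ _).inter (convex_HP _ _ _)).isPreconnected
  have cRm : IsPreconnected (Rm K) :=
    ((convex_HP _ _ _).inter (convex_HP _ _ _)).isPreconnected
  have u1 : IsPreconnected (HP (1:ℝ) 0 (-8) ∪ HP 0 (-1) (-(4*K+9))) := by
    apply IsPreconnected.union ((-9:ℝ), (4*K+10)) _ _ c1 c2
    · rw [mem_HP]; simp only [Prod.fst, Prod.snd]; linarith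
    · rw [mem_HP]; simp only [Prod.fst, Prod.snd]; linarith
  have u2 : IsPreconnected ((HP (1:ℝ) 0 (-8) ∪ HP 0 (-1) (-(4*K+9))) ∪ HP (-1) 0 (-(4*K))) := by
    apply IsPreconnected.union ((4*K+1:ℝ), (4*K+10)) _ _ u1 c3
    · right; rw [mem_HP]; simp only [Prod.fst, Prod.snd]; linarith
    · rw [mem_HP]; simp only [Prod.fst, Prod.snd]; linarith
  have u3 : IsPreconnected (((HP (1:ℝ) 0 (-8) ∪ HP 0 (-1) (-(4*K+9))) ∪ HP (-1) 0 (-(4*K))) ∪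
      HP 0 1 (-(4*K+9))) := by
    apply IsPreconnected.union ((4*K+1:ℝ), -(4*K+10)) _ _ u2 c4
    · right; rw [mem_HP]; simp only [Prod.fst, Prod.snd]; linarith
    · rw [mem_HP]; simp only [Prod.fst, Prod.snd]; linarith
  have u4 : IsPreconnected ((((HP (1:ℝ) 0 (-8) ∪ HP 0 (-1) (-(4*K+9))) ∪ HP (-1) 0 (-(4*K))) ∪
      HP 0 1 (-(4*K+9))) ∪ Rp K) := by
    apply IsPreconnected.union ((4*K+1:ℝ), (4*K+5)) _ _ u3 cRp
    · left; right; rw [mem_HP]; simp only [Prod.fst, Prod.snd]; linarith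
    · constructor
      · rw [mem_HP]; simp only [Prod.fst, Prod.snd]; linarith
      · rw [mem_HP]; simp only [Prod.fst, Prod.snd]; nlinarith
  apply IsPreconnected.union ((4*K+1:ℝ), -(4*K+5)) _ _ u4 cRm
  · left; left; right; rw [mem_HP]; simp only [Prod.fst, Prod.snd]; linarith
  · constructor
    · rw [mem_HP]; simp only [Prod.fst, Prod.snd]; linarith
    · rw [mem_HP]; simp only [Prod.fst, Prod.snd]; nlinarith

lemma nonempty_Hu {J : ℝ} (hJ : 0 ≤ J) : ((4*J, 2) : ℝ × ℝ) ∈ Hu J := by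
  rw [mem_Hu]; simp only [Prod.fst, Prod.snd]
  refine ⟨by linarith, by nlinarith, by nlinarith⟩

lemma nonempty_Hl {J : ℝ} (hJ : 0 ≤ J) : ((4*J, -2) : ℝ × ℝ) ∈ Hl J := by
  rw [mem_Hl]; simp only [Prod.fst, Prod.snd]
  refine ⟨by linarith, by nlinarith, by nlinarith⟩

lemma nonempty_Left : ((-4, 0) : ℝ × ℝ) ∈ Aset ∪ Bl := by
  left; rw [mem_Aset]; norm_num

lemma nonempty_Uset {K : ℝ} : ((-9, 0) : ℝ × ℝ) ∈ Uset K := by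
  left; left; rw [mem_Qc]; simp only [Prod.fst, Prod.snd]; left; norm_num

/-! ### the key covering lemma -/

lemma key {k : ℕ} (hk : 1 ≤ k) {p : ℝ × ℝ}
    (hT : p.2 < p.1 + 8) (hB : -(p.1 + 8) < p.2)
    (ht : ∀ i, i < k → p ∉ tooth (i : ℝ)) :
    ∀ j : ℕ, j < k → p.1 ≤ 4*(j:ℝ) + 4 →
      p ∈ Uset (k : ℝ) ∨ p ∈ Aset ∪ Bl ∨
        ∃ j' : ℕ, 1 ≤ j' ∧ j' < k ∧ (p ∈ Hu (j' : ℝ) ∨ p ∈ Hl (j' : ℝ)) := by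
  intro j
  induction j with
  | zero =>
    intro _ hx
    push_cast at hx
    rcases lt_or_ge (9 * p.1) p.2 with h3 | h3
    · exact Or.inr (Or.inl (Or.inl (mem_Aset.mpr ⟨hT, hB, h3⟩)))
    rcases lt_or_ge p.2 (-(9 * p.1)) with h5 | h5
    · exact Or.inr (Or.inl (Or.inr (mem_Bl.mpr ⟨hT, hB, h5⟩)))
    rcases lt_or_ge (11 * (4 - p.1)) p.2 with h4 | h4
    · rcases eq_or_lt_of_le hk with hk1 | hk2
      · have hkr : ((k:ℕ):ℝ) = 1 := by rw [← hk1]; norm_num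
        left; left; right
        rw [mem_Rp, hkr]
        exact ⟨hT, by nlinarith⟩
      · right; right
        refine ⟨1, le_refl 1, hk2, Or.inl ?_⟩
        rw [mem_Hu]
        push_cast
        refine ⟨hT, by nlinarith, by nlinarith⟩
    rcases lt_or_ge p.2 (-(11 * (4 - p.1))) with h6 | h6
    · rcases eq_or_lt_of_le hk with hk1 | hk2
      · have hkr : ((k:ℕ):ℝ) = 1 := by rw [← hk1]; norm_num
        left; right
        rw [mem_Rm, hkr]
        exact ⟨hB, by nlinarith⟩
      · right; right
        refine ⟨1, le_refl 1, hk2, Or.inr ?_⟩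
        rw [mem_Hl]
        push_cast
        refine ⟨hB, by nlinarith, by nlinarith⟩
    refine absurd (mem_tooth.mpr ?_) (ht 0 hk)
    push_cast
    refine ⟨by linarith, by linarith, by nlinarith, by nlinarith, by nlinarith, by nlinarith⟩
  | succ j ih =>
    intro hjk hx
    rcases le_or_gt p.1 (4*(j:ℝ) + 4) with hle | hgt
    · exact ih (by omega) hle
    push_cast at hx
    have hJ0 : (0:ℝ) ≤ (j:ℝ) := Nat.cast_nonneg j
    rcases lt_or_ge ((4*((j:ℝ)+1)+9) * (p.1 - 4*((j:ℝ)+1))) p.2 with h3 | h3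
    · right; right
      refine ⟨j+1, by omega, hjk, Or.inl ?_⟩
      rw [mem_Hu]
      push_cast
      refine ⟨hT, ?_, by nlinarith⟩
      nlinarith [mul_pos (show (0:ℝ) < 4*((j:ℝ)+1)+9 by linarith)
        (show (0:ℝ) < p.1 - 4*((j:ℝ)+1) by linarith)]
    rcases lt_or_ge p.2 (-((4*((j:ℝ)+1)+9) * (p.1 - 4*((j:ℝ)+1)))) with h5 | h5
    · right; right
      refine ⟨j+1, by omega, hjk, Or.inr ?_⟩
      rw [mem_Hl]
      push_cast
      refine ⟨hB, ?_, by nlinarith⟩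
      nlinarith [mul_pos (show (0:ℝ) < 4*((j:ℝ)+1)+9 by linarith)
        (show (0:ℝ) < p.1 - 4*((j:ℝ)+1) by linarith)]
    rcases lt_or_ge ((4*((j:ℝ)+1)+11) * (4*((j:ℝ)+1)+4 - p.1)) p.2 with h4 | h4
    · rcases eq_or_lt_of_le (show j+2 ≤ k by omega) with hk1 | hk2
      · have hkr : ((k:ℕ):ℝ) = (j:ℝ) + 2 := by rw [← hk1]; push_cast; ring
        left; left; right
        rw [mem_Rp, hkr]
        refine ⟨hT, by nlinarith⟩
      · right; right
        refine ⟨j+2, by omega, hk2, Or.inl ?_⟩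
        rw [mem_Hu]
        push_cast
        refine ⟨hT, by nlinarith, ?_⟩
        nlinarith [mul_nonneg (show (0:ℝ) ≤ 4*((j:ℝ)+1)+11 by linarith)
          (show (0:ℝ) ≤ 4*((j:ℝ)+1)+4 - p.1 by linarith)]
    rcases lt_or_ge p.2 (-((4*((j:ℝ)+1)+11) * (4*((j:ℝ)+1)+4 - p.1))) with h6 | h6
    · rcases eq_or_lt_of_le (show j+2 ≤ k by omega) with hk1 | hk2
      · have hkr : ((k:ℕ):ℝ) = (j:ℝ) + 2 := by rw [← hk1]; push_cast; ring
        left; right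
        rw [mem_Rm, hkr]
        refine ⟨hB, by nlinarith⟩
      · right; right
        refine ⟨j+2, by omega, hk2, Or.inr ?_⟩
        rw [mem_Hl]
        push_cast
        refine ⟨hB, by nlinarith, ?_⟩
        nlinarith [mul_nonneg (show (0:ℝ) ≤ 4*((j:ℝ)+1)+11 by linarith)
          (show (0:ℝ) ≤ 4*((j:ℝ)+1)+4 - p.1 by linarith)]
    refine absurd (mem_tooth.mpr ?_) (ht (j+1) hjk)
    push_cast
    refine ⟨by linarith, by linarith, by nlinarith, by nlinarith, by nlinarith, by nlinarith⟩

/-! ### the covering -/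

lemma cover {k : ℕ} (hk : 1 ≤ k) {p : ℝ × ℝ}
    (hT : p ∉ Tset (k:ℝ)) (hB : p ∉ Bset (k:ℝ)) (ht : ∀ i, i < k → p ∉ tooth (i : ℝ)) :
    p ∈ Uset (k : ℝ) ∨ p ∈ Aset ∪ Bl ∨
      ∃ j' : ℕ, 1 ≤ j' ∧ j' < k ∧ (p ∈ Hu (j' : ℝ) ∨ p ∈ Hl (j' : ℝ)) := by
  have hK1 : (1:ℝ) ≤ (k:ℝ) := by exact_mod_cast hk
  by_cases hbox : -8 ≤ p.1 ∧ p.1 ≤ 4*(k:ℝ) ∧ -(4*(k:ℝ)+9) ≤ p.2 ∧ p.2 ≤ 4*(k:ℝ)+9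
  · obtain ⟨b1, b2, b3, b4⟩ := hbox
    have hT' : p.2 < p.1 + 8 := by
      by_contra h
      push_neg at h
      exact hT (mem_Tset.mpr ⟨b1, b2, h, b4⟩)
    have hB' : -(p.1 + 8) < p.2 := by
      by_contra h
      push_neg at h
      exact hB (mem_Bset.mpr ⟨b1, b2, by linarith, b3⟩)
    have hcast : (↑(k-1) : ℝ) = (k:ℝ) - 1 := by
      push_cast [Nat.cast_sub hk]
      ring
    refine key hk hT' hB' ht (k-1) (by omega) ?_
    rw [hcast]
    linarith
  · left; left; left
    rw [mem_Qc]
    by_contra h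
    push_neg at h
    exact hbox ⟨by linarith [h.1], by linarith [h.2.1], by linarith [h.2.2.1],
      by linarith [h.2.2.2]⟩

/-! ### connected component identification -/

lemma comp_eq {C V W : Set (ℝ × ℝ)} (hV : IsOpen V) (hW : IsOpen W) (hd : Disjoint V W)
    (hC : C = V ∪ W) (hcon : IsPreconnected V) {x : ℝ × ℝ} (hx : x ∈ V) :
    connectedComponentIn C x = V := by
  have hxC : x ∈ C := hC ▸ Or.inl hx
  apply Set.Subset.antisymm
  · by_contra h
    have hne : (connectedComponentIn C x ∩ W).Nonempty := by
      rcases Set.not_subset.mp h with ⟨y, hy1, hy2⟩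
      have : y ∈ V ∪ W := hC ▸ connectedComponentIn_subset C x hy1
      rcases this with h' | h'
      · exact absurd h' hy2
      · exact ⟨y, hy1, h'⟩
    have hpre := isPreconnected_connectedComponentIn (x := x) (F := C)
    have hsub : connectedComponentIn C x ⊆ V ∪ W := hC ▸ connectedComponentIn_subset C x
    have hmem : (connectedComponentIn C x ∩ V).Nonempty :=
      ⟨x, mem_connectedComponentIn hxC, hx⟩
    obtain ⟨z, hz1, hz2, hz3⟩ := hpre V W hV hW hsub hmem hne
    exact Set.disjoint_left.mp hd hz2 hz3
  · exact hcon.subset_connectedComponentIn hx (hC ▸ Set.subset_union_left)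

end CH
namespace CH

def piece (k : ℕ) (i : ℕ) : Set (ℝ × ℝ) :=
  if i = 0 then Uset (k:ℝ) else if i = 1 then Aset ∪ Bl
  else if i ≤ k then Hu ((i:ℝ) - 1) else Hl ((i:ℝ) - (k:ℝ))

lemma piece_open {k i : ℕ} : IsOpen (piece k i) := by
  unfold piece
  split
  · exact isOpen_Uset
  split
  · exact isOpen_Left
  split
  · exact isOpen_Hu
  · exact isOpen_Hl

lemma piece_preconn {k i : ℕ} (hk : 1 ≤ k) : IsPreconnected (piece k i) := by
  have hK : (1:ℝ) ≤ (k:ℝ) := by exact_mod_cast hk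
  unfold piece
  split
  · exact preconn_Uset hK
  split
  · exact preconn_Left
  split
  · exact preconn_Hu
  · exact preconn_Hl

lemma piece_nonempty {k i : ℕ} (hk : 1 ≤ k) (hi : i < 2*k) : (piece k i).Nonempty := by
  unfold piece
  split
  · exact ⟨_, nonempty_Uset⟩
  split
  · exact ⟨_, nonempty_Left⟩
  split
  · rename_i h0 h1 h2
    refine ⟨_, nonempty_Hu (J := (i:ℝ) - 1) ?_⟩
    have : 1 ≤ i := by omega
    have : (1:ℝ) ≤ (i:ℝ) := by exact_mod_cast this
    linarith
  · rename_i h0 h1 h2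
    refine ⟨_, nonempty_Hl (J := (i:ℝ) - (k:ℝ)) ?_⟩
    have : k ≤ i := by omega
    have : (k:ℝ) ≤ (i:ℝ) := by exact_mod_cast this
    linarith

/-- every piece avoids every body -/
lemma piece_avoids {k i : ℕ} (hk : 1 ≤ k) (hi : i < 2*k) {p : ℝ × ℝ} (hp : p ∈ piece k i) :
    p ∉ Tset (k:ℝ) ∧ p ∉ Bset (k:ℝ) ∧ ∀ n, n < k → p ∉ tooth (n:ℝ) := by
  have hK : (1:ℝ) ≤ (k:ℝ) := by exact_mod_cast hk
  unfold piece at hp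
  split at hp
  · -- Uset
    rcases hp with (hq | hq) | hq
    · refine ⟨fun h => Qc_notin_Tset hq h, fun h => Qc_notin_Bset hq h, fun n hn h => ?_⟩
      have h1 : (0:ℝ) ≤ (n:ℝ) := Nat.cast_nonneg n
      have h2 : (n:ℝ) + 1 ≤ (k:ℝ) := by exact_mod_cast hn
      exact Qc_notin_tooth h1 (by linarith) hq h
    · refine ⟨fun h => Rp_notin_Tset hq h, fun h => Rp_notin_Bset (by linarith) hq h,
        fun n hn h => ?_⟩
      have h1 : (0:ℝ) ≤ (n:ℝ) := Nat.cast_nonneg n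
      have hcase : (n:ℝ) = (k:ℝ) - 1 ∨ (n:ℝ) ≤ (k:ℝ) - 2 := by
        rcases (by omega : n + 1 = k ∨ n + 2 ≤ k) with h' | h'
        · left; have : ((n:ℝ)) + 1 = (k:ℝ) := by exact_mod_cast h'
          linarith
        · right; have : ((n:ℝ)) + 2 ≤ (k:ℝ) := by exact_mod_cast h'
          linarith
      exact Rp_notin_tooth hK h1 hcase hq h
    · refine ⟨fun h => Rm_notin_Tset (by linarith) hq h, fun h => Rm_notin_Bset hq h,
        fun n hn h => ?_⟩
      have h1 : (0:ℝ) ≤ (n:ℝ) := Nat.cast_nonneg n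
      have hcase : (n:ℝ) = (k:ℝ) - 1 ∨ (n:ℝ) ≤ (k:ℝ) - 2 := by
        rcases (by omega : n + 1 = k ∨ n + 2 ≤ k) with h' | h'
        · left; have : ((n:ℝ)) + 1 = (k:ℝ) := by exact_mod_cast h'
          linarith
        · right; have : ((n:ℝ)) + 2 ≤ (k:ℝ) := by exact_mod_cast h'
          linarith
      exact Rm_notin_tooth hK h1 hcase hq h
  split at hp
  · -- left hole
    have hcase : ∀ n : ℕ, (n:ℝ) = 0 ∨ (1:ℝ) ≤ (n:ℝ) := by
      intro n
      rcases (by omega : n = 0 ∨ 1 ≤ n) with h' | h'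
      · left; exact_mod_cast h'
      · right; exact_mod_cast h'
    rcases hp with hq | hq
    · exact ⟨fun h => Aset_notin_Tset hq h, fun h => Aset_notin_Bset hq h,
        fun n hn h => Aset_notin_tooth (Nat.cast_nonneg n) (hcase n) hq h⟩
    · exact ⟨fun h => Bl_notin_Tset hq h, fun h => Bl_notin_Bset hq h,
        fun n hn h => Bl_notin_tooth (Nat.cast_nonneg n) (hcase n) hq h⟩
  split at hp
  · -- Hu (i-1)
    rename_i h0 h1 h2
    have hi2 : 2 ≤ i := by omega
    have hi2' : (2:ℝ) ≤ (i:ℝ) := by exact_mod_cast hi2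
    have hJ : (0:ℝ) ≤ (i:ℝ) - 1 := by linarith
    refine ⟨fun h => Hu_notin_Tset hp h, fun h => Hu_notin_Bset hJ hp h, fun n hn h => ?_⟩
    have h1' : (0:ℝ) ≤ (n:ℝ) := Nat.cast_nonneg n
    have hcase : (n:ℝ) = (i:ℝ)-1 ∨ (n:ℝ) = (i:ℝ)-1-1 ∨ (n:ℝ) ≤ (i:ℝ)-1-2 ∨ (i:ℝ)-1+1 ≤ (n:ℝ) := by
      rcases (by omega : n + 1 = i ∨ n + 2 = i ∨ n + 3 ≤ i ∨ i ≤ n) with h' | h' | h' | h'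
      · left; have : ((n:ℝ)) + 1 = (i:ℝ) := by exact_mod_cast h'
        linarith
      · right; left; have : ((n:ℝ)) + 2 = (i:ℝ) := by exact_mod_cast h'
        linarith
      · right; right; left; have : ((n:ℝ)) + 3 ≤ (i:ℝ) := by exact_mod_cast h'
        linarith
      · right; right; right; have : ((i:ℝ)) ≤ (n:ℝ) := by exact_mod_cast h'
        linarith
    exact Hu_notin_tooth hJ h1' hcase hp h
  · -- Hl (i-k)
    rename_i h0 h1 h2
    have hik : k + 1 ≤ i := by omega
    have hik' : ((k:ℝ)) + 1 ≤ (i:ℝ) := by exact_mod_cast hik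
    have hJ : (0:ℝ) ≤ (i:ℝ) - (k:ℝ) := by linarith
    refine ⟨fun h => Hl_notin_Tset hJ hp h, fun h => Hl_notin_Bset hp h, fun n hn h => ?_⟩
    have h1' : (0:ℝ) ≤ (n:ℝ) := Nat.cast_nonneg n
    have hcase : (n:ℝ) = (i:ℝ)-(k:ℝ) ∨ (n:ℝ) = (i:ℝ)-(k:ℝ)-1 ∨ (n:ℝ) ≤ (i:ℝ)-(k:ℝ)-2 ∨
        (i:ℝ)-(k:ℝ)+1 ≤ (n:ℝ) := by
      rcases (by omega : n + k = i ∨ n + k + 1 = i ∨ n + k + 2 ≤ i ∨ i + 1 ≤ n + k)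
        with h' | h' | h' | h'
      · left; have : ((n:ℝ)) + (k:ℝ) = (i:ℝ) := by exact_mod_cast h'
        linarith
      · right; left; have : ((n:ℝ)) + (k:ℝ) + 1 = (i:ℝ) := by exact_mod_cast h'
        linarith
      · right; right; left; have : ((n:ℝ)) + (k:ℝ) + 2 ≤ (i:ℝ) := by exact_mod_cast h'
        linarith
      · right; right; right; have : ((i:ℝ)) + 1 ≤ (n:ℝ) + (k:ℝ) := by exact_mod_cast h'
        linarith
    exact Hl_notin_tooth hJ h1' hcase hp h

lemma piece_disj' {k i i' : ℕ} (hk : 1 ≤ k) (hi : i < 2*k) (hi' : i' < 2*k) (hlt : i < i')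
    {p : ℝ × ℝ} (h1 : p ∈ piece k i) (h2 : p ∈ piece k i') : False := by
  have hK : (1:ℝ) ≤ (k:ℝ) := by exact_mod_cast hk
  unfold piece at h1 h2
  by_cases e0 : i = 0
  · simp only [e0, if_pos rfl] at h1
    rw [e0] at hlt
    by_cases e1 : i' = 1
    · simp only [e1] at h2
      norm_num at h2
      exact not_U_Left hK h1 h2
    by_cases e2 : i' ≤ k
    · simp only [if_neg (by omega : ¬ i' = 0), if_neg e1, if_pos e2] at h2
      have hii : 2 ≤ i' := by omega
      have hii' : (2:ℝ) ≤ (i':ℝ) := by exact_mod_cast hii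
      have hikk : (i':ℝ) ≤ (k:ℝ) := by exact_mod_cast e2
      exact not_U_Hu hK (by linarith) (by linarith) h1 h2
    · simp only [if_neg (by omega : ¬ i' = 0), if_neg e1, if_neg e2] at h2
      have hii : k + 1 ≤ i' := by omega
      have hii' : ((k:ℝ)) + 1 ≤ (i':ℝ) := by exact_mod_cast hii
      have hikk : (i':ℝ) ≤ 2*(k:ℝ) - 1 := by
        have : i' + 1 ≤ 2*k := by omega
        have : ((i':ℝ)) + 1 ≤ 2*(k:ℝ) := by exact_mod_cast this
        linarith
      exact not_U_Hl hK (by linarith) (by linarith) h1 h2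
  by_cases e1 : i = 1
  · simp only [e1] at h1
    norm_num at h1
    rw [e1] at hlt
    by_cases e2 : i' ≤ k
    · simp only [if_neg (by omega : ¬ i' = 0), if_neg (by omega : ¬ i' = 1), if_pos e2] at h2
      have hii : 2 ≤ i' := by omega
      have hii' : (2:ℝ) ≤ (i':ℝ) := by exact_mod_cast hii
      exact not_Left_Hu (by linarith) h1 h2
    · simp only [if_neg (by omega : ¬ i' = 0), if_neg (by omega : ¬ i' = 1), if_neg e2] at h2
      have hii : k + 1 ≤ i' := by omega
      have hii' : ((k:ℝ)) + 1 ≤ (i':ℝ) := by exact_mod_cast hii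
      exact not_Left_Hl (by linarith) h1 h2
  -- i ≥ 2
  have hi2 : 2 ≤ i := by omega
  have hi2' : (2:ℝ) ≤ (i:ℝ) := by exact_mod_cast hi2
  have hilt : (i:ℝ) < (i':ℝ) := by exact_mod_cast hlt
  have hilt1 : (i:ℝ) + 1 ≤ (i':ℝ) := by
    have : i + 1 ≤ i' := by omega
    exact_mod_cast this
  by_cases e2 : i ≤ k
  · simp only [if_neg e0, if_neg e1, if_pos e2] at h1
    have hik' : (i:ℝ) ≤ (k:ℝ) := by exact_mod_cast e2
    by_cases e2' : i' ≤ k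
    · simp only [if_neg (by omega : ¬ i' = 0), if_neg (by omega : ¬ i' = 1), if_pos e2'] at h2
      exact not_Hu_Hu (by linarith) (by linarith) (Or.inl (by linarith)) h1 h2
    · simp only [if_neg (by omega : ¬ i' = 0), if_neg (by omega : ¬ i' = 1), if_neg e2'] at h2
      have hii : k + 1 ≤ i' := by omega
      have hii' : ((k:ℝ)) + 1 ≤ (i':ℝ) := by exact_mod_cast hii
      exact not_Hu_Hl (by linarith) (by linarith) h1 h2
  · simp only [if_neg e0, if_neg e1, if_neg e2] at h1
    have hik : k + 1 ≤ i := by omega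
    have hik' : ((k:ℝ)) + 1 ≤ (i:ℝ) := by exact_mod_cast hik
    have e2' : ¬ i' ≤ k := by omega
    simp only [if_neg (by omega : ¬ i' = 0), if_neg (by omega : ¬ i' = 1), if_neg e2'] at h2
    exact not_Hl_Hl (by linarith) (by linarith) (Or.inl (by linarith)) h1 h2

lemma piece_disj {k i i' : ℕ} (hk : 1 ≤ k) (hi : i < 2*k) (hi' : i' < 2*k) (hne : i ≠ i')
    {p : ℝ × ℝ} (h1 : p ∈ piece k i) (h2 : p ∈ piece k i') : False := by
  rcases Nat.lt_or_ge i i' with h | h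
  · exact piece_disj' hk hi hi' h h1 h2
  · exact piece_disj' hk hi' hi (by omega) h2 h1

end CH
namespace CH

def Zfun (k : ℕ) : Fin (k+2) → Set (ℝ × ℝ) := fun i =>
  if (i:ℕ) = 0 then Tset (k:ℝ) else if (i:ℕ) = 1 then Bset (k:ℝ)
  else tooth ((((i:ℕ) - 2 : ℕ)):ℝ)

lemma Zfun_union {k : ℕ} :
    (⋃ i, Zfun k i) = Tset (k:ℝ) ∪ Bset (k:ℝ) ∪ ⋃ (n : ℕ), ⋃ (_ : n < k), tooth (n:ℝ) := by
  ext p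
  simp only [Set.mem_iUnion, Set.mem_union]
  constructor
  · rintro ⟨i, hi⟩
    unfold Zfun at hi
    split at hi
    · exact Or.inl (Or.inl hi)
    split at hi
    · exact Or.inl (Or.inr hi)
    · rename_i e0 e1
      right
      exact ⟨(i:ℕ) - 2, by omega, hi⟩
  · rintro ((h | h) | ⟨n, hn, h⟩)
    · exact ⟨⟨0, by omega⟩, by simpa [Zfun]⟩
    · exact ⟨⟨1, by omega⟩, by simpa [Zfun]⟩
    · refine ⟨⟨n + 2, by omega⟩, ?_⟩
      simp only [Zfun]
      norm_num
      exact h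

lemma Zfun_isConvexBody {k : ℕ} (hk : 1 ≤ k) (i : Fin (k+2)) :
    IsCompact (Zfun k i) ∧ Convex ℝ (Zfun k i) ∧ (interior (Zfun k i)).Nonempty := by
  have hK : (1:ℝ) ≤ (k:ℝ) := by exact_mod_cast hk
  unfold Zfun
  split
  · exact isConvexBody_Tset hK
  split
  · exact isConvexBody_Bset hK
  · exact isConvexBody_tooth (Nat.cast_nonneg _)

lemma Zfun_disjoint {k : ℕ} (hk : 1 ≤ k) (i j : Fin (k+2)) (hne : i ≠ j) :
    Disjoint (interior (Zfun k i)) (interior (Zfun k j)) := by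
  have main : ∀ a b : Fin (k+2), (a:ℕ) < (b:ℕ) →
      Disjoint (interior (Zfun k a)) (interior (Zfun k b)) := by
    intro a b hab
    unfold Zfun
    by_cases ea : (a:ℕ) = 0
    · rw [if_pos ea]
      by_cases eb : (b:ℕ) = 1
      · rw [if_neg (by omega), if_pos eb]
        -- T vs B via y = 0
        refine disjoint_interiors (u := 0) (v := -1) (w := 0) (Or.inr (by norm_num)) ?_ ?_
        · intro p hp
          rw [mem_Tset] at hp
          rw [mem_HPc]
          obtain ⟨c1, c2, c3, c4⟩ := hp
          linarith
        · intro p hp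
          rw [mem_Bset] at hp
          rw [mem_HPc]
          obtain ⟨c1, c2, c3, c4⟩ := hp
          linarith
      · rw [if_neg (by omega), if_neg eb]
        -- T vs tooth via y = x + 8
        refine disjoint_interiors (u := 1) (v := -1) (w := -8) (Or.inl (by norm_num)) ?_ ?_
        · intro p hp
          rw [mem_Tset] at hp
          rw [mem_HPc]
          obtain ⟨c1, c2, c3, c4⟩ := hp
          linarith
        · intro p hp
          rw [mem_tooth] at hp
          rw [mem_HPc]
          linarith [hp.1]
    by_cases ea1 : (a:ℕ) = 1
    · rw [if_neg ea, if_pos ea1, if_neg (by omega), if_neg (by omega)]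
      -- B vs tooth via y = -x-8
      refine disjoint_interiors (u := 1) (v := 1) (w := -8) (Or.inl (by norm_num)) ?_ ?_
      · intro p hp
        rw [mem_Bset] at hp
        rw [mem_HPc]
        obtain ⟨c1, c2, c3, c4⟩ := hp
        linarith
      · intro p hp
        rw [mem_tooth] at hp
        rw [mem_HPc]
        linarith [hp.2.1]
    · rw [if_neg ea, if_neg ea1, if_neg (by omega), if_neg (by omega)]
      -- tooth vs tooth via x = 4*(a-2)+4
      have hcast : (((a:ℕ) - 2 : ℕ) : ℝ) + 1 ≤ ((((b:ℕ) - 2 : ℕ)) : ℝ) := by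
        have : ((a:ℕ) - 2) + 1 ≤ ((b:ℕ) - 2) := by omega
        exact_mod_cast this
      refine disjoint_interiors (u := 1) (v := 0) (w := 4*(((a:ℕ) - 2 : ℕ):ℝ)+4)
        (Or.inl (by norm_num)) ?_ ?_
      · intro p hp
        rw [mem_HPc]
        have := (tooth_coords (Nat.cast_nonneg _) hp).2.1
        linarith
      · intro p hp
        rw [mem_HPc]
        have := (tooth_coords (Nat.cast_nonneg _) hp).1
        linarith
  rcases Nat.lt_or_ge (i:ℕ) (j:ℕ) with h | h
  · exact main i j h
  · have : (j:ℕ) < (i:ℕ) := by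
      rcases Nat.lt_or_ge (j:ℕ) (i:ℕ) with h' | h'
      · exact h'
      · exact absurd (Fin.ext (by omega)) hne
    exact (main j i this).symm

end CH
/-- A convex body in the plane: a compact convex subset of ℝ² with nonempty interior. -/
def IsConvexBody (S : Set (ℝ × ℝ)) : Prop :=
  IsCompact S ∧ Convex ℝ S ∧ (interior S).Nonempty

theorem convex_holes_lower_bound (m : ℕ) (hm : 3 ≤ m) :
    ∃ Z : Fin m → Set (ℝ × ℝ),
      (∀ i, IsConvexBody (Z i)) ∧
      (∀ i j, i ≠ j → Disjoint (interior (Z i)) (interior (Z j))) ∧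
      ({H : Set (ℝ × ℝ) | ∃ x ∈ (⋃ i, Z i)ᶜ,
          H = connectedComponentIn (⋃ i, Z i)ᶜ x}).Finite ∧
      ({H : Set (ℝ × ℝ) | ∃ x ∈ (⋃ i, Z i)ᶜ,
          H = connectedComponentIn (⋃ i, Z i)ᶜ x}).ncard = 2 * m - 4 := by
  obtain ⟨k, rfl⟩ : ∃ k, m = k + 2 := ⟨m - 2, by omega⟩
  have hk : 1 ≤ k := by omega
  refine ⟨CH.Zfun k, fun i => CH.Zfun_isConvexBody hk i,
    fun i j hne => CH.Zfun_disjoint hk i j hne, ?_⟩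
  set C : Set (ℝ × ℝ) := (⋃ i, CH.Zfun k i)ᶜ with hCdef
  have hC : ∀ p : ℝ × ℝ, p ∈ C ↔
      (p ∉ CH.Tset (k:ℝ) ∧ p ∉ CH.Bset (k:ℝ) ∧ ∀ n, n < k → p ∉ CH.tooth (n:ℝ)) := by
    intro p
    rw [hCdef, Set.mem_compl_iff, CH.Zfun_union]
    simp only [Set.mem_union, Set.mem_iUnion, not_or, not_exists]
    constructor
    · rintro ⟨⟨h1, h2⟩, h3⟩
      exact ⟨h1, h2, fun n hn => h3 n hn⟩
    · rintro ⟨h1, h2, h3⟩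
      exact ⟨⟨h1, h2⟩, fun n hn => h3 n hn⟩
  have hcov : ∀ p ∈ C, ∃ i, i < 2*k ∧ p ∈ CH.piece k i := by
    intro p hp
    rw [hC p] at hp
    obtain ⟨h1, h2, h3⟩ := hp
    rcases CH.cover hk h1 h2 h3 with h | h | ⟨j', hj1, hj2, h⟩
    · exact ⟨0, by omega, by simpa [CH.piece] using h⟩
    · exact ⟨1, by omega, by simpa [CH.piece] using h⟩
    · rcases h with h | h
      · refine ⟨j' + 1, by omega, ?_⟩
        have hpi : CH.piece k (j'+1) = CH.Hu ((j':ℝ)) := by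
          unfold CH.piece
          rw [if_neg (by omega), if_neg (by omega), if_pos (by omega)]
          congr 1
          push_cast
          ring
        rw [hpi]
        exact h
      · refine ⟨k + j', by omega, ?_⟩
        have hpi : CH.piece k (k + j') = CH.Hl ((j':ℝ)) := by
          unfold CH.piece
          rw [if_neg (by omega), if_neg (by omega), if_neg (by omega)]
          congr 1
          push_cast
          ring
        rw [hpi]
        exact h
  have hsubC : ∀ i, i < 2*k → CH.piece k i ⊆ C := by
    intro i hi p hp
    rw [hC p]
    exact CH.piece_avoids hk hi hp
  have hCeq : C = ⋃ i ∈ Set.Iio (2*k), CH.piece k i := by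
    ext p
    simp only [Set.mem_iUnion, Set.mem_Iio, exists_prop]
    constructor
    · exact fun hp => hcov p hp
    · rintro ⟨i, hi, hp⟩
      exact hsubC i hi hp
  have hcomp : ∀ i, i < 2*k → ∀ x ∈ CH.piece k i, connectedComponentIn C x = CH.piece k i := by
    intro i hi x hx
    apply CH.comp_eq (CH.piece_open) (W := ⋃ i' ∈ Set.Iio (2*k) \ {i}, CH.piece k i')
    · exact isOpen_biUnion fun _ _ => CH.piece_open
    · rw [Set.disjoint_left]
      intro y hy hyW
      simp only [Set.mem_iUnion, Set.mem_diff, Set.mem_Iio, Set.mem_singleton_iff,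
        exists_prop] at hyW
      obtain ⟨i', ⟨hi', hne⟩, hmem⟩ := hyW
      exact CH.piece_disj hk hi' hi hne hmem hy
    · rw [hCeq]
      ext y
      simp only [Set.mem_iUnion, Set.mem_Iio, Set.mem_union, Set.mem_diff,
        Set.mem_singleton_iff, exists_prop]
      constructor
      · rintro ⟨i'', hi'', hy⟩
        by_cases h : i'' = i
        · left; rw [← h]; exact hy
        · right; exact ⟨i'', ⟨hi'', h⟩, hy⟩
      · rintro (hy | ⟨i'', ⟨hi'', _⟩, hy⟩)
        · exact ⟨i, hi, hy⟩
        · exact ⟨i'', hi'', hy⟩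
    · exact CH.piece_preconn hk
    · exact hx
  have hSdef : {H : Set (ℝ × ℝ) | ∃ x ∈ C, H = connectedComponentIn C x} =
      CH.piece k '' Set.Iio (2*k) := by
    ext H
    simp only [Set.mem_setOf_eq, Set.mem_image, Set.mem_Iio]
    constructor
    · rintro ⟨x, hxC, rfl⟩
      obtain ⟨i, hi, hx⟩ := hcov x hxC
      exact ⟨i, hi, (hcomp i hi x hx).symm⟩
    · rintro ⟨i, hi, rfl⟩
      obtain ⟨x, hx⟩ := CH.piece_nonempty hk hi
      exact ⟨x, hsubC i hi hx, (hcomp i hi x hx).symm⟩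
  constructor
  · rw [hSdef]
    exact (Set.finite_Iio (2*k)).image _
  · rw [hSdef, Set.ncard_image_of_injOn, ← Finset.coe_range, Set.ncard_coe_finset,
      Finset.card_range]
    · omega
    · intro a ha b hb hab
      by_contra hne
      obtain ⟨x, hx⟩ := CH.piece_nonempty hk ha
      exact CH.piece_disj hk ha hb hne hx (hab ▸ hx)
end

section
/- For every integer m ≥ 1 there exist a nondegenerate closed axis-parallel rectangle C in ℝ² and pairwise-disjoint nondegenerate closed axis-parallel rectangles Z₁, …, Zₘ contained in C with the following property: for every natural number b and every family of pairwise interior-disjoint nondegenerate closed axis-parallel rectangles Z'₁, …, Z'_{m+b} whose union equals C and which satisfy Zᵢ ⊆ Z'ᵢ for every i ≤ m, one has b ≥ m − ⌈2√m − 1⌉. -/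
/-- A nondegenerate closed axis-parallel rectangle in ℝ²:
a set of the form [a, b] × [c, d] with a < b and c < d. -/
def IsRect (S : Set (ℝ × ℝ)) : Prop :=
  ∃ a b c d : ℝ, a < b ∧ c < d ∧ S = Set.Icc a b ×ˢ Set.Icc c d

set_option maxHeartbeats 1000000

namespace RC

open Set

/-- if two points of a closed box straddle `z` strictly in both coordinates,
then `z` is in the interior of the box. -/
lemma block {a b c d : ℝ} {u v z : ℝ × ℝ}
    (hu : u ∈ Icc a b ×ˢ Icc c d) (hv : v ∈ Icc a b ×ˢ Icc c d)
    (hx1 : u.1 < z.1) (hx2 : z.1 < v.1) (hy1 : u.2 < z.2) (hy2 : z.2 < v.2) :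
    z ∈ interior (Icc a b ×ˢ Icc c d) := by
  rw [interior_prod_eq, interior_Icc, interior_Icc]
  obtain ⟨⟨hu1, hu2⟩, hu3, hu4⟩ := hu
  obtain ⟨⟨hv1, hv2⟩, hv3, hv4⟩ := hv
  exact ⟨⟨lt_of_le_of_lt hu1 hx1, lt_of_lt_of_le hx2 hv2⟩,
    lt_of_le_of_lt hu3 hy1, lt_of_lt_of_le hy2 hv4⟩

section Config

variable (m p q : ℕ)

/-- number of bricks in row `r` -/
def n (r : ℕ) : ℕ := min q (m - q * r)

noncomputable def xi : ℝ := 1 / (4 * p)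
noncomputable def ga : ℝ := 1 / (32 * p)
noncomputable def Ga : ℝ := 1 / (8 * (q + 3))

noncomputable def xL (r k : ℕ) : ℝ := if k = 0 then 0 else k + (r + 1) * xi p + ga p
noncomputable def xR (r k : ℕ) : ℝ :=
  if k + 1 = n m q r then (q + 1 : ℝ) else (k + 1) + (r + 1) * xi p - ga p
noncomputable def yB (r k : ℕ) : ℝ := if r = 0 then 0 else r - (k + 2) * Ga q
noncomputable def yT (r k : ℕ) : ℝ :=
  if r + 1 = p then (p : ℝ)
  else if k < n m q (r + 1) then (r + 1) - (k + 2) * Ga q - Ga q / 2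
  else (r + 1) - (q + 3) * Ga q

/-- the brick at row `r`, column `k` -/
noncomputable def Zb (r k : ℕ) : Set (ℝ × ℝ) :=
  Icc (xL p r k) (xR m p q r k) ×ˢ Icc (yB q r k) (yT m p q r k)

/-- the probe point sitting just left of brick `(r,k)`'s lower-left corner -/
noncomputable def P (r k : ℕ) : ℝ × ℝ :=
  (k + (r + 1) * xi p - 2 * ga p, r - (k + 2) * Ga q + Ga q / 4)

end Config

section Facts

variable {m p q : ℕ} (hq : 1 ≤ q) (hp : 1 ≤ p)

include hp in
lemma xi_pos : 0 < xi p := by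
  have h : (0:ℝ) < p := by exact_mod_cast hp
  unfold xi; positivity

include hp in
lemma ga_pos : 0 < ga p := by
  have h : (0:ℝ) < p := by exact_mod_cast hp
  unfold ga; positivity

lemma Ga_pos : 0 < Ga q := by
  have h : (0:ℝ) < 8 * ((q:ℝ) + 3) := by positivity
  unfold Ga; positivity

lemma ga_eq : 8 * ga p = xi p := by
  unfold ga xi; ring

include hp in
lemma xi_le (r : ℕ) (hr : r ≤ p) : (r : ℝ) * xi p ≤ 1 / 4 := by
  have h0 : (0:ℝ) < p := by exact_mod_cast hp
  have h1 : (r:ℝ) ≤ p := by exact_mod_cast hr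
  have : (r:ℝ) * xi p ≤ (p:ℝ) * xi p := by
    apply mul_le_mul_of_nonneg_right h1 (le_of_lt (xi_pos hp))
  calc (r:ℝ) * xi p ≤ (p:ℝ) * xi p := this
    _ = 1/4 := by unfold xi; field_simp

lemma Ga_eq : ((q:ℝ) + 3) * Ga q = 1 / 8 := by
  have h : (8:ℝ) * ((q:ℝ) + 3) ≠ 0 := by positivity
  unfold Ga; field_simp

lemma Ga_le (x : ℝ) (hx0 : 0 ≤ x) (hx : x ≤ (q:ℝ) + 3) : x * Ga q ≤ 1 / 8 := by
  have := Ga_pos (q := q)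
  calc x * Ga q ≤ ((q:ℝ)+3) * Ga q := by
        apply mul_le_mul_of_nonneg_right hx (le_of_lt this)
    _ = 1/8 := Ga_eq

end Facts

section NFacts

variable {m p q : ℕ}

lemma n_le (r : ℕ) : n m q r ≤ q := min_le_left _ _

lemma n_mono {r r' : ℕ} (h : r ≤ r') : n m q r' ≤ n m q r := by
  unfold n
  exact min_le_min le_rfl (Nat.sub_le_sub_left (Nat.mul_le_mul_left q h) m)

lemma n_pos (hm1 : q * (p - 1) < m) (r : ℕ) (hr : r < p) (hq : 1 ≤ q) : 1 ≤ n m q r := by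
  unfold n
  apply Nat.le_min.mpr
  constructor
  · exact hq
  · have : q * r ≤ q * (p-1) := Nat.mul_le_mul_left q (by omega)
    omega

lemma n_zero (hqm : q ≤ m) : n m q 0 = q := by
  unfold n
  simp only [Nat.mul_zero, Nat.sub_zero]
  exact min_eq_left hqm

lemma lt_n_of (r k : ℕ) (h1 : k < q) (h2 : q * r + k < m) : k < n m q r := by
  unfold n
  apply lt_min h1
  omega

lemma n_elim {r k : ℕ} (h : k < n m q r) : k < q ∧ q * r + k < m := by
  unfold n at h
  constructor
  · exact lt_of_lt_of_le h (min_le_left _ _)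
  · have := lt_of_lt_of_le h (min_le_right _ _)
    omega

end NFacts

section CoordFacts

variable {m p q : ℕ}

lemma xL_ge (r k : ℕ) (hp : 1 ≤ p) : (k:ℝ) ≤ xL p r k := by
  unfold xL
  split
  · rename_i h; subst h; simp
  · have h1 := xi_pos (p := p) hp
    have h2 := ga_pos (p := p) hp
    nlinarith [Nat.cast_nonneg (α := ℝ) r]

lemma xL_nonneg (r k : ℕ) (hp : 1 ≤ p) : 0 ≤ xL p r k :=
  le_trans (Nat.cast_nonneg k) (xL_ge r k hp)

lemma xL_le (r k : ℕ) (hp : 1 ≤ p) : xL p r k ≤ (k:ℝ) + ((r:ℝ)+1) * xi p + ga p := by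
  unfold xL
  split
  · rename_i h; subst h
    have h1 := xi_pos (p := p) hp
    have h2 := ga_pos (p := p) hp
    push_cast
    nlinarith [Nat.cast_nonneg (α := ℝ) r]
  · push_cast; linarith

lemma xL_eq (r k : ℕ) (h : k ≠ 0) : xL p r k = (k:ℝ) + ((r:ℝ)+1) * xi p + ga p := by
  unfold xL
  rw [if_neg h]

lemma xR_eq (r k : ℕ) (h : k + 1 ≠ n m q r) :
    xR m p q r k = (k:ℝ) + 1 + ((r:ℝ)+1) * xi p - ga p := by
  unfold xR
  rw [if_neg h]

lemma xR_ge (r k : ℕ) (hp : 1 ≤ p) (hr : r < p) (hkq : k < q) :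
    (k:ℝ) + 1 + ((r:ℝ)+1) * xi p - ga p ≤ xR m p q r k := by
  unfold xR
  split
  · have h1 := ga_pos (p := p) hp
    have h2 : ((r:ℝ)+1) * xi p ≤ 1/4 := by
      have := xi_le hp (r+1) (by omega)
      push_cast at this ⊢; linarith
    have h3 : (k:ℝ) + 1 ≤ q := by exact_mod_cast hkq
    linarith
  · push_cast; linarith

lemma xR_le (r k : ℕ) (hp : 1 ≤ p) (hr : r < p) (hk : k < n m q r) :
    xR m p q r k ≤ (q:ℝ) + 1 := by
  unfold xR
  split
  · linarith
  · have h1 := ga_pos (p := p) hp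
    have h2 : ((r:ℝ)+1) * xi p ≤ 1/4 := by
      have := xi_le hp (r+1) (by omega)
      push_cast at this ⊢; linarith
    have h3 : (k:ℝ) + 1 ≤ q := by
      have := (n_elim hk).1
      exact_mod_cast this
    linarith

lemma yB_le (r k : ℕ) : yB q r k ≤ (r:ℝ) := by
  unfold yB
  split
  · rename_i h; subst h; simp
  · have := Ga_pos (q := q)
    nlinarith [Nat.cast_nonneg (α := ℝ) k]

lemma yB_ge (r k : ℕ) (hk : k ≤ q + 1) : (r:ℝ) - 1/8 ≤ yB q r k := by
  unfold yB
  split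
  · rename_i h; subst h; norm_num
  · have h2 : ((k:ℝ)+2) * Ga q ≤ 1/8 := by
      apply Ga_le
      · positivity
      · have : (k:ℝ) ≤ (q:ℝ) + 1 := by exact_mod_cast hk
        linarith
    linarith

lemma yB_nonneg (r k : ℕ) (hk : k ≤ q + 1) : 0 ≤ yB q r k := by
  rcases Nat.eq_zero_or_pos r with h | h
  · subst h; unfold yB; simp
  · have := yB_ge (q := q) r k hk
    have : (1:ℝ) ≤ r := by exact_mod_cast h
    have := yB_ge (q := q) r k hk
    linarith

lemma yB_eq (r k : ℕ) (h : r ≠ 0) : yB q r k = (r:ℝ) - ((k:ℝ)+2) * Ga q := by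
  unfold yB
  rw [if_neg h]

lemma yT_ge (r k : ℕ) (hk : k ≤ q) : (r:ℝ) + 1 - 1/8 ≤ yT m p q r k := by
  unfold yT
  split
  · rename_i h
    have : ((r:ℝ)+1) = p := by exact_mod_cast h
    linarith
  · split
    · have h2 : ((k:ℝ)+2) * Ga q + Ga q / 2 ≤ 1/8 := by
        have : ((k:ℝ)+2+1/2) * Ga q ≤ 1/8 := by
          apply Ga_le
          · positivity
          · have : (k:ℝ) ≤ (q:ℝ) := by exact_mod_cast hk
            linarith
        linarith [this, mul_comm ((k:ℝ)+2+1/2) (Ga q)]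
      push_cast
      nlinarith [h2]
    · have := Ga_eq (q := q)
      push_cast
      linarith

lemma yT_le (r k : ℕ) (hr : r < p) : yT m p q r k ≤ (r:ℝ) + 1 := by
  unfold yT
  have hG := Ga_pos (q := q)
  split
  · rename_i h
    have : ((r:ℝ)+1) = p := by exact_mod_cast h
    linarith
  · split
    · push_cast
      nlinarith [Nat.cast_nonneg (α := ℝ) k]
    · push_cast
      nlinarith [Nat.cast_nonneg (α := ℝ) q]

lemma yT_eq_des (r k : ℕ) (h1 : r + 1 ≠ p) (h2 : k < n m q (r+1)) :
    yT m p q r k = (r:ℝ) + 1 - ((k:ℝ)+2) * Ga q - Ga q / 2 := by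
  unfold yT
  rw [if_neg h1, if_pos h2]

end CoordFacts

section ZbFacts

variable {m p q : ℕ}

lemma xL_lt_xR (r k : ℕ) (hp : 1 ≤ p) (hr : r < p) (hk : k < n m q r) :
    xL p r k < xR m p q r k := by
  have h1 := xL_le (p := p) r k hp
  have h2 := xR_ge (m := m) (p := p) (q := q) r k hp hr (n_elim hk).1
  have h3 := ga_pos (p := p) hp
  have h4 : ga p ≤ 1/32 := by
    have := ga_eq (p := p)
    have := xi_le hp 1 hp
    nlinarith
  linarith

lemma yB_lt_yT (r k : ℕ) (hr : r < p) (hk : k ≤ q) :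
    yB q r k < yT m p q r k := by
  have h1 := yB_le (q := q) r k
  have h2 := yT_ge (m := m) (p := p) (q := q) r k hk
  linarith

lemma Zb_rect (r k : ℕ) (hp : 1 ≤ p) (hr : r < p) (hk : k < n m q r) :
    IsRect (Zb m p q r k) :=
  ⟨_, _, _, _, xL_lt_xR r k hp hr hk,
    yB_lt_yT r k hr (le_of_lt (lt_of_lt_of_le hk (n_le r))), rfl⟩

lemma Zb_sub_C (r k : ℕ) (hp : 1 ≤ p) (hr : r < p) (hk : k < n m q r) :
    Zb m p q r k ⊆ Icc (0:ℝ) ((q:ℝ)+1) ×ˢ Icc (0:ℝ) (p:ℝ) := by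
  have e1 := xL_nonneg (p := p) r k hp
  have e2 := xR_le (m := m) (p := p) (q := q) r k hp hr hk
  have e3 := yB_nonneg (q := q) r k (by have := (n_elim hk).1; omega)
  have e4 := yT_le (m := m) (p := p) (q := q) r k hr
  have e5 : (r:ℝ) + 1 ≤ p := by exact_mod_cast hr
  rintro ⟨x, y⟩ ⟨⟨hx1, hx2⟩, hy1, hy2⟩
  exact ⟨⟨le_trans e1 hx1, le_trans hx2 e2⟩,
    le_trans e3 hy1, le_trans hy2 (le_trans e4 e5)⟩

/-- sufficient conditions for interior membership in a brick -/
lemma mem_int_Zb (r k : ℕ) (hp : 1 ≤ p) (hr : r < p) {z : ℝ × ℝ}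
    (h1 : (k:ℝ) + ((r:ℝ)+1) * xi p + ga p < z.1)
    (h2 : z.1 < (k:ℝ) + 1 + ((r:ℝ)+1) * xi p - ga p)
    (h3 : yB q r k < z.2) (h4 : z.2 < yT m p q r k) :
    z ∈ interior (Zb m p q r k) := by
  unfold Zb
  rw [interior_prod_eq, interior_Icc, interior_Icc]
  refine ⟨⟨?_, ?_⟩, h3, h4⟩
  · calc xL p r k ≤ _ := xL_le r k hp
      _ < z.1 := h1
  · by_cases hl : k + 1 = n m q r
    · calc z.1 < _ := h2
        _ ≤ xR m p q r k := by
            unfold xR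
            rw [if_pos hl]
            have h3' : (k:ℝ) + 1 ≤ q := by
              have : k + 1 ≤ n m q r := le_of_eq hl
              have := le_trans this (n_le r)
              exact_mod_cast this
            have h4' : ((r:ℝ)+1) * xi p ≤ 1/4 := by
              have := xi_le hp (r+1) (by omega)
              push_cast at this ⊢
              linarith
            have := ga_pos (p := p) hp
            linarith
    · rw [xR_eq r k hl]
      exact h2

lemma disjoint_boxes_x {a b c d a' b' c' d' : ℝ} (h : b < a') :
    Disjoint (Icc a b ×ˢ Icc c d) (Icc a' b' ×ˢ Icc c' d') := by
  rw [Set.disjoint_left]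
  rintro ⟨x, y⟩ ⟨⟨h1, h2⟩, -⟩ ⟨⟨h3, -⟩, -⟩
  linarith

lemma disjoint_boxes_y {a b c d a' b' c' d' : ℝ} (h : d < c') :
    Disjoint (Icc a b ×ˢ Icc c d) (Icc a' b' ×ˢ Icc c' d') := by
  rw [Set.disjoint_left]
  rintro ⟨x, y⟩ ⟨-, h1, h2⟩ ⟨-, h3, -⟩
  linarith

lemma Zb_disj_aux (r k r' k' : ℕ) (hp : 1 ≤ p) (hq : 1 ≤ q)
    (hr : r < p) (hk : k < n m q r) (hr' : r' < p) (hk' : k' < n m q r')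
    (hlt : r < r' ∨ (r = r' ∧ k < k')) :
    Disjoint (Zb m p q r k) (Zb m p q r' k') := by
  have hgp := ga_pos (p := p) hp
  have hGp := Ga_pos (q := q)
  have hxip := xi_pos (p := p) hp
  rcases hlt with hlt | ⟨rfl, hkk⟩
  · -- r < r'
    rcases Nat.lt_or_ge r' (r + 2) with h2 | h2
    · -- r' = r + 1
      have hr1 : r' = r + 1 := by omega
      subst hr1
      rcases Nat.lt_or_ge k k' with hkk | hkk
      · -- x-separated
        apply disjoint_boxes_x
        have hnl : k + 1 ≠ n m q r := by
          have h1 : k' < n m q r := lt_of_lt_of_le hk' (n_mono (by omega))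
          omega
        rw [xR_eq r k hnl, xL_eq (r+1) k' (by omega)]
        have : (k:ℝ) + 1 ≤ (k':ℝ) := by exact_mod_cast hkk
        push_cast
        nlinarith
      · -- y-separated
        apply disjoint_boxes_y
        rw [yB_eq (r+1) k' (by omega)]
        have hk'q : (k':ℝ) ≤ q := by
          have := (n_elim hk').1; push_cast; exact_mod_cast Nat.le_of_lt this
        have hkk' : (k':ℝ) ≤ (k:ℝ) := by exact_mod_cast hkk
        unfold yT
        rw [if_neg (by omega : ¬ (r + 1 = p))]
        split
        · push_cast
          nlinarith
        · push_cast
          have := Ga_eq (q := q)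
          nlinarith
    · -- r' ≥ r + 2 : y-separated
      apply disjoint_boxes_y
      have e1 := yT_le (m := m) (p := p) (q := q) r k hr
      have e2 := yB_ge (q := q) r' k' (by have := (n_elim hk').1; omega)
      have h3 : (r:ℝ) + 2 ≤ (r':ℝ) := by exact_mod_cast h2
      linarith
  · -- same row
    apply disjoint_boxes_x
    have hnl : k + 1 ≠ n m q r := by omega
    rw [xR_eq r k hnl, xL_eq r k' (by omega)]
    have : (k:ℝ) + 1 ≤ (k':ℝ) := by exact_mod_cast hkk
    nlinarith

lemma Zb_disj (r k r' k' : ℕ) (hp : 1 ≤ p) (hq : 1 ≤ q)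
    (hr : r < p) (hk : k < n m q r) (hr' : r' < p) (hk' : k' < n m q r')
    (hne : (r, k) ≠ (r', k')) :
    Disjoint (Zb m p q r k) (Zb m p q r' k') := by
  rcases Nat.lt_trichotomy r r' with h | h | h
  · exact Zb_disj_aux r k r' k' hp hq hr hk hr' hk' (Or.inl h)
  · subst h
    rcases Nat.lt_trichotomy k k' with h | h | h
    · exact Zb_disj_aux r k r k' hp hq hr hk hr' hk' (Or.inr ⟨rfl, h⟩)
    · exact absurd (by rw [h]) hne
    · exact (Zb_disj_aux r k' r k hp hq hr' hk' hr hk (Or.inr ⟨rfl, h⟩)).symm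
  · exact (Zb_disj_aux r' k' r k hp hq hr' hk' hr hk (Or.inl h)).symm

lemma block4 {a b c d : ℝ} {u v w t z : ℝ × ℝ}
    (hu : u ∈ Icc a b ×ˢ Icc c d) (hv : v ∈ Icc a b ×ˢ Icc c d)
    (hw : w ∈ Icc a b ×ˢ Icc c d) (ht : t ∈ Icc a b ×ˢ Icc c d)
    (hx1 : u.1 < z.1) (hx2 : z.1 < v.1) (hy1 : w.2 < z.2) (hy2 : z.2 < t.2) :
    z ∈ interior (Icc a b ×ˢ Icc c d) := by
  rw [interior_prod_eq, interior_Icc, interior_Icc]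
  obtain ⟨⟨hu1, hu2⟩, -, -⟩ := hu
  obtain ⟨⟨-, hv2⟩, -, -⟩ := hv
  obtain ⟨-, hw3, -⟩ := hw
  obtain ⟨-, -, ht4⟩ := ht
  exact ⟨⟨lt_of_le_of_lt hu1 hx1, lt_of_lt_of_le hx2 hv2⟩,
    lt_of_le_of_lt hw3 hy1, lt_of_lt_of_le hy2 ht4⟩

lemma pL_mem {m p q : ℕ} (r k : ℕ) (hp : 1 ≤ p) (hr : r < p) (hk : k < n m q r) :
    (xL p r k, yB q r k) ∈ Zb m p q r k :=
  ⟨⟨le_refl _, (xL_lt_xR r k hp hr hk).le⟩, le_refl _,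
    (yB_lt_yT r k hr (le_of_lt (lt_of_lt_of_le hk (n_le r)))).le⟩

lemma pR_mem {m p q : ℕ} (r k : ℕ) (hp : 1 ≤ p) (hr : r < p) (hk : k < n m q r) :
    (xR m p q r k, yT m p q r k) ∈ Zb m p q r k :=
  ⟨⟨(xL_lt_xR r k hp hr hk).le, le_refl _⟩,
    (yB_lt_yT r k hr (le_of_lt (lt_of_lt_of_le hk (n_le r)))).le, le_refl _⟩

section Clash

variable {m p q : ℕ}

/-- The key geometric lemma: if a rectangle contains the probe point `P r k`
and also contains the brick `(ρ,κ)`, then its interior meets the interior of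
some other brick. -/
lemma probe_clash (hp : 1 ≤ p) (hq : 1 ≤ q)
    (r k : ℕ) (hr1 : 1 ≤ r) (hr : r < p) (hk1 : 1 ≤ k) (hk : k < n m q r)
    (ρ κ : ℕ) (hρ : ρ < p) (hκ : κ < n m q ρ) :
    ∃ ρl κl : ℕ, ρl < p ∧ κl < n m q ρl ∧ (ρl, κl) ≠ (ρ, κ) ∧
      ∀ aK bK cK dK : ℝ, Zb m p q ρ κ ⊆ Icc aK bK ×ˢ Icc cK dK →
        P p q r k ∈ Icc aK bK ×ˢ Icc cK dK →
        ∃ z, z ∈ interior (Icc aK bK ×ˢ Icc cK dK) ∧ z ∈ interior (Zb m p q ρl κl) := by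
  obtain ⟨kk, rfl⟩ : ∃ kk, k = kk + 1 := ⟨k - 1, by omega⟩
  obtain ⟨rr, rfl⟩ : ∃ rr, r = rr + 1 := ⟨r - 1, by omega⟩
  have hxp := xi_pos (p := p) hp
  have hgp := ga_pos (p := p) hp
  have hGp := Ga_pos (q := q)
  have hge : 8 * ga p = xi p := ga_eq
  have hΓ8 : ((q:ℝ)+3) * Ga q = 1/8 := Ga_eq
  have hΓs : Ga q ≤ 1/32 := by
    have hq1 : (1:ℝ) ≤ q := by exact_mod_cast hq
    nlinarith [mul_nonneg (by linarith : (0:ℝ) ≤ (q:ℝ) - 1) hGp.le]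
  have hxs : xi p ≤ 1/4 := by
    have := xi_le hp 1 hp
    push_cast at this
    linarith
  have hgs : ga p ≤ 1/32 := by linarith
  have hx4 : ((rr:ℝ)+2) * xi p ≤ 1/4 := by
    have := xi_le hp (rr+2) (by omega)
    push_cast at this
    linarith
  have hx4ρ : ((ρ:ℝ)+1) * xi p ≤ 1/4 := by
    have := xi_le hp (ρ+1) (by omega)
    push_cast at this
    linarith
  have hkq : (kk:ℝ) + 2 ≤ q := by exact_mod_cast (n_elim hk).1
  have hκq : (κ:ℝ) + 1 ≤ q := by exact_mod_cast (n_elim hκ).1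
  have hkΓ : ((kk:ℝ)+3) * Ga q ≤ 1/8 := Ga_le _ (by positivity) (by linarith)
  have hκΓ : ((κ:ℝ)+2) * Ga q ≤ 1/8 := Ga_le _ (by positivity) (by linarith)
  have hPf : (P p q (rr+1) (kk+1)).1 = (kk:ℝ) + 1 + ((rr:ℝ)+2) * xi p - 2 * ga p := by
    unfold P; push_cast; ring
  have hPs : (P p q (rr+1) (kk+1)).2 = (rr:ℝ) + 1 - ((kk:ℝ)+3) * Ga q + Ga q / 4 := by
    unfold P; push_cast; ring
  have hnrr : n m q (rr+1) ≤ n m q rr := n_mono (by omega)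
  have hnq : n m q (rr+1) ≤ q := n_le _
  have hkk0 : (0:ℝ) ≤ (kk:ℝ) := Nat.cast_nonneg kk
  have hrr0 : (0:ℝ) ≤ (rr:ℝ) := Nat.cast_nonneg rr
  have hkΓ0 : 0 ≤ ((kk:ℝ)+2) * Ga q := by positivity
  have hkΓ0' : 0 ≤ ((kk:ℝ)+3) * Ga q := by positivity
  have hκΓ0 : 0 ≤ ((κ:ℝ)+2) * Ga q := by positivity
  have hxr0 : 0 ≤ ((rr:ℝ)+2) * xi p := by positivity
  have hxρ0 : 0 ≤ ((ρ:ℝ)+1) * xi p := by positivity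
  rcases Nat.lt_trichotomy ρ (rr+1) with hρr | hρr | hρr
  · -- ρ ≤ rr
    by_cases hρrr : ρ = rr
    · obtain rfl := hρrr.symm
      have hrrp : rr < p := by omega
      have hs'' : kk + 1 < n m q rr := lt_of_lt_of_le hk hnrr
      rcases Nat.lt_trichotomy κ (kk+1) with hκk | hκk | hκk
      · -- case 5 : row below, κ ≤ kk
        refine ⟨rr, kk+1, hrrp, hs'',
          by simp only [ne_eq, Prod.mk.injEq, not_and]; omega, ?_⟩
        intro aK bK cK dK hZK hPK
        have hcx : (κ:ℝ) + 1 ≤ (kk:ℝ) + 1 := by exact_mod_cast hκk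
        refine ⟨((kk:ℝ) + 1 + ((rr:ℝ)+1) * xi p + 2 * ga p, (rr:ℝ) + Ga q), ?_, ?_⟩
        · have exR := xR_eq (m := m) (p := p) (q := q) rr κ
            (by have := (n_elim hκ).2; omega)
          have eyB := yB_le (q := q) rr κ
          push_cast at exR eyB
          apply block4 (hZK (pR_mem rr κ hp hrrp hκ)) hPK
            (hZK (pL_mem rr κ hp hrrp hκ)) hPK
          · dsimp only; rw [exR]; linarith
          · rw [hPf]; dsimp only; linarith
          · dsimp only; linarith
          · rw [hPs]; dsimp only; linarith
        · apply mem_int_Zb rr (kk+1) hp hrrp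
          · dsimp only; push_cast; linarith
          · dsimp only; push_cast; linarith
          · have := yB_le (q := q) rr (kk+1)
            push_cast at this; dsimp only; linarith
          · rw [yT_eq_des rr (kk+1) (by omega) (by omega : kk+1 < n m q (rr+1))]
            dsimp only; push_cast; linarith
      · -- case 6 : j = s''
        subst hκk
        refine ⟨rr+1, kk+1, hr, hk,
          by simp only [ne_eq, Prod.mk.injEq, not_and]; omega, ?_⟩
        intro aK bK cK dK hZK hPK
        refine ⟨((kk:ℝ) + 1 + ((rr:ℝ)+2) * xi p + 2 * ga p,
          ((rr:ℝ)+1) - ((kk:ℝ)+3) * Ga q + Ga q / 8), ?_, ?_⟩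
        · have exR := xR_ge (m := m) (p := p) (q := q) rr (kk+1) hp hrrp (by omega)
          have eyB := yB_le (q := q) rr (kk+1)
          push_cast at exR eyB
          apply block4 hPK (hZK (pR_mem rr (kk+1) hp hrrp hκ))
            (hZK (pL_mem rr (kk+1) hp hrrp hκ)) hPK
          · rw [hPf]; dsimp only; linarith
          · dsimp only; linarith
          · dsimp only; linarith
          · rw [hPs]; dsimp only; linarith
        · apply mem_int_Zb (rr+1) (kk+1) hp hr
          · dsimp only; push_cast; linarith
          · dsimp only; push_cast; linarith
          · rw [yB_eq (rr+1) (kk+1) (by omega)]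
            dsimp only; push_cast; linarith
          · have := yT_ge (m := m) (p := p) (q := q) (rr+1) (kk+1) (by omega)
            push_cast at this; dsimp only; linarith
      · -- case 7 : row below, κ ≥ kk+2
        refine ⟨rr, kk+1, hrrp, hs'',
          by simp only [ne_eq, Prod.mk.injEq, not_and]; omega, ?_⟩
        intro aK bK cK dK hZK hPK
        have hcx : (kk:ℝ) + 2 ≤ (κ:ℝ) := by exact_mod_cast hκk
        refine ⟨((kk:ℝ) + 1 + ((rr:ℝ)+2) * xi p + 2 * ga p,
          ((rr:ℝ)+1) - ((kk:ℝ)+3) * Ga q - 3 * Ga q / 4), ?_, ?_⟩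
        · have exL := xL_eq (p := p) rr κ (by omega)
          have eyB := yB_le (q := q) rr κ
          push_cast at exL eyB
          apply block4 hPK (hZK (pL_mem rr κ hp hrrp hκ))
            (hZK (pL_mem rr κ hp hrrp hκ)) hPK
          · rw [hPf]; dsimp only; linarith
          · dsimp only; rw [exL]; linarith
          · dsimp only; linarith
          · rw [hPs]; dsimp only; linarith
        · apply mem_int_Zb rr (kk+1) hp hrrp
          · dsimp only; push_cast; linarith
          · dsimp only; push_cast; linarith
          · have := yB_le (q := q) rr (kk+1)
            push_cast at this; dsimp only; linarith
          · rw [yT_eq_des rr (kk+1) (by omega) (by omega : kk+1 < n m q (rr+1))]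
            dsimp only; push_cast; linarith
    · -- case 8 : ρ ≤ rr - 1
      have hρrr1 : ρ + 1 ≤ rr := by omega
      have hcρ : (ρ:ℝ) + 1 ≤ (rr:ℝ) := by exact_mod_cast hρrr1
      have hrrp : rr < p := by omega
      have hs'' : kk + 1 < n m q rr := lt_of_lt_of_le hk hnrr
      refine ⟨rr, kk+1, hrrp, hs'',
        by simp only [ne_eq, Prod.mk.injEq, not_and]; omega, ?_⟩
      intro aK bK cK dK hZK hPK
      have heyB := yB_le (q := q) ρ κ
      have hint : ∀ z : ℝ × ℝ, z.2 = (rr:ℝ) + Ga q →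
          ((kk:ℝ) + 1 + ((rr:ℝ)+1) * xi p + ga p < z.1) →
          (z.1 < (kk:ℝ) + 2 + ((rr:ℝ)+1) * xi p - ga p) →
          z ∈ interior (Zb m p q rr (kk+1)) := by
        intro z hz2 hz1 hz1'
        apply mem_int_Zb rr (kk+1) hp hrrp
        · push_cast; linarith
        · push_cast; linarith
        · have := yB_le (q := q) rr (kk+1)
          rw [hz2]; linarith
        · rw [yT_eq_des rr (kk+1) (by omega) (by omega : kk+1 < n m q (rr+1)), hz2]
          push_cast; linarith
      rcases Nat.lt_or_ge κ (kk+1) with hcc | hcc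
      · -- κ ≤ kk
        have hcκ : (κ:ℝ) ≤ (kk:ℝ) := by exact_mod_cast Nat.lt_succ_iff.mp hcc
        refine ⟨((kk:ℝ) + 1 + ((rr:ℝ)+2) * xi p - 5 * ga p / 2, (rr:ℝ) + Ga q), ?_, ?_⟩
        · have exL := xL_le (p := p) ρ κ hp
          push_cast at exL
          apply block4 (hZK (pL_mem ρ κ hp hρ hκ)) hPK
            (hZK (pL_mem ρ κ hp hρ hκ)) hPK
          · dsimp only; linarith
          · rw [hPf]; dsimp only; linarith
          · dsimp only; linarith
          · rw [hPs]; dsimp only; linarith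
        · apply hint _ rfl
          · dsimp only; linarith
          · dsimp only; linarith
      · -- κ ≥ kk+1
        have hcκ : (kk:ℝ) + 1 ≤ (κ:ℝ) := by exact_mod_cast hcc
        refine ⟨((kk:ℝ) + 1 + ((rr:ℝ)+2) * xi p - 3 * ga p / 2, (rr:ℝ) + Ga q), ?_, ?_⟩
        · have exR := xR_ge (m := m) (p := p) (q := q) ρ κ hp hρ (n_elim hκ).1
          push_cast at exR
          apply block4 hPK (hZK (pR_mem ρ κ hp hρ hκ))
            (hZK (pL_mem ρ κ hp hρ hκ)) hPK
          · rw [hPf]; dsimp only; linarith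
          · dsimp only; linarith
          · dsimp only; linarith
          · rw [hPs]; dsimp only; linarith
        · apply hint _ rfl
          · dsimp only; linarith
          · dsimp only; linarith
  · -- same row
    subst hρr
    rcases Nat.lt_trichotomy κ kk with hκk | hκk | hκk
    · -- case 3 : κ ≤ kk - 1
      refine ⟨rr+1, kk, hr, lt_of_le_of_lt (Nat.le_succ kk) hk,
        by simp only [ne_eq, Prod.mk.injEq, not_and]; omega, ?_⟩
      intro aK bK cK dK hZK hPK
      have hcx : (κ:ℝ) + 1 ≤ (kk:ℝ) := by exact_mod_cast hκk
      refine ⟨((kk:ℝ) + ((rr:ℝ)+2) * xi p + 2 * ga p,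
        ((rr:ℝ)+1) - ((kk:ℝ)+2) * Ga q + Ga q / 8), ?_, ?_⟩
      · have exR := xR_eq (m := m) (p := p) (q := q) (rr+1) κ
          (by have := (n_elim hk).2; have := (n_elim hκ).2; omega)
        have eyT := yT_ge (m := m) (p := p) (q := q) (rr+1) κ (by omega)
        push_cast at exR eyT
        apply block4 (hZK (pR_mem (rr+1) κ hp hr hκ)) hPK
          hPK (hZK (pR_mem (rr+1) κ hp hr hκ))
        · dsimp only; rw [exR]; linarith
        · rw [hPf]; dsimp only; linarith
        · rw [hPs]; dsimp only; linarith
        · dsimp only; linarith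
      · apply mem_int_Zb (rr+1) kk hp hr
        · dsimp only; push_cast; linarith
        · dsimp only; push_cast; linarith
        · rw [yB_eq (rr+1) kk (by omega)]
          push_cast; linarith
        · have := yT_ge (m := m) (p := p) (q := q) (rr+1) kk (by omega)
          push_cast at this; linarith
    · -- case 1 : j = i
      obtain rfl := hκk.symm
      refine ⟨rr, kk, by omega, lt_of_le_of_lt (Nat.le_succ kk) (lt_of_lt_of_le hk hnrr),
        by simp only [ne_eq, Prod.mk.injEq, not_and]; omega, ?_⟩
      intro aK bK cK dK hZK hPK
      refine ⟨((kk:ℝ) + ((rr:ℝ)+2) * xi p + 2 * ga p,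
        ((rr:ℝ)+1) - ((kk:ℝ)+2) * Ga q - 5 * Ga q / 8), ?_, ?_⟩
      · have exL := xL_le (p := p) (rr+1) kk hp
        have exR := xR_ge (m := m) (p := p) (q := q) (rr+1) kk hp hr (by omega)
        have eyT := yT_ge (m := m) (p := p) (q := q) (rr+1) kk (by omega)
        have h5 : ((rr:ℝ)+1) + 1 - 1/8 ≤ yT m p q (rr+1) kk := by
          push_cast at eyT ⊢; linarith
        push_cast at exL exR eyT
        apply block4 (hZK (pL_mem (rr+1) kk hp hr hκ)) (hZK (pR_mem (rr+1) kk hp hr hκ))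
          hPK (hZK (pR_mem (rr+1) kk hp hr hκ))
        · dsimp only
          linarith
        · dsimp only
          linarith
        · rw [hPs]
          dsimp only
          linarith
        · dsimp only
          linarith
      · apply mem_int_Zb rr kk hp (by omega)
        · dsimp only; push_cast
          linarith
        · dsimp only; push_cast
          linarith
        · have := yB_le (q := q) rr kk
          push_cast at this
          dsimp only
          linarith
        · rw [yT_eq_des rr kk (by omega) (by omega : kk < n m q (rr+1))]
          dsimp only
          push_cast
          linarith
    · -- cases 2 and 4 : κ = kk+1 or κ ≥ kk+2
      rcases Nat.lt_or_ge κ (kk+2) with hκk2 | hκk2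
      · -- case 2 : j = rn
        have hce : κ = kk + 1 := by omega
        subst hce
        refine ⟨rr+1, kk, hr, lt_of_le_of_lt (Nat.le_succ kk) hk,
          by simp only [ne_eq, Prod.mk.injEq, not_and]; omega, ?_⟩
        intro aK bK cK dK hZK hPK
        refine ⟨((kk:ℝ) + 1 + ((rr:ℝ)+2) * xi p - 3 * ga p / 2,
          ((rr:ℝ)+1) - ((kk:ℝ)+2) * Ga q + Ga q / 8), ?_, ?_⟩
        · have exL := xL_eq (p := p) (rr+1) (kk+1) (by omega)
          have eyB := yB_eq (q := q) (rr+1) (kk+1) (by omega)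
          have eyT := yT_ge (m := m) (p := p) (q := q) (rr+1) (kk+1) (by omega)
          push_cast at exL eyB eyT
          apply block4 hPK (hZK (pL_mem (rr+1) (kk+1) hp hr hκ))
            (hZK (pL_mem (rr+1) (kk+1) hp hr hκ)) (hZK (pR_mem (rr+1) (kk+1) hp hr hκ))
          · rw [hPf]; dsimp only; linarith
          · dsimp only; rw [exL]; linarith
          · dsimp only; rw [eyB]; linarith
          · dsimp only; linarith
        · apply mem_int_Zb (rr+1) kk hp hr
          · dsimp only; push_cast; linarith
          · dsimp only; push_cast; linarith
          · rw [yB_eq (rr+1) kk (by omega)]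
            dsimp only; push_cast; linarith
          · have := yT_ge (m := m) (p := p) (q := q) (rr+1) kk (by omega)
            push_cast at this; dsimp only; linarith
      · -- case 4 : κ ≥ kk+2
        refine ⟨rr+1, kk+1, hr, hk,
          by simp only [ne_eq, Prod.mk.injEq, not_and]; omega, ?_⟩
        intro aK bK cK dK hZK hPK
        have hcast : ((kk:ℝ)+4) ≤ ((κ:ℝ)+2) := by
          have : ((kk:ℝ)+2) ≤ (κ:ℝ) := by exact_mod_cast hκk2
          linarith
        have hmul := mul_le_mul_of_nonneg_right hcast hGp.le
        have hcx : ((kk:ℝ)+2) ≤ (κ:ℝ) := by exact_mod_cast hκk2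
        refine ⟨((kk:ℝ) + 1 + ((rr:ℝ)+2) * xi p + 2 * ga p,
          ((rr:ℝ)+1) - ((kk:ℝ)+3) * Ga q + Ga q / 8), ?_, ?_⟩
        · have exL := xL_eq (p := p) (rr+1) κ (by omega)
          have eyB := yB_eq (q := q) (rr+1) κ (by omega)
          have eyT := yT_ge (m := m) (p := p) (q := q) (rr+1) κ (by omega)
          push_cast at exL eyB eyT
          apply block4 hPK (hZK (pL_mem (rr+1) κ hp hr hκ))
            (hZK (pL_mem (rr+1) κ hp hr hκ)) (hZK (pR_mem (rr+1) κ hp hr hκ))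
          · rw [hPf]; dsimp only; linarith
          · dsimp only; rw [exL]; linarith
          · dsimp only; rw [eyB]; linarith
          · dsimp only; linarith
        · apply mem_int_Zb (rr+1) (kk+1) hp hr
          · dsimp only; push_cast; linarith
          · dsimp only; push_cast; linarith
          · rw [yB_eq (rr+1) (kk+1) (by omega)]
            dsimp only; push_cast; linarith
          · have := yT_ge (m := m) (p := p) (q := q) (rr+1) (kk+1) (by omega)
            push_cast at this; dsimp only; linarith
  · -- case 9 : ρ ≥ rr+2
    have hρ2 : rr + 2 ≤ ρ := hρr
    have hcρ : (rr:ℝ) + 2 ≤ (ρ:ℝ) := by exact_mod_cast hρ2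
    refine ⟨rr+1, kk, hr, lt_of_le_of_lt (Nat.le_succ kk) hk,
      by simp only [ne_eq, Prod.mk.injEq, not_and]; omega, ?_⟩
    intro aK bK cK dK hZK hPK
    have heyB := yB_ge (q := q) ρ κ (by have := (n_elim hκ).1; omega)
    have hint : ∀ z : ℝ × ℝ, z.2 = (rr:ℝ) + 3/2 →
        ((kk:ℝ) + ((rr:ℝ)+2) * xi p + ga p < z.1) →
        (z.1 < (kk:ℝ) + 1 + ((rr:ℝ)+2) * xi p - ga p) →
        z ∈ interior (Zb m p q (rr+1) kk) := by
      intro z hz2 hz1 hz1'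
      apply mem_int_Zb (rr+1) kk hp hr
      · push_cast; linarith
      · push_cast; linarith
      · have := yB_le (q := q) (rr+1) kk
        rw [hz2]; push_cast at this; linarith
      · have := yT_ge (m := m) (p := p) (q := q) (rr+1) kk (by omega)
        rw [hz2]; push_cast at this; linarith
    rcases Nat.lt_or_ge κ (kk+1) with hcc | hcc
    · -- κ ≤ kk
      have hcκ : (κ:ℝ) ≤ (kk:ℝ) := by exact_mod_cast Nat.lt_succ_iff.mp hcc
      refine ⟨((kk:ℝ) + 1 + ((rr:ℝ)+2) * xi p - 5 * ga p / 2, (rr:ℝ) + 3/2), ?_, ?_⟩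
      · have exL := xL_le (p := p) ρ κ hp
        push_cast at exL
        apply block4 (hZK (pL_mem ρ κ hp hρ hκ)) hPK
          hPK (hZK (pL_mem ρ κ hp hρ hκ))
        · dsimp only; linarith
        · rw [hPf]; dsimp only; linarith
        · rw [hPs]; dsimp only; linarith
        · dsimp only; linarith
      · apply hint _ rfl
        · dsimp only; linarith
        · dsimp only; linarith
    · -- κ ≥ kk+1
      have hcκ : (kk:ℝ) + 1 ≤ (κ:ℝ) := by exact_mod_cast hcc
      have hmul : ((rr:ℝ)+2) * xi p ≤ ((ρ:ℝ)+1) * xi p := by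
        apply mul_le_mul_of_nonneg_right _ hxp.le
        linarith
      refine ⟨((kk:ℝ) + 1 + ((rr:ℝ)+2) * xi p - 3 * ga p / 2, (rr:ℝ) + 3/2), ?_, ?_⟩
      · have exL := xL_eq (p := p) ρ κ (by omega)
        push_cast at exL
        apply block4 hPK (hZK (pL_mem ρ κ hp hρ hκ))
          hPK (hZK (pL_mem ρ κ hp hρ hκ))
        · rw [hPf]; dsimp only; linarith
        · dsimp only; rw [exL]; linarith
        · rw [hPs]; dsimp only; linarith
        · dsimp only; linarith
      · apply hint _ rfl
        · dsimp only; linarith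
        · dsimp only; linarith

/-- two distinct probe points cannot lie in a common rectangle avoiding all bricks -/
lemma probe_pair_clash (hp : 1 ≤ p) (hq : 1 ≤ q)
    (r k : ℕ) (hr1 : 1 ≤ r) (hr : r < p) (hk1 : 1 ≤ k) (hk : k < n m q r)
    (r' k' : ℕ) (hr1' : 1 ≤ r') (hr' : r' < p) (hk1' : 1 ≤ k') (hk' : k' < n m q r')
    (hlt : r < r' ∨ (r = r' ∧ k < k')) :
    ∃ ρl κl : ℕ, ρl < p ∧ κl < n m q ρl ∧
      ∀ aK bK cK dK : ℝ, P p q r k ∈ Icc aK bK ×ˢ Icc cK dK →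
        P p q r' k' ∈ Icc aK bK ×ˢ Icc cK dK →
        ∃ z, z ∈ interior (Icc aK bK ×ˢ Icc cK dK) ∧ z ∈ interior (Zb m p q ρl κl) := by
  obtain ⟨kk, rfl⟩ : ∃ kk, k = kk + 1 := ⟨k - 1, by omega⟩
  obtain ⟨rr, rfl⟩ : ∃ rr, r = rr + 1 := ⟨r - 1, by omega⟩
  obtain ⟨kk', rfl⟩ : ∃ kk2, k' = kk2 + 1 := ⟨k' - 1, by omega⟩
  obtain ⟨rr', rfl⟩ : ∃ rr2, r' = rr2 + 1 := ⟨r' - 1, by omega⟩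
  have hxp := xi_pos (p := p) hp
  have hgp := ga_pos (p := p) hp
  have hGp := Ga_pos (q := q)
  have hge : 8 * ga p = xi p := ga_eq
  have hΓ8 : ((q:ℝ)+3) * Ga q = 1/8 := Ga_eq
  have hΓs : Ga q ≤ 1/32 := by
    have hq1 : (1:ℝ) ≤ q := by exact_mod_cast hq
    nlinarith [mul_nonneg (by linarith : (0:ℝ) ≤ (q:ℝ) - 1) hGp.le]
  have hxs : xi p ≤ 1 / 4 := by
    have := xi_le hp 1 hp
    push_cast at this
    linarith
  have hgs : ga p ≤ 1/32 := by linarith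
  have hx4 : ((rr:ℝ)+2) * xi p ≤ 1/4 := by
    have := xi_le hp (rr+2) (by omega)
    push_cast at this
    linarith
  have hx4' : ((rr':ℝ)+2) * xi p ≤ 1/4 := by
    have := xi_le hp (rr'+2) (by omega)
    push_cast at this
    linarith
  have hkq : (kk:ℝ) + 2 ≤ q := by exact_mod_cast (n_elim hk).1
  have hkq' : (kk':ℝ) + 2 ≤ q := by exact_mod_cast (n_elim hk').1
  have hkΓ : ((kk:ℝ)+3) * Ga q ≤ 1/8 := Ga_le _ (by positivity) (by linarith)
  have hkΓ' : ((kk':ℝ)+3) * Ga q ≤ 1/8 := Ga_le _ (by positivity) (by linarith)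
  have hkΓ0 : 0 ≤ ((kk:ℝ)+3) * Ga q := by positivity
  have hkΓ0' : 0 ≤ ((kk':ℝ)+3) * Ga q := by positivity
  have hxr0 : 0 ≤ ((rr:ℝ)+2) * xi p := by positivity
  have hxr0' : 0 ≤ ((rr':ℝ)+2) * xi p := by positivity
  have hkk0 : (0:ℝ) ≤ (kk:ℝ) := Nat.cast_nonneg kk
  have hrr0 : (0:ℝ) ≤ (rr:ℝ) := Nat.cast_nonneg rr
  have hkk0' : (0:ℝ) ≤ (kk':ℝ) := Nat.cast_nonneg kk'
  have hrr0' : (0:ℝ) ≤ (rr':ℝ) := Nat.cast_nonneg rr'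
  have hPf : (P p q (rr+1) (kk+1)).1 = (kk:ℝ) + 1 + ((rr:ℝ)+2) * xi p - 2 * ga p := by
    unfold P; push_cast; ring
  have hPs : (P p q (rr+1) (kk+1)).2 = (rr:ℝ) + 1 - ((kk:ℝ)+3) * Ga q + Ga q / 4 := by
    unfold P; push_cast; ring
  have hPf' : (P p q (rr'+1) (kk'+1)).1 = (kk':ℝ) + 1 + ((rr':ℝ)+2) * xi p - 2 * ga p := by
    unfold P; push_cast; ring
  have hPs' : (P p q (rr'+1) (kk'+1)).2 = (rr':ℝ) + 1 - ((kk':ℝ)+3) * Ga q + Ga q / 4 := by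
    unfold P; push_cast; ring
  rcases hlt with hlt | ⟨heq, hklt⟩
  · -- r < r' : blocker (rr', kk'+1)
    have hrrp' : rr' < p := by omega
    have hs'' : kk' + 1 < n m q rr' := lt_of_lt_of_le hk' (n_mono (by omega))
    have hcr : (rr:ℝ) + 1 ≤ (rr':ℝ) := by exact_mod_cast (by omega : rr + 1 ≤ rr')
    refine ⟨rr', kk'+1, hrrp', hs'', ?_⟩
    intro aK bK cK dK hPK hPK'
    have hint : ∀ z : ℝ × ℝ, z.2 = (rr':ℝ) + 1 - ((kk':ℝ)+3) * Ga q - 3 * Ga q / 4 →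
        ((kk':ℝ) + 1 + ((rr':ℝ)+1) * xi p + ga p < z.1) →
        (z.1 < (kk':ℝ) + 2 + ((rr':ℝ)+1) * xi p - ga p) →
        z ∈ interior (Zb m p q rr' (kk'+1)) := by
      intro z hz2 hz1 hz1'
      apply mem_int_Zb rr' (kk'+1) hp hrrp'
      · push_cast; linarith
      · push_cast; linarith
      · have := yB_le (q := q) rr' (kk'+1)
        rw [hz2]; linarith
      · rw [yT_eq_des rr' (kk'+1) (by omega) (by omega : kk'+1 < n m q (rr'+1)), hz2]
        push_cast; linarith
    rcases Nat.lt_trichotomy kk kk' with hcc | hcc | hcc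
    · -- kk < kk' : k' ≥ k+1
      have hck : (kk:ℝ) + 1 ≤ (kk':ℝ) := by exact_mod_cast hcc
      refine ⟨((kk':ℝ) + 1 + ((rr':ℝ)+2) * xi p - 5 * ga p / 2,
        (rr':ℝ) + 1 - ((kk':ℝ)+3) * Ga q - 3 * Ga q / 4), ?_, ?_⟩
      · apply block4 hPK hPK' hPK hPK'
        · rw [hPf]; dsimp only; linarith
        · rw [hPf']; dsimp only; linarith
        · rw [hPs]; dsimp only; linarith
        · rw [hPs']; dsimp only; linarith
      · exact hint _ rfl (by dsimp only; linarith) (by dsimp only; linarith)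
    · -- kk = kk'
      subst hcc
      have hmul : ((rr:ℝ)+2) * xi p + xi p ≤ ((rr':ℝ)+2) * xi p := by
        have h1 : ((rr:ℝ)+3) ≤ ((rr':ℝ)+2) := by linarith
        nlinarith [mul_le_mul_of_nonneg_right h1 hxp.le]
      refine ⟨((kk:ℝ) + 1 + ((rr':ℝ)+2) * xi p - 5 * ga p / 2,
        (rr':ℝ) + 1 - ((kk:ℝ)+3) * Ga q - 3 * Ga q / 4), ?_, ?_⟩
      · apply block4 hPK hPK' hPK hPK'
        · rw [hPf]; dsimp only; linarith
        · rw [hPf']; dsimp only; linarith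
        · rw [hPs]; dsimp only; linarith
        · rw [hPs']; dsimp only; linarith
      · exact hint _ rfl (by dsimp only; linarith) (by dsimp only; linarith)
    · -- kk' < kk
      have hck : (kk':ℝ) + 1 ≤ (kk:ℝ) := by exact_mod_cast hcc
      refine ⟨((kk':ℝ) + 1 + ((rr':ℝ)+2) * xi p - 3 * ga p / 2,
        (rr':ℝ) + 1 - ((kk':ℝ)+3) * Ga q - 3 * Ga q / 4), ?_, ?_⟩
      · apply block4 hPK' hPK hPK hPK'
        · rw [hPf']; dsimp only; linarith
        · rw [hPf]; dsimp only; linarith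
        · rw [hPs]; dsimp only; linarith
        · rw [hPs']; dsimp only; linarith
      · exact hint _ rfl (by dsimp only; linarith) (by dsimp only; linarith)
  · -- same row
    obtain rfl : rr = rr' := by omega
    have hck : (kk:ℝ) + 1 ≤ (kk':ℝ) := by exact_mod_cast (by omega : kk + 1 ≤ kk')
    have hmulΓ : ((kk:ℝ)+4) * Ga q ≤ ((kk':ℝ)+3) * Ga q := by
      apply mul_le_mul_of_nonneg_right _ hGp.le
      linarith
    refine ⟨rr+1, kk+1, hr, hk, ?_⟩
    intro aK bK cK dK hPK hPK'
    refine ⟨((kk:ℝ) + 1 + ((rr:ℝ)+2) * xi p + 2 * ga p,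
      ((rr:ℝ)+1) - ((kk:ℝ)+3) * Ga q + Ga q / 8), ?_, ?_⟩
    · apply block4 hPK hPK' hPK' hPK
      · rw [hPf]; dsimp only; linarith
      · rw [hPf']; dsimp only; linarith
      · rw [hPs']; dsimp only; linarith
      · rw [hPs]; dsimp only; linarith
    · apply mem_int_Zb (rr+1) (kk+1) hp hr
      · dsimp only; push_cast; linarith
      · dsimp only; push_cast; linarith
      · rw [yB_eq (rr+1) (kk+1) (by omega)]
        dsimp only; push_cast; linarith
      · have := yT_ge (m := m) (p := p) (q := q) (rr+1) (kk+1)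
          (by have := n_le (m := m) (q := q) (rr+1); omega)
        push_cast at this; dsimp only; linarith

/-- probe points lie in the big rectangle -/
lemma P_mem_C (hp : 1 ≤ p) (hq : 1 ≤ q) (r k : ℕ) (hr1 : 1 ≤ r) (hr : r < p)
    (hk1 : 1 ≤ k) (hkq : k ≤ q) :
    P p q r k ∈ Icc (0:ℝ) ((q:ℝ)+1) ×ˢ Icc (0:ℝ) (p:ℝ) := by
  have hxp := xi_pos (p := p) hp
  have hgp := ga_pos (p := p) hp
  have hGp := Ga_pos (q := q)
  have hge : 8 * ga p = xi p := ga_eq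
  have hΓ8 : ((q:ℝ)+3) * Ga q = 1/8 := Ga_eq
  have hΓs : Ga q ≤ 1/32 := by
    have hq1 : (1:ℝ) ≤ q := by exact_mod_cast hq
    nlinarith [mul_nonneg (by linarith : (0:ℝ) ≤ (q:ℝ) - 1) hGp.le]
  have hxs : xi p ≤ 1 / 4 := by
    have := xi_le hp 1 hp
    push_cast at this
    linarith
  have hx4 : ((r:ℝ)+1) * xi p ≤ 1/4 := by
    have := xi_le hp (r+1) (by omega)
    push_cast at this
    linarith
  have hx40 : 0 ≤ ((r:ℝ)+1) * xi p := by positivity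
  have hkΓ : ((k:ℝ)+2) * Ga q ≤ 1/8 := by
    apply Ga_le _ (by positivity)
    have : (k:ℝ) ≤ q := by exact_mod_cast hkq
    linarith
  have hkΓ0 : 0 ≤ ((k:ℝ)+2) * Ga q := by positivity
  have hck : (1:ℝ) ≤ (k:ℝ) := by exact_mod_cast hk1
  have hckq : (k:ℝ) ≤ q := by exact_mod_cast hkq
  have hcr : (1:ℝ) ≤ (r:ℝ) := by exact_mod_cast hr1
  have hcrp : (r:ℝ) + 1 ≤ p := by exact_mod_cast hr
  unfold P
  constructor
  · constructor
    · push_cast; nlinarith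
    · push_cast; nlinarith
  · constructor
    · push_cast; nlinarith
    · push_cast; nlinarith

section Counting

variable {m p q : ℕ}

/-- decomposition of a brick index -/
lemma idx_valid (hq : 1 ≤ q) (hm2 : m ≤ q * p) (i : ℕ) (hi : i < m) :
    i / q < p ∧ i % q < n m q (i / q) := by
  have h1 : q * (i / q) + i % q = i := Nat.div_add_mod i q
  have h2 : i % q < q := Nat.mod_lt i (by omega)
  constructor
  · by_contra hcon
    push_neg at hcon
    have : q * p ≤ q * (i / q) := Nat.mul_le_mul_left q hcon
    omega
  · exact lt_n_of _ _ h2 (by omega)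

lemma enc_lt {ρ κ : ℕ} (hκ' : κ < n m q ρ) : ρ * q + κ < m := by
  have h := (n_elim hκ').2
  rw [Nat.mul_comm] at h
  omega

lemma enc_dec {q ρ κ : ℕ} (hκq : κ < q) : (ρ * q + κ) / q = ρ ∧ (ρ * q + κ) % q = κ := by
  constructor
  · rw [Nat.add_comm, Nat.add_mul_div_right _ _ (by omega : 0 < q),
      Nat.div_eq_of_lt hκq, Nat.zero_add]
  · rw [Nat.add_comm, Nat.add_mul_mod_self_right, Nat.mod_eq_of_lt hκq]

lemma sum_n (hq : 1 ≤ q) (hp : 1 ≤ p) (hm1 : q * (p-1) < m) (hm2 : m ≤ q * p) :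
    ∑ r ∈ Finset.range p, n m q r = m := by
  obtain ⟨pp, rfl⟩ : ∃ pp, p = pp + 1 := ⟨p - 1, by omega⟩
  rw [Finset.sum_range_succ]
  have hpp : q * pp < m := by simpa using hm1
  have h1 : ∀ r ∈ Finset.range pp, n m q r = q := by
    intro r hr
    rw [Finset.mem_range] at hr
    have h' : q * (r + 1) ≤ q * pp := Nat.mul_le_mul_left q (by omega)
    have h'' : q * (r + 1) = q * r + q := by ring
    unfold n
    apply min_eq_left
    omega
  rw [Finset.sum_congr rfl h1, Finset.sum_const, Finset.card_range, smul_eq_mul]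
  have h2 : n m q pp = m - q * pp := by
    unfold n
    apply min_eq_right
    have : q * (pp + 1) = q * pp + q := by ring
    omega
  rw [h2]
  have : pp * q = q * pp := Nat.mul_comm pp q
  omega

theorem count_main (m p q b : ℕ) (hp : 1 ≤ p) (hq : 1 ≤ q)
    (hm1 : q * (p-1) < m) (hm2 : m ≤ q * p)
    (Z' : Fin (m + b) → Set (ℝ × ℝ))
    (hrect : ∀ i, IsRect (Z' i))
    (hdisj : ∀ i j, i ≠ j → Disjoint (interior (Z' i)) (interior (Z' j)))
    (hcover : (⋃ i, Z' i) = Icc (0:ℝ) ((q:ℝ)+1) ×ˢ Icc (0:ℝ) (p:ℝ))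
    (hsub : ∀ i : Fin m, Zb m p q (i / q) (i % q) ⊆ Z' (Fin.castAdd b i)) :
    (m : ℤ) ≤ (b : ℤ) + q + p - 1 := by
  classical
  have hm0 : 0 < m := by omega
  choose A B Cc D hAB hCD hKeq using hrect
  set S : Finset (ℕ × ℕ) :=
    (Finset.Ico 1 p).biUnion (fun r => {r} ×ˢ Finset.Ico 1 (n m q r)) with hS
  have hSmem : ∀ s : ℕ × ℕ, s ∈ S ↔ (1 ≤ s.1 ∧ s.1 < p ∧ 1 ≤ s.2 ∧ s.2 < n m q s.1) := by
    intro s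
    simp only [hS, Finset.mem_biUnion, Finset.mem_Ico, Finset.mem_product,
      Finset.mem_singleton]
    constructor
    · rintro ⟨r, ⟨h1, h2⟩, h3, h4, h5⟩
      subst h3
      exact ⟨h1, h2, h4, h5⟩
    · rintro ⟨h1, h2, h3, h4⟩
      exact ⟨s.1, ⟨h1, h2⟩, rfl, h3, h4⟩
  have hmb : 0 < m + b := by omega
  have hex : ∀ s ∈ S, ∃ t : Fin (m+b), P p q s.1 s.2 ∈ Z' t := by
    intro s hs
    rw [hSmem] at hs
    have hPC : P p q s.1 s.2 ∈ ⋃ i, Z' i := by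
      rw [hcover]
      exact P_mem_C hp hq s.1 s.2 hs.1 hs.2.1 hs.2.2.1
        (le_trans (le_of_lt hs.2.2.2) (n_le _))
    simpa using hPC
  let F : ℕ × ℕ → Fin (m + b) := fun s =>
    if h : ∃ t, P p q s.1 s.2 ∈ Z' t then h.choose else ⟨0, hmb⟩
  have hF : ∀ s ∈ S, P p q s.1 s.2 ∈ Z' (F s) := by
    intro s hs
    have h := hex s hs
    simp only [F, dif_pos h]
    exact h.choose_spec
  have hcastinj : Function.Injective (Fin.castAdd b : Fin m → Fin (m+b)) := by
    intro a a' h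
    apply Fin.ext
    have := congrArg Fin.val h
    simpa using this
  -- the tile containing a probe is never a marked tile
  have hFun : ∀ s ∈ S, ∀ j : Fin m, F s ≠ Fin.castAdd b j := by
    intro s hs j hFeq
    have hsv := (hSmem s).mp hs
    obtain ⟨hρ, hκ⟩ := idx_valid hq hm2 (j : ℕ) j.isLt
    obtain ⟨ρl, κl, hρl, hκl, hne, hclash⟩ :=
      probe_clash hp hq s.1 s.2 hsv.1 hsv.2.1 hsv.2.2.1 hsv.2.2.2
        ((j : ℕ) / q) ((j : ℕ) % q) hρ hκ
    have hPin : P p q s.1 s.2 ∈ Z' (Fin.castAdd b j) := hFeq ▸ hF s hs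
    rw [hKeq (Fin.castAdd b j)] at hPin
    have hZsub : Zb m p q ((j:ℕ) / q) ((j:ℕ) % q) ⊆
        Icc (A (Fin.castAdd b j)) (B (Fin.castAdd b j)) ×ˢ
          Icc (Cc (Fin.castAdd b j)) (D (Fin.castAdd b j)) := by
      rw [← hKeq]
      exact hsub j
    obtain ⟨z, hz1, hz2⟩ := hclash _ _ _ _ hZsub hPin
    have hl : ρl * q + κl < m := enc_lt hκl
    set l : Fin m := ⟨ρl * q + κl, hl⟩ with hldef
    have hdec := enc_dec (q := q) (ρ := ρl) (κ := κl) (lt_of_lt_of_le hκl (n_le ρl))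
    have hzin : z ∈ interior (Z' (Fin.castAdd b l)) := by
      have hsubl := hsub l
      have hvl : (l : ℕ) / q = ρl := hdec.1
      have hvl2 : (l : ℕ) % q = κl := hdec.2
      rw [hvl, hvl2] at hsubl
      exact interior_mono hsubl hz2
    have hnee : Fin.castAdd b j ≠ Fin.castAdd b l := by
      intro hcon
      have hjl : j = l := hcastinj hcon
      apply hne
      have hd1 : (j:ℕ) / q = ρl := by rw [hjl]; exact hdec.1
      have hd2 : (j:ℕ) % q = κl := by rw [hjl]; exact hdec.2
      rw [hd1, hd2]
    have hdd := hdisj _ _ hnee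
    rw [hKeq (Fin.castAdd b j)] at hdd
    exact Set.disjoint_left.mp hdd hz1 hzin
  -- two probes never share a tile
  have key : ∀ s ∈ S, ∀ s' ∈ S,
      (s.1 < s'.1 ∨ (s.1 = s'.1 ∧ s.2 < s'.2)) → F s = F s' → False := by
    intro s hs s' hs' hlt hFeq
    have hsv := (hSmem s).mp hs
    have hsv' := (hSmem s').mp hs'
    obtain ⟨ρl, κl, hρl, hκl, hclash⟩ :=
      probe_pair_clash hp hq s.1 s.2 hsv.1 hsv.2.1 hsv.2.2.1 hsv.2.2.2
        s'.1 s'.2 hsv'.1 hsv'.2.1 hsv'.2.2.1 hsv'.2.2.2 hlt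
    have hP1 : P p q s.1 s.2 ∈ Z' (F s) := hF s hs
    have hP2 : P p q s'.1 s'.2 ∈ Z' (F s) := hFeq ▸ hF s' hs'
    rw [hKeq (F s)] at hP1 hP2
    obtain ⟨z, hz1, hz2⟩ := hclash _ _ _ _ hP1 hP2
    have hl : ρl * q + κl < m := enc_lt hκl
    set l : Fin m := ⟨ρl * q + κl, hl⟩ with hldef
    have hdec := enc_dec (q := q) (ρ := ρl) (κ := κl) (lt_of_lt_of_le hκl (n_le ρl))
    have hzin : z ∈ interior (Z' (Fin.castAdd b l)) := by
      have hsubl := hsub l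
      rw [hdec.1, hdec.2] at hsubl
      exact interior_mono hsubl hz2
    have hnee : F s ≠ Fin.castAdd b l := hFun s hs l
    have hdd := hdisj _ _ hnee
    rw [hKeq (F s)] at hdd
    exact Set.disjoint_left.mp hdd hz1 hzin
  have hFinj : Set.InjOn F S := by
    intro s hs s' hs' hFeq
    by_contra hne'
    have h1 : s.1 ≠ s'.1 ∨ s.2 ≠ s'.2 := by
      by_contra hcon
      push_neg at hcon
      exact hne' (Prod.ext hcon.1 hcon.2)
    have : (s.1 < s'.1 ∨ (s.1 = s'.1 ∧ s.2 < s'.2)) ∨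
        (s'.1 < s.1 ∨ (s'.1 = s.1 ∧ s'.2 < s.2)) := by omega
    rcases this with h | h
    · exact key s hs s' hs' h hFeq
    · exact key s' hs' s hs h hFeq.symm
  -- cardinality bound : |S| ≤ b
  have hcard : S.card ≤ b := by
    have h1 : S.card = (S.image F).card := (Finset.card_image_of_injOn hFinj).symm
    have h2 : S.image F ⊆ Finset.univ.filter (fun t => ∀ j : Fin m, t ≠ Fin.castAdd b j) := by
      intro t ht
      rw [Finset.mem_image] at ht
      obtain ⟨s, hsS, rfl⟩ := ht
      rw [Finset.mem_filter]
      exact ⟨Finset.mem_univ _, hFun s hsS⟩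
    have h3 : (Finset.univ.filter (fun t => ∀ j : Fin m, t ≠ Fin.castAdd b j)).card = b := by
      have he : Finset.univ.filter (fun t => ∀ j : Fin m, t ≠ Fin.castAdd b j)
          = Finset.univ \ Finset.image (Fin.castAdd b) Finset.univ := by
        ext t
        simp [eq_comm]
      rw [he, Finset.card_sdiff_of_subset (Finset.subset_univ _),
        Finset.card_image_of_injective _ hcastinj, Finset.card_univ, Finset.card_univ,
        Fintype.card_fin, Fintype.card_fin]
      omega
    calc S.card = (S.image F).card := h1
      _ ≤ _ := Finset.card_le_card h2
      _ = b := h3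
  -- |S| counts the probes
  have hcardS : S.card = ∑ r ∈ Finset.Ico 1 p, (n m q r - 1) := by
    rw [hS, Finset.card_biUnion]
    · apply Finset.sum_congr rfl
      intro r _
      rw [Finset.card_product, Finset.card_singleton, Nat.card_Ico, one_mul]
    · intro x hx y hy hxy
      simp only [Finset.disjoint_left, Finset.mem_product, Finset.mem_singleton]
      rintro ⟨a, c⟩ ⟨rfl, -⟩ ⟨h, -⟩
      exact hxy h
  have hsum := sum_n (m := m) hq hp hm1 hm2
  have hsplit : Finset.range p = insert 0 (Finset.Ico 1 p) := by
    ext x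
    simp only [Finset.mem_range, Finset.mem_insert, Finset.mem_Ico]
    omega
  have hn0 : n m q 0 ≤ q := n_le 0
  have hsum2 : ∑ r ∈ Finset.Ico 1 p, n m q r ≤
      (∑ r ∈ Finset.Ico 1 p, (n m q r - 1)) + (p - 1) := by
    have : ∑ r ∈ Finset.Ico 1 p, n m q r ≤ ∑ r ∈ Finset.Ico 1 p, ((n m q r - 1) + 1) := by
      apply Finset.sum_le_sum
      intro i _
      omega
    rw [Finset.sum_add_distrib, Finset.sum_const, Nat.card_Ico, smul_eq_mul, mul_one] at this
    omega
  have hm_le : m ≤ q + S.card + (p - 1) := by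
    rw [hsplit, Finset.sum_insert (by simp)] at hsum
    omega
  have hfinal : m + 1 ≤ q + b + p := by omega
  omega

lemma ceil_helper (m : ℕ) (hm : 1 ≤ m) :
    ∃ p q : ℕ, 1 ≤ p ∧ 1 ≤ q ∧ q * (p-1) < m ∧ m ≤ q * p ∧
      ((p:ℝ) + (q:ℝ) - 1) < 2 * Real.sqrt m := by
  set q := Nat.sqrt (m-1) + 1 with hqdef
  set p := (m + q - 1) / q with hpdef
  have hq : 1 ≤ q := by omega
  have hq2 : m ≤ q * q := by
    have h := Nat.lt_succ_sqrt (m-1)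
    have : (m-1).sqrt.succ * (m-1).sqrt.succ = q * q := by
      rw [Nat.succ_eq_add_one, hqdef]
    omega
  have hq1 : (q-1) * (q-1) < m := by
    have h := Nat.sqrt_le (m-1)
    have : (m-1).sqrt * (m-1).sqrt = (q-1) * (q-1) := by
      rw [hqdef]
      simp
    omega
  have hdm := Nat.div_add_mod (m + q - 1) q
  rw [← hpdef] at hdm
  have hmod := Nat.mod_lt (m + q - 1) (show 0 < q by omega)
  have hp : 1 ≤ p := by
    rw [hpdef, Nat.one_le_div_iff (by omega)]
    omega
  clear_value q p
  obtain ⟨pp, hpp⟩ : ∃ pp, p = pp + 1 := ⟨p - 1, by omega⟩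
  have hps : q * (p - 1) + q = q * p := by
    rw [hpp]
    simp only [Nat.add_sub_cancel]
    ring
  have hm2 : m ≤ q * p := by omega
  have hm1 : q * (p-1) < m := by omega
  refine ⟨p, q, hp, hq, hm1, hm2, ?_⟩
  have hcq : (1:ℝ) ≤ (q:ℝ) := by exact_mod_cast hq
  have hm0 : (0:ℝ) < m := by exact_mod_cast hm
  rcases Nat.lt_or_ge (q * (q-1)) m with hcase | hcase
  · -- m ≥ q(q-1)+1 : p ≤ q
    have hpq : p ≤ q := by
      have h1 : q * p ≤ m + q - 1 := by omega
      have h2 : m + q - 1 ≤ q * q + q - 1 := by omega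
      have h3 : q * p < q * (q + 1) := by
        have : q * (q+1) = q * q + q := by ring
        omega
      have := Nat.lt_of_mul_lt_mul_left h3
      omega
    have hcp : (p:ℝ) ≤ (q:ℝ) := by exact_mod_cast hpq
    have hkey : ((q:ℝ) - 1/2) < Real.sqrt m := by
      have h0 : (0:ℝ) ≤ (q:ℝ) - 1/2 := by linarith
      rw [← Real.sqrt_sq h0]
      apply Real.sqrt_lt_sqrt (by positivity)
      have hcast : (↑(q * (q - 1)) : ℝ) + 1 ≤ (m:ℝ) := by exact_mod_cast hcase
      rw [Nat.cast_mul, Nat.cast_sub hq] at hcast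
      push_cast at hcast
      nlinarith
    linarith
  · -- m ≤ q(q-1) : p ≤ q - 1
    have hpq : p + 1 ≤ q := by
      have h3 : q * p < q * q := by
        have : q * (q - 1) + q = q * q := by
          obtain ⟨qq, hqq⟩ : ∃ qq, q = qq + 1 := ⟨q - 1, by omega⟩
          rw [hqq]
          simp only [Nat.add_sub_cancel]
          ring
        omega
      exact Nat.lt_of_mul_lt_mul_left h3
    have hcp : (p:ℝ) + 1 ≤ (q:ℝ) := by exact_mod_cast hpq
    have hkey : ((q:ℝ) - 1) < Real.sqrt m := by
      have h0 : (0:ℝ) ≤ (q:ℝ) - 1 := by linarith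
      rw [← Real.sqrt_sq h0]
      apply Real.sqrt_lt_sqrt (by positivity)
      have hcast : (↑((q-1) * (q - 1)) : ℝ) + 1 ≤ (m:ℝ) := by exact_mod_cast hq1
      rw [Nat.cast_mul, Nat.cast_sub hq] at hcast
      push_cast at hcast
      nlinarith
    linarith

end Counting

end Clash

end ZbFacts

end RC

theorem rect_cake_lower_bound (m : ℕ) (hm : 1 ≤ m) :
    ∃ (C : Set (ℝ × ℝ)) (Z : Fin m → Set (ℝ × ℝ)),
      IsRect C ∧
      (∀ i, IsRect (Z i)) ∧
      (∀ i, Z i ⊆ C) ∧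
      (∀ i j, i ≠ j → Disjoint (Z i) (Z j)) ∧
      ∀ (b : ℕ) (Z' : Fin (m + b) → Set (ℝ × ℝ)),
        (∀ i, IsRect (Z' i)) →
        (∀ i j, i ≠ j → Disjoint (interior (Z' i)) (interior (Z' j))) →
        (⋃ i, Z' i) = C →
        (∀ i : Fin m, Z i ⊆ Z' (Fin.castAdd b i)) →
        (m : ℤ) - ⌈2 * Real.sqrt m - 1⌉ ≤ (b : ℤ) := by
  classical
  obtain ⟨p, q, hp, hq, hm1, hm2, hsq⟩ := RC.ceil_helper m hm
  have hmqp : m ≤ q * p := hm2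
  refine ⟨Set.Icc (0:ℝ) ((q:ℝ)+1) ×ˢ Set.Icc (0:ℝ) (p:ℝ),
    fun i => RC.Zb m p q ((i:ℕ)/q) ((i:ℕ)%q), ?_, ?_, ?_, ?_, ?_⟩
  · refine ⟨0, (q:ℝ)+1, 0, (p:ℝ), by positivity, ?_, rfl⟩
    exact_mod_cast hp
  · intro i
    obtain ⟨h1, h2⟩ := RC.idx_valid hq hm2 (i:ℕ) i.isLt
    exact RC.Zb_rect _ _ hp h1 h2
  · intro i
    obtain ⟨h1, h2⟩ := RC.idx_valid hq hm2 (i:ℕ) i.isLt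
    exact RC.Zb_sub_C _ _ hp h1 h2
  · intro i j hij
    obtain ⟨h1, h2⟩ := RC.idx_valid hq hm2 (i:ℕ) i.isLt
    obtain ⟨h1', h2'⟩ := RC.idx_valid hq hm2 (j:ℕ) j.isLt
    apply RC.Zb_disj _ _ _ _ hp hq h1 h2 h1' h2'
    intro hcon
    apply hij
    have e1 : (i:ℕ)/q = (j:ℕ)/q := congrArg Prod.fst hcon
    have e2 : (i:ℕ)%q = (j:ℕ)%q := congrArg Prod.snd hcon
    have d1 := Nat.div_add_mod (i:ℕ) q
    have d2 := Nat.div_add_mod (j:ℕ) q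
    rw [e1, e2] at d1
    apply Fin.ext
    omega
  · intro b Z' hrect hdisj hcover hsub
    have hcm := RC.count_main m p q b hp hq hm1 hm2 Z' hrect hdisj hcover hsub
    have hceil : ((p:ℤ) + (q:ℤ) - 2) < ⌈2 * Real.sqrt m - 1⌉ := by
      rw [Int.lt_ceil]
      push_cast
      linarith
    linarith
end

section
/- Let C be a nondegenerate closed axis-parallel rectangle in ℝ², let m ≥ 1, and let R₁, …, Rₘ be nondegenerate closed axis-parallel rectangles that are pairwise interior-disjoint and whose union equals C. Then the set of points p ∈ ℝ² that belong to at least 4 of the rectangles R₁, …, Rₘ is finite and has at most m − ⌈2√m − 1⌉ elements. -/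
namespace FourVertAux


/-- Membership of a point in the i-th rectangle, in coordinates. -/
def MemR {m : ℕ} (xl xr yl yr : Fin m → ℝ) (i : Fin m) (p : ℝ × ℝ) : Prop :=
  xl i ≤ p.1 ∧ p.1 ≤ xr i ∧ yl i ≤ p.2 ∧ p.2 ≤ yr i

/-- Pairwise interior-disjointness, in coordinates. -/
def Dis {m : ℕ} (xl xr yl yr : Fin m → ℝ) : Prop :=
  ∀ i j : Fin m, i ≠ j → ∀ q : ℝ × ℝ,
    xl i < q.1 → q.1 < xr i → yl i < q.2 → q.2 < yr i →
    xl j < q.1 → q.1 < xr j → yl j < q.2 → q.2 < yr j → False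

lemma Dis.overlap {m : ℕ} {xl xr yl yr : Fin m → ℝ} (hdis : Dis xl xr yl yr)
    {i j : Fin m} (hij : i ≠ j)
    (hx : max (xl i) (xl j) < min (xr i) (xr j))
    (hy : max (yl i) (yl j) < min (yr i) (yr j)) : False := by
  apply hdis i j hij
    ((max (xl i) (xl j) + min (xr i) (xr j)) / 2,
     (max (yl i) (yl j) + min (yr i) (yr j)) / 2)
  all_goals
    simp only
  all_goals
    linarith [le_max_left (xl i) (xl j), le_max_right (xl i) (xl j),
      min_le_left (xr i) (xr j), min_le_right (xr i) (xr j),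
      le_max_left (yl i) (yl j), le_max_right (yl i) (yl j),
      min_le_left (yr i) (yr j), min_le_right (yr i) (yr j)]

lemma quad_excl {m : ℕ} {xl xr yl yr : Fin m → ℝ} (hdis : Dis xl xr yl yr)
    {p : ℝ × ℝ} {i j : Fin m} (hij : i ≠ j)
    (hi : MemR xl xr yl yr i p) (hj : MemR xl xr yl yr j p)
    (hx : (p.1 < xr i ∧ p.1 < xr j) ∨ (xl i < p.1 ∧ xl j < p.1))
    (hy : (p.2 < yr i ∧ p.2 < yr j) ∨ (yl i < p.2 ∧ yl j < p.2)) : False := by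
  obtain ⟨hi1, hi2, hi3, hi4⟩ := hi
  obtain ⟨hj1, hj2, hj3, hj4⟩ := hj
  apply Dis.overlap hdis hij
  · simp only [max_lt_iff, lt_min_iff]
    rcases hx with ⟨h1, h2⟩ | ⟨h1, h2⟩ <;> refine ⟨⟨?_, ?_⟩, ?_, ?_⟩ <;> linarith
  · simp only [max_lt_iff, lt_min_iff]
    rcases hy with ⟨h1, h2⟩ | ⟨h1, h2⟩ <;> refine ⟨⟨?_, ?_⟩, ?_, ?_⟩ <;> linarith

lemma exists_gap {F : Set ℝ} (hF : F.Finite) :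
    ∃ ε : ℝ, 0 < ε ∧ ∀ u ∈ F, ∀ v ∈ F, u < v → u + ε < v := by
  set G := {q : ℝ × ℝ | q.1 ∈ F ∧ q.2 ∈ F ∧ q.1 < q.2} with hG
  have hGfin : G.Finite := (hF.prod hF).subset (fun q hq => ⟨hq.1, hq.2.1⟩)
  rcases G.eq_empty_or_nonempty with h | h
  · refine ⟨1, one_pos, fun u hu v hv huv => ?_⟩
    exact absurd (show (u, v) ∈ G from ⟨hu, hv, huv⟩) (h ▸ Set.notMem_empty (u, v))
  · obtain ⟨q0, hq0, hmin⟩ := Set.exists_min_image G (fun q => q.2 - q.1) hGfin h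
    have hq0' : q0.1 < q0.2 := hq0.2.2
    refine ⟨(q0.2 - q0.1) / 2, by linarith, fun u hu v hv huv => ?_⟩
    have h2 := hmin (u, v) ⟨hu, hv, huv⟩
    simp only at h2
    linarith


lemma struct4 {m : ℕ} {xl xr yl yr : Fin m → ℝ} (hdis : Dis xl xr yl yr)
    (hxlt : ∀ i, xl i < xr i) (hylt : ∀ i, yl i < yr i)
    {p : ℝ × ℝ} (hp : 4 ≤ {i : Fin m | MemR xl xr yl yr i p}.ncard) :
    ∃ i : Fin m, xl i = p.1 ∧ yl i = p.2 ∧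
      (∃ j, xl j = xl i ∧ yl j < yl i) ∧ (∃ k, yl k = yl i ∧ xl k < xl i) := by
  classical
  set T := {i : Fin m | MemR xl xr yl yr i p} with hT
  let ψ : Fin m → Bool × Bool := fun i => (decide (p.1 < xr i), decide (p.2 < yr i))
  have hmemT : ∀ i ∈ T, MemR xl xr yl yr i p := fun i hi => hi
  have hinj : Set.InjOn ψ T := by
    intro i hi j hj hij
    by_contra hne
    have e1 : decide (p.1 < xr i) = decide (p.1 < xr j) := congrArg Prod.fst hij
    have e2 : decide (p.2 < yr i) = decide (p.2 < yr j) := congrArg Prod.snd hij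
    have ex := decide_eq_decide.mp e1
    have ey := decide_eq_decide.mp e2
    have hi' := hmemT i hi
    have hj' := hmemT j hj
    refine quad_excl hdis hne hi' hj' ?_ ?_
    · by_cases h : p.1 < xr i
      · exact Or.inl ⟨h, ex.mp h⟩
      · refine Or.inr ⟨?_, ?_⟩
        · have : p.1 = xr i := le_antisymm hi'.2.1 (not_lt.mp h)
          rw [this]; exact hxlt i
        · have h' : ¬ p.1 < xr j := fun hh => h (ex.mpr hh)
          have : p.1 = xr j := le_antisymm hj'.2.1 (not_lt.mp h')
          rw [this]; exact hxlt j
    · by_cases h : p.2 < yr i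
      · exact Or.inl ⟨h, ey.mp h⟩
      · refine Or.inr ⟨?_, ?_⟩
        · have : p.2 = yr i := le_antisymm hi'.2.2.2 (not_lt.mp h)
          rw [this]; exact hylt i
        · have h' : ¬ p.2 < yr j := fun hh => h (ey.mpr hh)
          have : p.2 = yr j := le_antisymm hj'.2.2.2 (not_lt.mp h')
          rw [this]; exact hylt j
  have hcard4 : (Set.univ : Set (Bool × Bool)).ncard = 4 := by
    simp [Set.ncard_univ, Nat.card_eq_fintype_card]
  have h1 : T.ncard = (ψ '' T).ncard := (Set.ncard_image_of_injOn hinj).symm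
  have h2 : (ψ '' T).ncard ≤ 4 := by
    rw [← hcard4]
    exact Set.ncard_le_ncard (Set.subset_univ _) Set.finite_univ
  have hTc : T.ncard = 4 := le_antisymm (by rw [h1]; exact h2) hp
  have hsurj : ψ '' T = Set.univ := by
    apply Set.eq_of_subset_of_ncard_le (Set.subset_univ _)
    rw [hcard4, ← h1, hTc]
  have hget : ∀ v : Bool × Bool, ∃ i ∈ T, ψ i = v := by
    intro v
    have : v ∈ ψ '' T := hsurj ▸ Set.mem_univ v
    obtain ⟨i, hiT, hψ⟩ := this
    exact ⟨i, hiT, hψ⟩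
  obtain ⟨itt, htt, hψtt⟩ := hget (true, true)
  obtain ⟨itf, htf, hψtf⟩ := hget (true, false)
  obtain ⟨ift, hft, hψft⟩ := hget (false, true)
  obtain ⟨iff', hff, hψff⟩ := hget (false, false)
  have Mtt := hmemT _ htt
  have Mtf := hmemT _ htf
  have Mft := hmemT _ hft
  have Mff := hmemT _ hff
  have dtt1 : p.1 < xr itt := of_decide_eq_true (congrArg Prod.fst hψtt)
  have dtt2 : p.2 < yr itt := of_decide_eq_true (congrArg Prod.snd hψtt)
  have dtf1 : p.1 < xr itf := of_decide_eq_true (congrArg Prod.fst hψtf)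
  have dtf2 : ¬ p.2 < yr itf := of_decide_eq_false (congrArg Prod.snd hψtf)
  have dft1 : ¬ p.1 < xr ift := of_decide_eq_false (congrArg Prod.fst hψft)
  have dft2 : p.2 < yr ift := of_decide_eq_true (congrArg Prod.snd hψft)
  have dff1 : ¬ p.1 < xr iff' := of_decide_eq_false (congrArg Prod.fst hψff)
  have dff2 : ¬ p.2 < yr iff' := of_decide_eq_false (congrArg Prod.snd hψff)
  have etf : yr itf = p.2 := le_antisymm (not_lt.mp dtf2) Mtf.2.2.2
  have eft : xr ift = p.1 := le_antisymm (not_lt.mp dft1) Mft.2.1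
  have eff1 : xr iff' = p.1 := le_antisymm (not_lt.mp dff1) Mff.2.1
  have eff2 : yr iff' = p.2 := le_antisymm (not_lt.mp dff2) Mff.2.2.2
  have Cff1 : xl iff' < p.1 := by rw [← eff1]; exact hxlt iff'
  have Cff2 : yl iff' < p.2 := by rw [← eff2]; exact hylt iff'
  have Cft : xl ift < p.1 := by rw [← eft]; exact hxlt ift
  have Ctf : yl itf < p.2 := by rw [← etf]; exact hylt itf
  have ne1 : itt ≠ ift := by intro h; rw [h, hψft] at hψtt; simp at hψtt
  have ne2 : itt ≠ itf := by intro h; rw [h, hψtf] at hψtt; simp at hψtt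
  have ne3 : itf ≠ iff' := by intro h; rw [h, hψff] at hψtf; simp at hψtf
  have ne4 : ift ≠ iff' := by intro h; rw [h, hψff] at hψft; simp at hψft
  have Att : xl itt = p.1 := by
    by_contra hA
    have hA' : xl itt < p.1 := lt_of_le_of_ne Mtt.1 hA
    exact quad_excl hdis ne1 Mtt Mft (Or.inr ⟨hA', Cft⟩) (Or.inl ⟨dtt2, dft2⟩)
  have Ctt : yl itt = p.2 := by
    by_contra hC
    have hC' : yl itt < p.2 := lt_of_le_of_ne Mtt.2.2.1 hC
    exact quad_excl hdis ne2 Mtt Mtf (Or.inl ⟨dtt1, dtf1⟩) (Or.inr ⟨hC', Ctf⟩)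
  have Atf : xl itf = p.1 := by
    by_contra hA
    have hA' : xl itf < p.1 := lt_of_le_of_ne Mtf.1 hA
    exact quad_excl hdis ne3 Mtf Mff (Or.inr ⟨hA', Cff1⟩) (Or.inr ⟨Ctf, Cff2⟩)
  have Cft' : yl ift = p.2 := by
    by_contra hC
    have hC' : yl ift < p.2 := lt_of_le_of_ne Mft.2.2.1 hC
    exact quad_excl hdis ne4 Mft Mff (Or.inr ⟨Cft, Cff1⟩) (Or.inr ⟨hC', Cff2⟩)
  exact ⟨itt, Att, Ctt,
    ⟨itf, by rw [Atf, Att], by rw [Ctt]; exact Ctf⟩,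
    ⟨ift, by rw [Cft', Ctt], by rw [Att]; exact Cft⟩⟩

lemma no_double {m : ℕ} {xl xr yl yr : Fin m → ℝ} {a b c d ε : ℝ}
    (hdis : Dis xl xr yl yr)
    (hxlt : ∀ i, xl i < xr i) (hylt : ∀ i, yl i < yr i)
    (hsub : ∀ i, a ≤ xl i ∧ xr i ≤ b ∧ c ≤ yl i ∧ yr i ≤ d)
    (hcov : ∀ q : ℝ × ℝ, a ≤ q.1 → q.1 ≤ b → c ≤ q.2 → q.2 ≤ d →
      ∃ k, xl k ≤ q.1 ∧ q.1 ≤ xr k ∧ yl k ≤ q.2 ∧ q.2 ≤ yr k)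
    (hε : 0 < ε) (F : Set ℝ)
    (hgap : ∀ u ∈ F, ∀ v ∈ F, u < v → u + ε < v)
    (hFa : a ∈ F) (hFb : b ∈ F) (hFc : c ∈ F) (hFd : d ∈ F)
    (hFxl : ∀ i, xl i ∈ F) (hFxr : ∀ i, xr i ∈ F)
    (hFyl : ∀ i, yl i ∈ F) (hFyr : ∀ i, yr i ∈ F)
    (i : Fin m) (hia : a < xl i) (hic : c < yl i)
    (hLow : ∀ k, xl k = xl i → yl i ≤ yl k)
    (hLeft : ∀ k, yl k = yl i → xl i ≤ xl k) : False := by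
  have hxb : xl i < b := lt_of_lt_of_le (hxlt i) (hsub i).2.1
  have hyd : yl i < d := lt_of_lt_of_le (hylt i) (hsub i).2.2.2
  have g1 : c + ε < yl i := hgap c hFc (yl i) (hFyl i) hic
  have g2 : a + ε < xl i := hgap a hFa (xl i) (hFxl i) hia
  have g3 : xl i + ε < b := hgap (xl i) (hFxl i) b hFb hxb
  have g4 : yl i + ε < d := hgap (yl i) (hFyl i) d hFd hyd
  -- rectangle below the corner
  obtain ⟨i1, h11, h12, h13, h14⟩ :=
    hcov (xl i, yl i - ε) (le_of_lt hia) (le_of_lt hxb) (by simp; linarith) (by simp; linarith)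
  simp only at h11 h12 h13 h14
  have hb1 : yl i1 < yl i := by linarith
  have ht1 : yl i ≤ yr i1 := by
    by_contra h
    have := hgap (yr i1) (hFyr i1) (yl i) (hFyl i) (not_le.mp h)
    linarith
  have hA1 : xl i1 < xl i := by
    rcases lt_or_eq_of_le h11 with h | h
    · exact h
    · exact absurd (hLow i1 h) (not_le.mpr hb1)
  have hne1 : i1 ≠ i := fun h => by rw [h] at hb1; exact lt_irrefl _ hb1
  rcases eq_or_lt_of_le ht1 with hD1 | hD1
  · -- yr i1 = yl i : rectangle i1 sits just below with its top at yl i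
    obtain ⟨i3, h31, h32, h33, h34⟩ :=
      hcov (xl i - ε, yl i + ε) (by simp; linarith) (by simp; linarith)
        (by simp; linarith) (by simp; linarith)
    simp only at h31 h32 h33 h34
    have hA3 : xl i3 < xl i := by linarith
    have hB3 : xl i ≤ xr i3 := by
      by_contra h
      have := hgap (xr i3) (hFxr i3) (xl i) (hFxl i) (not_le.mp h)
      linarith
    have hC3 : yl i3 ≤ yl i := by
      by_contra h
      have := hgap (yl i) (hFyl i) (yl i3) (hFyl i3) (not_le.mp h)
      linarith
    have hD3 : yl i < yr i3 := by linarith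
    have hne3 : i3 ≠ i := fun h => by rw [h] at hA3; exact lt_irrefl _ hA3
    have hr3 : xr i3 ≤ xl i := by
      by_contra h
      push_neg at h
      apply Dis.overlap hdis hne3 <;>
        (simp only [max_lt_iff, lt_min_iff]; refine ⟨⟨?_, ?_⟩, ?_, ?_⟩ <;>
          linarith [hxlt i, hylt i])
    have hr3' : xr i3 = xl i := le_antisymm hr3 hB3
    have hne31 : i3 ≠ i1 := by
      intro h
      rw [h] at hD3
      rw [← hD1] at hD3
      exact lt_irrefl _ hD3
    have hb3 : yl i ≤ yl i3 := by
      by_contra h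
      push_neg at h
      apply Dis.overlap hdis hne31 <;>
        (simp only [max_lt_iff, lt_min_iff]; refine ⟨⟨?_, ?_⟩, ?_, ?_⟩ <;>
          linarith [hxlt i, hylt i])
    exact absurd (hLeft i3 (le_antisymm hC3 hb3)) (not_le.mpr hA3)
  · -- yl i < yr i1 : rectangle i1 crosses the horizontal line y = yl i
    have hr1 : xr i1 ≤ xl i := by
      by_contra h
      push_neg at h
      apply Dis.overlap hdis hne1 <;>
        (simp only [max_lt_iff, lt_min_iff]; refine ⟨⟨?_, ?_⟩, ?_, ?_⟩ <;>
          linarith [hxlt i, hylt i])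
    have hr1' : xr i1 = xl i := le_antisymm hr1 h12
    obtain ⟨i2, h21, h22, h23, h24⟩ :=
      hcov (xl i + ε, yl i - ε) (by simp; linarith) (by simp; linarith)
        (by simp; linarith) (by simp; linarith)
    simp only at h21 h22 h23 h24
    have hA2 : xl i2 ≤ xl i := by
      by_contra h
      have := hgap (xl i) (hFxl i) (xl i2) (hFxl i2) (not_le.mp h)
      linarith
    have hB2 : xl i < xr i2 := by linarith
    have hD2 : yl i ≤ yr i2 := by
      by_contra h
      have := hgap (yr i2) (hFyr i2) (yl i) (hFyl i) (not_le.mp h)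
      linarith
    have hC2 : yl i2 < yl i := by linarith
    have hne2 : i2 ≠ i := fun h => by rw [h] at hC2; exact lt_irrefl _ hC2
    have ht2 : yr i2 ≤ yl i := by
      by_contra h
      push_neg at h
      apply Dis.overlap hdis hne2 <;>
        (simp only [max_lt_iff, lt_min_iff]; refine ⟨⟨?_, ?_⟩, ?_, ?_⟩ <;>
          linarith [hxlt i, hylt i])
    have ht2' : yr i2 = yl i := le_antisymm ht2 hD2
    have hne21 : i2 ≠ i1 := by
      intro h
      rw [h] at ht2'
      rw [ht2'] at hD1
      exact lt_irrefl _ hD1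
    have hA2' : xl i ≤ xl i2 := by
      by_contra h
      push_neg at h
      apply Dis.overlap hdis hne21 <;>
        (simp only [max_lt_iff, lt_min_iff]; refine ⟨⟨?_, ?_⟩, ?_, ?_⟩ <;>
          linarith [hxlt i, hylt i, hxlt i1, hylt i1])
    exact absurd (hLow i2 (le_antisymm hA2 hA2')) (not_le.mpr hC2)

end FourVertAux


open FourVertAux

theorem four_vertices_upper_bound (C : Set (ℝ × ℝ)) (hC : IsRect C)
    (m : ℕ) (R : Fin m → Set (ℝ × ℝ)) (hR : ∀ i, IsRect (R i))
    (hdisj : ∀ i j, i ≠ j → Disjoint (interior (R i)) (interior (R j)))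
    (hcover : (⋃ i, R i) = C) :
    ({p : ℝ × ℝ | 4 ≤ {i : Fin m | p ∈ R i}.ncard}).Finite ∧
    (({p : ℝ × ℝ | 4 ≤ {i : Fin m | p ∈ R i}.ncard}).ncard : ℤ) ≤
      (m : ℤ) - ⌈2 * Real.sqrt m - 1⌉ := by
  classical
  obtain ⟨a, b, c, d, hab, hcd, hCeq⟩ := hC
  choose xl xr yl yr hxlt hylt hRe using hR
  have hmem : ∀ (p : ℝ × ℝ) (i : Fin m),
      p ∈ R i ↔ (xl i ≤ p.1 ∧ p.1 ≤ xr i ∧ yl i ≤ p.2 ∧ p.2 ≤ yr i) := by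
    intro p i
    rw [hRe i]
    simp only [Set.mem_prod, Set.mem_Icc]
    tauto
  have hdis : Dis xl xr yl yr := by
    intro i j hij q h1 h2 h3 h4 h5 h6 h7 h8
    have hi : q ∈ interior (R i) := by
      rw [hRe i, interior_prod_eq, interior_Icc, interior_Icc]
      exact ⟨⟨h1, h2⟩, ⟨h3, h4⟩⟩
    have hj : q ∈ interior (R j) := by
      rw [hRe j, interior_prod_eq, interior_Icc, interior_Icc]
      exact ⟨⟨h5, h6⟩, ⟨h7, h8⟩⟩
    exact Set.disjoint_left.mp (hdisj i j hij) hi hj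
  have hRsubC : ∀ i, R i ⊆ C := fun i => hcover ▸ Set.subset_iUnion R i
  have hsub : ∀ i, a ≤ xl i ∧ xr i ≤ b ∧ c ≤ yl i ∧ yr i ≤ d := by
    intro i
    have h1 : (xl i, yl i) ∈ R i :=
      (hmem _ i).mpr ⟨le_refl _, le_of_lt (hxlt i), le_refl _, le_of_lt (hylt i)⟩
    have h2 : (xr i, yr i) ∈ R i :=
      (hmem _ i).mpr ⟨le_of_lt (hxlt i), le_refl _, le_of_lt (hylt i), le_refl _⟩
    have h1' := hRsubC i h1
    have h2' := hRsubC i h2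
    rw [hCeq] at h1' h2'
    simp only [Set.mem_prod, Set.mem_Icc] at h1' h2'
    exact ⟨h1'.1.1, h2'.1.2, h1'.2.1, h2'.2.2⟩
  have hcov : ∀ q : ℝ × ℝ, a ≤ q.1 → q.1 ≤ b → c ≤ q.2 → q.2 ≤ d →
      ∃ k, xl k ≤ q.1 ∧ q.1 ≤ xr k ∧ yl k ≤ q.2 ∧ q.2 ≤ yr k := by
    intro q h1 h2 h3 h4
    have hq : q ∈ C := by
      rw [hCeq]
      exact ⟨⟨h1, h2⟩, h3, h4⟩
    rw [← hcover] at hq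
    obtain ⟨k, hk⟩ := Set.mem_iUnion.mp hq
    exact ⟨k, (hmem q k).mp hk⟩
  set X := {p : ℝ × ℝ | 4 ≤ {i : Fin m | p ∈ R i}.ncard} with hX
  have hXiff : ∀ p ∈ X, 4 ≤ {i : Fin m | MemR xl xr yl yr i p}.ncard := by
    intro p hp
    have hseteq : {i : Fin m | p ∈ R i} = {i | MemR xl xr yl yr i p} :=
      Set.ext fun i => (hmem p i)
    rw [hX] at hp
    rw [← hseteq]
    exact hp
  -- the corner rectangle
  obtain ⟨i0, hi01, hi02, hi03, hi04⟩ :=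
    hcov (a, c) le_rfl (le_of_lt hab) le_rfl (le_of_lt hcd)
  simp only at hi01 hi02 hi03 hi04
  have hi0x : xl i0 = a := le_antisymm hi01 (hsub i0).1
  have hi0y : yl i0 = c := le_antisymm hi03 (hsub i0).2.2.1
  -- gap ε
  set Fs : Set ℝ :=
    {a, b, c, d} ∪ Set.range xl ∪ Set.range xr ∪ Set.range yl ∪ Set.range yr with hFs
  have hFsfin : Fs.Finite := by
    apply Set.Finite.union
    apply Set.Finite.union
    apply Set.Finite.union
    apply Set.Finite.union
    · exact (Set.finite_singleton d).insert c |>.insert b |>.insert a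
    all_goals exact Set.finite_range _
  obtain ⟨ε, hε, hgap⟩ := exists_gap hFsfin
  have hFa : a ∈ Fs := by simp [hFs]
  have hFb : b ∈ Fs := by simp [hFs]
  have hFc : c ∈ Fs := by simp [hFs]
  have hFd : d ∈ Fs := by simp [hFs]
  have hFxl : ∀ i, xl i ∈ Fs := fun i => by simp [hFs]
  have hFxr : ∀ i, xr i ∈ Fs := fun i => by simp [hFs]
  have hFyl : ∀ i, yl i ∈ Fs := fun i => by simp [hFs]
  have hFyr : ∀ i, yr i ∈ Fs := fun i => by simp [hFs]
  -- the two distinguished families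
  set Low : Set (Fin m) := {i | ∀ k, xl k = xl i → yl i ≤ yl k} with hLowdef
  set Left : Set (Fin m) := {i | ∀ k, yl k = yl i → xl i ≤ xl k} with hLeftdef
  have keyT : ∀ p ∈ X, ∃ i : Fin m, xl i = p.1 ∧ yl i = p.2 ∧ i ∈ (Low ∪ Left)ᶜ := by
    intro p hp
    obtain ⟨i, h1, h2, ⟨j, hj1, hj2⟩, ⟨k, hk1, hk2⟩⟩ :=
      struct4 hdis hxlt hylt (hXiff p hp)
    refine ⟨i, h1, h2, ?_⟩
    intro hm'
    rcases hm' with hL | hL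
    · exact absurd (hL j hj1) (not_le.mpr hj2)
    · exact absurd (hL k hk1) (not_le.mpr hk2)
  let f : ℝ × ℝ → Fin m := fun p => if h : p ∈ X then (keyT p h).choose else i0
  have hf1 : ∀ p (h : p ∈ X),
      xl (f p) = p.1 ∧ yl (f p) = p.2 ∧ f p ∈ (Low ∪ Left)ᶜ := by
    intro p h
    simp only [f, dif_pos h]
    exact (keyT p h).choose_spec
  have hfinj : Set.InjOn f X := by
    intro p hp q hq hpq
    obtain ⟨h1, h2, _⟩ := hf1 p hp
    obtain ⟨h3, h4, _⟩ := hf1 q hq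
    exact Prod.ext (by rw [← h1, hpq, h3]) (by rw [← h2, hpq, h4])
  have hXfin : X.Finite := Set.Finite.of_finite_image (Set.toFinite _) hfinj
  have hX1 : X.ncard ≤ ((Low ∪ Left)ᶜ).ncard :=
    Set.ncard_le_ncard_of_injOn f (fun p hp => (hf1 p hp).2.2) hfinj (Set.toFinite _)
  have hcompl : (Low ∪ Left).ncard + ((Low ∪ Left)ᶜ).ncard = m := by
    rw [Set.ncard_add_ncard_compl]
    simp [Nat.card_eq_fintype_card]
  have hunion : (Low ∪ Left).ncard + (Low ∩ Left).ncard = Low.ncard + Left.ncard :=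
    Set.ncard_union_add_ncard_inter Low Left
  have hBLinj : ∀ i j : Fin m, xl i = xl j → yl i = yl j → i = j := by
    intro i j h1 h2
    by_contra hne
    refine Dis.overlap hdis hne ?_ ?_ <;>
      (simp only [max_lt_iff, lt_min_iff]; refine ⟨⟨?_, ?_⟩, ?_, ?_⟩ <;>
        linarith [hxlt i, hxlt j, hylt i, hylt j])
  have hinter : (Low ∩ Left) ⊆ {i0} := by
    rintro i ⟨hiLow, hiLeft⟩
    have hiLow' : ∀ k, xl k = xl i → yl i ≤ yl k := hiLow
    have hiLeft' : ∀ k, yl k = yl i → xl i ≤ xl k := hiLeft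
    have hax : a ≤ xl i := (hsub i).1
    have hcy : c ≤ yl i := (hsub i).2.2.1
    rcases eq_or_lt_of_le hax with hxa | hxa
    · have h1 : yl i ≤ yl i0 := hiLow' i0 (by rw [hi0x]; exact hxa)
      have h2 : yl i = c := le_antisymm (le_trans h1 (le_of_eq hi0y)) hcy
      have : i = i0 := hBLinj i i0 (by rw [hi0x, ← hxa]) (by rw [h2, hi0y])
      exact this
    · rcases eq_or_lt_of_le hcy with hyc | hyc
      · have h1 : xl i ≤ xl i0 := hiLeft' i0 (by rw [hi0y]; exact hyc)
        rw [hi0x] at h1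
        exact absurd h1 (not_le.mpr hxa)
      · exact (no_double hdis hxlt hylt hsub hcov hε Fs hgap hFa hFb hFc hFd
          hFxl hFxr hFyl hFyr i hxa hyc hiLow' hiLeft').elim
  have hintercard : (Low ∩ Left).ncard ≤ 1 := by
    have h := Set.ncard_le_ncard hinter (Set.toFinite _)
    simpa using h
  have hLowc : (Set.range xl).ncard ≤ Low.ncard := by
    have himg : Set.range xl ⊆ xl '' Low := by
      rintro _ ⟨j, rfl⟩
      obtain ⟨i, hiT, hmin⟩ :=
        Set.exists_min_image {k | xl k = xl j} yl (Set.toFinite _) ⟨j, rfl⟩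
      have hiT' : xl i = xl j := hiT
      exact ⟨i, fun k hk => hmin k (show xl k = xl j from hk.trans hiT'), hiT'⟩
    calc (Set.range xl).ncard ≤ (xl '' Low).ncard :=
          Set.ncard_le_ncard himg (Set.toFinite _)
      _ ≤ Low.ncard := Set.ncard_image_le (Set.toFinite _)
  have hLeftc : (Set.range yl).ncard ≤ Left.ncard := by
    have himg : Set.range yl ⊆ yl '' Left := by
      rintro _ ⟨j, rfl⟩
      obtain ⟨i, hiT, hmin⟩ :=
        Set.exists_min_image {k | yl k = yl j} xl (Set.toFinite _) ⟨j, rfl⟩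
      have hiT' : yl i = yl j := hiT
      exact ⟨i, fun k hk => hmin k (show yl k = yl j from hk.trans hiT'), hiT'⟩
    calc (Set.range yl).ncard ≤ (yl '' Left).ncard :=
          Set.ncard_le_ncard himg (Set.toFinite _)
      _ ≤ Left.ncard := Set.ncard_image_le (Set.toFinite _)
  have hprod : m ≤ (Set.range xl).ncard * (Set.range yl).ncard := by
    have hinj : Function.Injective (fun i : Fin m => (xl i, yl i)) := by
      intro i j h
      rw [Prod.ext_iff] at h
      exact hBLinj i j h.1 h.2
    have h1 : (Set.range fun i : Fin m => (xl i, yl i)).ncard = m := by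
      rw [← Set.image_univ, Set.ncard_image_of_injOn hinj.injOn]
      simp [Set.ncard_univ]
    have h2 : (Set.range fun i : Fin m => (xl i, yl i)) ⊆
        Set.range xl ×ˢ Set.range yl := by
      rintro _ ⟨i, rfl⟩
      exact ⟨⟨i, rfl⟩, ⟨i, rfl⟩⟩
    have h3 : (Set.range xl ×ˢ Set.range yl).ncard =
        (Set.range xl).ncard * (Set.range yl).ncard := by
      rw [← Nat.card_coe_set_eq, ← Nat.card_coe_set_eq, ← Nat.card_coe_set_eq,
        Nat.card_congr (Equiv.Set.prod _ _), Nat.card_prod]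
    calc m = (Set.range fun i : Fin m => (xl i, yl i)).ncard := h1.symm
      _ ≤ (Set.range xl ×ˢ Set.range yl).ncard :=
          Set.ncard_le_ncard h2 (Set.toFinite _)
      _ = _ := h3
  -- final arithmetic
  refine ⟨hXfin, ?_⟩
  set nL := (Set.range xl).ncard with hnL
  set nB := (Set.range yl).ncard with hnB
  have hceil : (⌈2 * Real.sqrt m - 1⌉ : ℤ) ≤ (nL : ℤ) + nB - 1 := by
    rw [Int.ceil_le]
    push_cast
    have hs1 : Real.sqrt m ^ 2 = m := Real.sq_sqrt (by positivity)
    have hs2 : (0 : ℝ) ≤ Real.sqrt m := Real.sqrt_nonneg _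
    have hmn : (m : ℝ) ≤ (nL : ℝ) * nB := by exact_mod_cast hprod
    have h2s : 2 * Real.sqrt m ≤ (nL : ℝ) + nB := by
      nlinarith [sq_nonneg ((nL : ℝ) - (nB : ℝ)), Nat.cast_nonneg (α := ℝ) nL,
        Nat.cast_nonneg (α := ℝ) nB]
    linarith
  have hc2 : nL + nB ≤ (Low ∪ Left).ncard + 1 := by omega
  have hc1 : X.ncard + (Low ∪ Left).ncard ≤ m := by omega
  have hN : X.ncard + nL + nB ≤ m + 1 := by omega
  have hNZ : (X.ncard : ℤ) + nL + nB ≤ (m : ℤ) + 1 := by exact_mod_cast hN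
  linarith [hceil, hNZ]
end

section
/- For every integer m ≥ 3 there exist pairwise interior-disjoint nondegenerate closed axis-parallel rectangles Z₁, …, Zₘ in the plane ℝ² such that the complement ℝ² \ (Z₁ ∪ ⋯ ∪ Zₘ) has exactly m − 2 connected components. -/
open Set

namespace RectAux


def bot (k : ℕ) : Set (ℝ × ℝ) := Icc 0 (2*(k:ℝ)+1) ×ˢ Icc 0 1
def topR (k : ℕ) : Set (ℝ × ℝ) := Icc 0 (2*(k:ℝ)+1) ×ˢ Icc 2 3
def vbar (j : ℕ) : Set (ℝ × ℝ) := Icc (2*(j:ℝ)) (2*(j:ℝ)+1) ×ˢ Icc 1 2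
def hole (j : ℕ) : Set (ℝ × ℝ) := Ioo (2*(j:ℝ)+1) (2*(j:ℝ)+2) ×ˢ Ioo 1 2
def outer (k : ℕ) : Set (ℝ × ℝ) := (Icc (0:ℝ) (2*(k:ℝ)+1) ×ˢ Icc (0:ℝ) 3)ᶜ

/-- key pointwise description -/
lemma mem_iff (k : ℕ) (p : ℝ × ℝ) :
    (p ∈ bot k ∨ p ∈ topR k ∨ ∃ j ≤ k, p ∈ vbar j) ↔
      ¬ (p ∈ outer k ∨ ∃ j < k, p ∈ hole j) := by
  obtain ⟨x, y⟩ := p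
  simp only [bot, topR, vbar, hole, outer, mem_prod, mem_Icc, mem_Ioo, mem_compl_iff]
  constructor
  · rintro (⟨⟨hx0, hx1⟩, hy0, hy1⟩ | ⟨⟨hx0, hx1⟩, hy0, hy1⟩ | ⟨j, hj, ⟨hx0, hx1⟩, hy0, hy1⟩) <;>
      rintro (hext | ⟨j', hj', ⟨ha, hb⟩, hc, hd⟩)
    · exact hext ⟨⟨hx0, hx1⟩, hy0, by linarith⟩
    · linarith
    · exact hext ⟨⟨hx0, hx1⟩, by linarith, hy1⟩
    · linarith
    · have hjk : (j:ℝ) ≤ k := by exact_mod_cast hj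
      exact hext ⟨⟨by linarith, by linarith⟩, by linarith, by linarith⟩
    · rcases le_or_gt j j' with h | h
      · have : (j:ℝ) ≤ j' := by exact_mod_cast h
        linarith
      · have : (j':ℝ) + 1 ≤ j := by exact_mod_cast h
        linarith
  · intro hnh
    have hbox : (0 ≤ x ∧ x ≤ 2*(k:ℝ)+1) ∧ 0 ≤ y ∧ y ≤ 3 := by
      by_contra hc
      exact hnh (Or.inl hc)
    obtain ⟨⟨hx0, hx1⟩, hy0, hy1⟩ := hbox
    rcases le_or_gt y 1 with hy | hy
    · exact Or.inl ⟨⟨hx0, hx1⟩, hy0, hy⟩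
    rcases le_or_gt 2 y with hy2 | hy2
    · exact Or.inr (Or.inl ⟨⟨hx0, hx1⟩, hy2, hy1⟩)
    · set j := ⌊x/2⌋₊ with hjdef
      have h2j : 2*(j:ℝ) ≤ x := by
        have := Nat.floor_le (by linarith : (0:ℝ) ≤ x/2)
        rw [← hjdef] at this; linarith
      have h2j2 : x < 2*(j:ℝ) + 2 := by
        have := Nat.lt_floor_add_one (x/2)
        rw [← hjdef] at this; linarith
      rcases le_or_gt x (2*(j:ℝ)+1) with hc | hc
      · refine Or.inr (Or.inr ⟨j, ?_, ⟨h2j, hc⟩, le_of_lt hy, le_of_lt hy2⟩)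
        by_contra hjk
        push_neg at hjk
        have : (k:ℝ) + 1 ≤ j := by exact_mod_cast hjk
        linarith
      · exfalso
        have hjk : j < k := by
          by_contra hjk
          push_neg at hjk
          have : (k:ℝ) ≤ j := by exact_mod_cast hjk
          linarith
        exact hnh (Or.inr ⟨j, hjk, ⟨hc, h2j2⟩, hy, hy2⟩)



lemma isOpen_hole (j : ℕ) : IsOpen (hole j) := isOpen_Ioo.prod isOpen_Ioo
lemma isOpen_outer (k : ℕ) : IsOpen (outer k) := (isClosed_Icc.prod isClosed_Icc).isOpen_compl

lemma isPreconnected_hole (j : ℕ) : IsPreconnected (hole j) :=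
  ((convex_Ioo _ _).prod (convex_Ioo _ _)).isPreconnected

lemma outer_eq (k : ℕ) : outer k =
    (((univ ×ˢ Iio (0:ℝ)) ∪ (Iio (0:ℝ) ×ˢ univ)) ∪ (univ ×ˢ Ioi (3:ℝ)))
      ∪ (Ioi (2*(k:ℝ)+1) ×ˢ univ) := by
  ext ⟨x, y⟩
  simp only [outer, mem_compl_iff, mem_prod, mem_Icc, mem_union, mem_Iio, mem_Ioi, mem_univ,
    and_true, true_and, not_and_or, not_le]
  constructor
  · rintro ((h | h) | (h | h))
    · exact Or.inl (Or.inl (Or.inr h))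
    · exact Or.inr h
    · exact Or.inl (Or.inl (Or.inl h))
    · exact Or.inl (Or.inr h)
  · rintro (((h | h) | h) | h)
    · exact Or.inr (Or.inl h)
    · exact Or.inl (Or.inl h)
    · exact Or.inr (Or.inr h)
    · exact Or.inl (Or.inr h)

set_option maxHeartbeats 2000000 in
lemma isPreconnected_outer (k : ℕ) : IsPreconnected (outer k) := by
  rw [outer_eq]
  have h1 : IsPreconnected ((univ ×ˢ Iio (0:ℝ)) ∪ (Iio (0:ℝ) ×ˢ univ)) := by
    refine IsPreconnected.union ((-1:ℝ), (-1:ℝ)) ?_ ?_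
      ((convex_univ.prod (convex_Iio _)).isPreconnected)
      (((convex_Iio _).prod convex_univ).isPreconnected)
    · exact ⟨mem_univ _, by norm_num⟩
    · exact ⟨by norm_num, mem_univ _⟩
  have h2 : IsPreconnected (((univ ×ˢ Iio (0:ℝ)) ∪ (Iio (0:ℝ) ×ˢ univ)) ∪ (univ ×ˢ Ioi (3:ℝ))) := by
    refine IsPreconnected.union ((-1:ℝ), (4:ℝ)) ?_ ?_ h1
      ((convex_univ.prod (convex_Ioi _)).isPreconnected)
    · exact Or.inr ⟨by norm_num, mem_univ _⟩
    · exact ⟨mem_univ _, by norm_num⟩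
  have hm1 : ((2*(k:ℝ)+2), (-1:ℝ)) ∈ (((univ ×ˢ Iio (0:ℝ)) ∪ (Iio (0:ℝ) ×ˢ univ)) ∪ (univ ×ˢ Ioi (3:ℝ))) :=
    Or.inl (Or.inl ⟨mem_univ _, by norm_num⟩)
  have hm2 : ((2*(k:ℝ)+2), (-1:ℝ)) ∈ (Ioi (2*(k:ℝ)+1) ×ˢ (univ : Set ℝ)) :=
    ⟨by simp only [mem_Ioi]; linarith, mem_univ _⟩
  exact IsPreconnected.union _ hm1 hm2 h2 (((convex_Ioi _).prod convex_univ).isPreconnected)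

/-- A clopen-ish piece of C is the connected component of its points. -/
lemma comp_eq {C P Q : Set (ℝ × ℝ)} (hC : C = P ∪ Q) (hd : Disjoint P Q)
    (hPo : IsOpen P) (hQo : IsOpen Q) (hP : IsPreconnected P) {x : ℝ × ℝ} (hx : x ∈ P) :
    connectedComponentIn C x = P := by
  apply subset_antisymm
  · have h2 : connectedComponentIn C x ⊆ P ∪ Q := hC ▸ connectedComponentIn_subset C x
    rcases IsPreconnected.subset_or_subset hPo hQo hd h2
      isPreconnected_connectedComponentIn with h | h
    · exact h
    · exfalso
      have hxC : x ∈ C := hC ▸ Or.inl hx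
      exact hd.ne_of_mem hx (h (mem_connectedComponentIn hxC)) rfl
  · exact hP.subset_connectedComponentIn hx (hC ▸ subset_union_left)

lemma hole_disj {j j' : ℕ} (h : j ≠ j') : Disjoint (hole j) (hole j') := by
  rw [Set.disjoint_left]
  rintro ⟨x, y⟩ ⟨⟨ha, hb⟩, _⟩ ⟨⟨hc, hd⟩, _⟩
  simp only at *
  rcases lt_or_gt_of_ne h with h' | h'
  · have : (j:ℝ) + 1 ≤ j' := by exact_mod_cast h'
    linarith
  · have : (j':ℝ) + 1 ≤ j := by exact_mod_cast h'
    linarith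

lemma hole_subset_box {j k : ℕ} (hjk : j < k) :
    hole j ⊆ (Icc (0:ℝ) (2*(k:ℝ)+1) ×ˢ Icc (0:ℝ) 3) := by
  rintro ⟨x, y⟩ ⟨⟨ha, hb⟩, hc, hd⟩
  have : (j:ℝ) + 1 ≤ k := by exact_mod_cast hjk
  simp only at *
  exact ⟨⟨by linarith, by linarith⟩, by linarith, by linarith⟩

lemma outer_disj_hole {j k : ℕ} (hjk : j < k) : Disjoint (outer k) (hole j) :=
  disjoint_compl_left.mono_right (hole_subset_box hjk)




/-- The family of m rectangles. -/
def Zfam (m : ℕ) (i : Fin m) : Set (ℝ × ℝ) :=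
  if (i : ℕ) = 0 then bot (m - 3) else if (i : ℕ) = 1 then topR (m - 3)
  else vbar ((i : ℕ) - 2)

lemma disj_Ioo {a b c d : ℝ} (h : b ≤ c ∨ d ≤ a) : Disjoint (Ioo a b) (Ioo c d) := by
  rw [Set.disjoint_left]
  intro x hx hx'
  simp only [mem_Ioo] at hx hx'
  rcases h with h | h <;> linarith [hx.1, hx.2, hx'.1, hx'.2]

lemma isRect_Zfam (m : ℕ) (i : Fin m) : IsRect (Zfam m i) := by
  unfold Zfam
  split_ifs
  · exact ⟨0, 2*((m-3:ℕ):ℝ)+1, 0, 1, by positivity, by norm_num, rfl⟩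
  · exact ⟨0, 2*((m-3:ℕ):ℝ)+1, 2, 3, by positivity, by norm_num, rfl⟩
  · exact ⟨2*(((i:ℕ)-2:ℕ):ℝ), 2*(((i:ℕ)-2:ℕ):ℝ)+1, 1, 2, by linarith, by norm_num, rfl⟩

lemma interior_disj_Zfam (m : ℕ) (i j : Fin m) (hne : i ≠ j) :
    Disjoint (interior (Zfam m i)) (interior (Zfam m j)) := by
  have hval : (i : ℕ) ≠ (j : ℕ) := fun h => hne (Fin.ext h)
  have key : ∀ a b : ℕ, a ≠ b →
      Disjoint (Ioo (2*(a:ℝ)) (2*(a:ℝ)+1)) (Ioo (2*(b:ℝ)) (2*(b:ℝ)+1)) := by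
    intro a b hab
    apply disj_Ioo
    rcases lt_or_gt_of_ne hab with h | h
    · have : (a:ℝ) + 1 ≤ (b:ℝ) := by exact_mod_cast h
      left; linarith
    · have : (b:ℝ) + 1 ≤ (a:ℝ) := by exact_mod_cast h
      right; linarith
  unfold Zfam bot topR vbar
  split_ifs with h1 h2 h3 h4 h5 h6 h7 h8 <;>
    simp only [interior_prod_eq, interior_Icc, Set.disjoint_prod]
  · exact absurd (by omega : (i:ℕ) = (j:ℕ)) hval
  · exact Or.inr (disj_Ioo (by norm_num))
  · exact Or.inr (disj_Ioo (by norm_num))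
  · exact Or.inr (disj_Ioo (by norm_num))
  · exact absurd (by omega : (i:ℕ) = (j:ℕ)) hval
  · exact Or.inr (disj_Ioo (by norm_num))
  · exact Or.inr (disj_Ioo (by norm_num))
  · exact Or.inr (disj_Ioo (by norm_num))
  · exact Or.inl (key _ _ (by omega))

lemma mem_hole_pt (j : ℕ) : ((2*(j:ℝ)+3/2), (3/2:ℝ)) ∈ hole j := by
  simp only [hole, mem_prod, mem_Ioo]
  norm_num

lemma union_Zfam (m : ℕ) (hm : 3 ≤ m) (p : ℝ × ℝ) :
    p ∈ (⋃ i, Zfam m i) ↔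
      (p ∈ bot (m-3) ∨ p ∈ topR (m-3) ∨ ∃ j ≤ m-3, p ∈ vbar j) := by
  constructor
  · intro hp
    rcases mem_iUnion.1 hp with ⟨i, hi⟩
    have hlt := i.isLt
    unfold Zfam at hi
    split_ifs at hi with h0 h1
    · exact Or.inl hi
    · exact Or.inr (Or.inl hi)
    · exact Or.inr (Or.inr ⟨(i:ℕ)-2, by omega, hi⟩)
  · rintro (hp | hp | ⟨j, hj, hp⟩)
    · exact mem_iUnion.2 ⟨⟨0, by omega⟩, by simpa [Zfam] using hp⟩
    · exact mem_iUnion.2 ⟨⟨1, by omega⟩, by simpa [Zfam] using hp⟩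
    · exact mem_iUnion.2 ⟨⟨j+2, by omega⟩, by simpa [Zfam] using hp⟩

lemma compl_union (m : ℕ) (hm : 3 ≤ m) :
    (⋃ i, Zfam m i)ᶜ = outer (m-3) ∪ ⋃ j ∈ Iio (m-3), hole j := by
  ext p
  rw [mem_compl_iff, union_Zfam m hm p, mem_iff]
  simp only [not_not, mem_union, mem_iUnion, mem_Iio, exists_prop]

lemma components_eq (m : ℕ) (hm : 3 ≤ m) :
    {H : Set (ℝ × ℝ) | ∃ x ∈ (⋃ i, Zfam m i)ᶜ,
        H = connectedComponentIn (⋃ i, Zfam m i)ᶜ x}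
      = insert (outer (m-3)) (hole '' Iio (m-3)) := by
  have hC := compl_union m hm
  have hHso : IsOpen (⋃ j ∈ Iio (m-3), hole j) := isOpen_biUnion fun j _ => isOpen_hole j
  have hdis : Disjoint (outer (m-3)) (⋃ j ∈ Iio (m-3), hole j) := by
    rw [Set.disjoint_left]
    intro p hp hp'
    rcases mem_iUnion₂.1 hp' with ⟨j, hj, hpj⟩
    exact (outer_disj_hole hj).ne_of_mem hp hpj rfl
  have hcomp_outer : ∀ x ∈ outer (m-3),
      connectedComponentIn (⋃ i, Zfam m i)ᶜ x = outer (m-3) :=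
    fun x hx => comp_eq hC hdis (isOpen_outer _) hHso (isPreconnected_outer _) hx
  have hcomp_hole : ∀ j < m-3, ∀ x ∈ hole j,
      connectedComponentIn (⋃ i, Zfam m i)ᶜ x = hole j := by
    intro j hj x hx
    have hsplit : (⋃ i, Zfam m i)ᶜ
        = hole j ∪ (outer (m-3) ∪ ⋃ j' ∈ Iio (m-3) \ {j}, hole j') := by
      rw [hC]
      ext p
      simp only [mem_union, mem_iUnion, mem_Iio, mem_diff, mem_singleton_iff, exists_prop]
      constructor
      · rintro (hp | ⟨j', hj', hp⟩)
        · exact Or.inr (Or.inl hp)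
        · rcases eq_or_ne j' j with rfl | hne
          · exact Or.inl hp
          · exact Or.inr (Or.inr ⟨j', ⟨hj', hne⟩, hp⟩)
      · rintro (hp | hp | ⟨j', ⟨hj', _⟩, hp⟩)
        · exact Or.inr ⟨j, hj, hp⟩
        · exact Or.inl hp
        · exact Or.inr ⟨j', hj', hp⟩
    refine comp_eq hsplit ?_ (isOpen_hole j)
      ((isOpen_outer _).union (isOpen_biUnion fun _ _ => isOpen_hole _))
      (isPreconnected_hole j) hx
    rw [Set.disjoint_union_right]
    refine ⟨(outer_disj_hole hj).symm, ?_⟩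
    rw [Set.disjoint_left]
    intro p hp hp'
    rcases mem_iUnion₂.1 hp' with ⟨j', hj', hpj'⟩
    exact (hole_disj (Ne.symm hj'.2)).ne_of_mem hp hpj' rfl
  apply subset_antisymm
  · rintro H ⟨x, hxC, rfl⟩
    have hx' := hxC
    rw [hC] at hx'
    rcases hx' with hx | hx
    · rw [hcomp_outer x hx]
      exact mem_insert _ _
    · rcases mem_iUnion₂.1 hx with ⟨j, hj, hxj⟩
      rw [hcomp_hole j hj x hxj]
      exact mem_insert_of_mem _ ⟨j, hj, rfl⟩
  · intro H hH
    rw [mem_insert_iff] at hH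
    rcases hH with rfl | ⟨j, hj, rfl⟩
    · have hx : ((-1:ℝ),(-1:ℝ)) ∈ outer (m-3) := by
        simp only [outer, mem_compl_iff, mem_prod, mem_Icc]
        norm_num
      have hxC : ((-1:ℝ),(-1:ℝ)) ∈ (⋃ i, Zfam m i)ᶜ := by
        rw [hC]; exact Or.inl hx
      exact ⟨_, hxC, (hcomp_outer _ hx).symm⟩
    · rw [mem_Iio] at hj
      have hx := mem_hole_pt j
      have hxC : ((2*(j:ℝ)+3/2), (3/2:ℝ)) ∈ (⋃ i, Zfam m i)ᶜ := by
        rw [hC]; exact Or.inr (mem_iUnion₂.2 ⟨j, mem_Iio.2 hj, hx⟩)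
      exact ⟨_, hxC, (hcomp_hole j hj _ hx).symm⟩

lemma hole_injOn (k : ℕ) : Set.InjOn hole (Iio k) := by
  intro j _ j' _ heq
  by_contra hne
  exact (hole_disj hne).ne_of_mem (mem_hole_pt j) (heq ▸ mem_hole_pt j) rfl

lemma outer_notMem (k : ℕ) : outer k ∉ hole '' Iio k := by
  rintro ⟨j, hj, heq⟩
  rw [mem_Iio] at hj
  exact (heq ▸ mem_hole_pt j) (hole_subset_box hj (mem_hole_pt j))

end RectAux

theorem rect_holes_lower_bound (m : ℕ) (hm : 3 ≤ m) :
    ∃ Z : Fin m → Set (ℝ × ℝ),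
      (∀ i, IsRect (Z i)) ∧
      (∀ i j, i ≠ j → Disjoint (interior (Z i)) (interior (Z j))) ∧
      ({H : Set (ℝ × ℝ) | ∃ x ∈ (⋃ i, Z i)ᶜ,
          H = connectedComponentIn (⋃ i, Z i)ᶜ x}).Finite ∧
      ({H : Set (ℝ × ℝ) | ∃ x ∈ (⋃ i, Z i)ᶜ,
          H = connectedComponentIn (⋃ i, Z i)ᶜ x}).ncard = m - 2 := by
  refine ⟨RectAux.Zfam m, RectAux.isRect_Zfam m,
    fun i j h => RectAux.interior_disj_Zfam m i j h, ?_, ?_⟩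
  · rw [RectAux.components_eq m hm]
    exact ((Set.finite_Iio _).image _).insert _
  · rw [RectAux.components_eq m hm,
      Set.ncard_insert_of_notMem (RectAux.outer_notMem _) ((Set.finite_Iio _).image _),
      Set.ncard_image_of_injOn (RectAux.hole_injOn _)]
    have h1 : (Set.Iio (m-3)).ncard = m-3 := by
      rw [← Finset.coe_Iio, Set.ncard_coe_finset, Nat.card_Iio]
    omega
end
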